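/- arXiv:2001.00061 — 6 statements merged into one kernel-verified Lean document; each statement's English description precedes it below -/
import Mathlib

section
/- Let f be a rational Herglotz–Nevanlinna function with smallest pole h₁ (or no finite pole), let μ < h₁ and τ > f(μ). Then the function f̃(λ) := (μ − λ)/(f(λ) − τ) − τ is again a rational Herglotz–Nevanlinna function with ind f̃ = ind f + 1. -/
open scoped BigOperators

/-- A rational Herglotz–Nevanlinna function
`f(λ) = h₀ λ + h + ∑_{k=1}^d δ_k / (h_k − λ)`
with `h₀ ≥ 0`, `δ_k > 0` and `h₁ < … < h_d`. -/
structure RHN where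
  d : ℕ
  h0 : ℝ
  h : ℝ
  residue : Fin d → ℝ
  pole : Fin d → ℝ
  h0_nonneg : 0 ≤ h0
  residue_pos : ∀ k, 0 < residue k
  pole_strictMono : StrictMono pole

namespace RHN

/-- The value `f(λ)`. -/
noncomputable def eval (f : RHN) (x : ℝ) : ℝ :=
  f.h0 * x + f.h + ∑ k, f.residue k / (f.pole k - x)

/-- The index: `2d + 1` if `h₀ > 0`, and `2d` otherwise. -/
noncomputable def ind (f : RHN) : ℤ :=
  if 0 < f.h0 then 2 * f.d + 1 else 2 * f.d

end RHN

open Polynomial Finset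

lemma prod_sign_lemma {ι : Type*} [DecidableEq ι] (s : Finset ι) (g : ι → ℝ) :
    (∀ i ∈ s, g i ≠ 0) →
    0 < (-1 : ℝ) ^ (s.filter (fun i => g i < 0)).card * ∏ i ∈ s, g i := by
  classical
  induction s using Finset.induction_on with
  | empty => simp
  | @insert a s ha ih =>
    intro h0
    rw [Finset.filter_insert, Finset.prod_insert ha]
    have hga := h0 a (Finset.mem_insert_self a s)
    have hrest := ih (fun i hi => h0 i (Finset.mem_insert_of_mem hi))
    by_cases hneg : g a < 0
    · rw [if_pos hneg, Finset.card_insert_of_notMem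
        (fun h => ha (Finset.mem_of_mem_filter a h)), pow_succ]
      have h2 := mul_pos hrest (neg_pos.mpr hneg)
      have h3 : (-1:ℝ) ^ (s.filter (fun i => g i < 0)).card * -1 * (g a * ∏ i ∈ s, g i)
          = (-1:ℝ) ^ (s.filter (fun i => g i < 0)).card * (∏ i ∈ s, g i) * -g a := by ring
      rw [h3]; exact h2
    · rw [if_neg hneg]
      have hpos : 0 < g a := lt_of_le_of_ne (not_lt.1 hneg) (Ne.symm hga)
      have h2 := mul_pos hrest hpos
      have h3 : (-1:ℝ) ^ (s.filter (fun i => g i < 0)).card * (g a * ∏ i ∈ s, g i)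
          = (-1:ℝ) ^ (s.filter (fun i => g i < 0)).card * (∏ i ∈ s, g i) * g a := by ring
      rw [h3]; exact h2

lemma card_filter_val_lt (d K : ℕ) (h : K ≤ d) :
    ((Finset.univ : Finset (Fin d)).filter (fun j : Fin d => (j : ℕ) < K)).card = K := by
  rw [← Finset.card_range K]
  apply Finset.card_bij (fun (a : Fin d) _ => (a : ℕ))
  · intro a ha; simpa using (Finset.mem_filter.1 ha).2
  · intro a _ b _ hab; exact Fin.val_injective hab
  · intro b hb
    have hbK := Finset.mem_range.1 hb
    exact ⟨⟨b, lt_of_lt_of_le hbK h⟩, by simp [hbK], rfl⟩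

lemma card_filter_val_ge (d K : ℕ) (h : K ≤ d) :
    ((Finset.univ : Finset (Fin d)).filter (fun j : Fin d => ¬ ((j : ℕ) < K))).card = d - K := by
  have := Finset.card_filter_add_card_filter_not
    (s := (Finset.univ : Finset (Fin d))) (fun j : Fin d => (j : ℕ) < K)
  rw [card_filter_val_lt d K h] at this
  simp only [Finset.card_univ, Fintype.card_fin] at this
  omega

lemma exists_root_Ioo (q : Polynomial ℝ) {a b : ℝ} (hab : a < b)
    (h : q.eval a * q.eval b < 0) : ∃ z ∈ Set.Ioo a b, q.eval z = 0 := by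
  have hc : ContinuousOn (fun x => q.eval x) (Set.Icc a b) :=
    (q.continuous_aeval).continuousOn
  rcases lt_or_ge (q.eval a) 0 with hva | hva
  · have hvb : 0 < q.eval b := by nlinarith
    have := intermediate_value_Ioo hab.le hc (f := fun x => q.eval x)
    have h0 : (0:ℝ) ∈ Set.Ioo (q.eval a) (q.eval b) := ⟨hva, hvb⟩
    obtain ⟨z, hz, hz0⟩ := this h0
    exact ⟨z, hz, hz0⟩
  · have hva' : 0 < q.eval a := by
      rcases lt_or_eq_of_le hva with h' | h'
      · exact h'
      · exfalso; rw [← h'] at h; simp at h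
    have hvb : q.eval b < 0 := by nlinarith
    have := intermediate_value_Ioo' hab.le hc (f := fun x => q.eval x)
    have h0 : (0:ℝ) ∈ Set.Ioo (q.eval b) (q.eval a) := ⟨hvb, hva'⟩
    obtain ⟨z, hz, hz0⟩ := this h0
    exact ⟨z, hz, hz0⟩

lemma poly_eq_zero {q : Polynomial ℝ} {n : ℕ} {z : Fin n → ℝ}
    (hz : Function.Injective z) (h1 : q.natDegree ≤ n) (h2 : q.coeff n = 0)
    (h3 : ∀ k, q.eval (z k) = 0) : q = 0 := by
  by_contra hq
  have hne : q.natDegree ≠ n := by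
    intro h
    exact (Polynomial.leadingCoeff_ne_zero.mpr hq) (by rwa [Polynomial.leadingCoeff, h])
  have hlt : q.natDegree < n := lt_of_le_of_ne h1 hne
  exact hq (Polynomial.eq_zero_of_natDegree_lt_card_of_eval_eq_zero q hz h3
    (by simpa using hlt))

noncomputable def Vpoly {d : ℕ} (p : Fin d → ℝ) : Polynomial ℝ := ∏ k, (X - C (p k))

noncomputable def VpolyE {d : ℕ} (p : Fin d → ℝ) (k : Fin d) : Polynomial ℝ :=
  ∏ j ∈ Finset.univ.erase k, (X - C (p j))

noncomputable def Apoly {d : ℕ} (p δ : Fin d → ℝ) (h0 h τ : ℝ) : Polynomial ℝ :=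
  (C h0 * X + C (h - τ)) * Vpoly p - ∑ k, C (δ k) * VpolyE p k

variable {d : ℕ} (p δ : Fin d → ℝ) (h0 h τ : ℝ)

lemma Vpoly_monic : (Vpoly p).Monic :=
  monic_prod_of_monic _ _ (fun _ _ => monic_X_sub_C _)

lemma Vpoly_natDegree : (Vpoly p).natDegree = d := by
  rw [Vpoly, natDegree_prod _ _ (fun k _ => X_sub_C_ne_zero (p k))]
  simp

lemma Vpoly_coeff_top : (Vpoly p).coeff d = 1 := by
  have := (Vpoly_monic p).leadingCoeff
  rwa [Polynomial.leadingCoeff, Vpoly_natDegree] at this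

lemma eval_Vpoly (x : ℝ) : (Vpoly p).eval x = ∏ k, (x - p k) := by
  simp [Vpoly, eval_prod]

lemma VpolyE_natDegree (k : Fin d) : (VpolyE p k).natDegree = d - 1 := by
  rw [VpolyE, natDegree_prod _ _ (fun j _ => X_sub_C_ne_zero (p j))]
  simp [Finset.card_erase_of_mem]

lemma eval_VpolyE (k : Fin d) (x : ℝ) :
    (VpolyE p k).eval x = ∏ j ∈ Finset.univ.erase k, (x - p j) := by
  simp [VpolyE, eval_prod]

lemma Vpoly_eq_VpolyE (k : Fin d) : Vpoly p = (X - C (p k)) * VpolyE p k :=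
  (Finset.mul_prod_erase _ _ (Finset.mem_univ k)).symm

lemma sum_residue_natDegree_le : (∑ k, C (δ k) * VpolyE p k).natDegree ≤ d := by
  apply le_trans (natDegree_sum_le _ _)
  rw [Finset.fold_max_le]
  refine ⟨by omega, fun k _ => ?_⟩
  calc (C (δ k) * VpolyE p k).natDegree ≤ (VpolyE p k).natDegree := natDegree_C_mul_le _ _
  _ = d - 1 := VpolyE_natDegree p k
  _ ≤ d := by omega

lemma lin_natDegree_le : (C h0 * X + C (h - τ)).natDegree ≤ 1 := by
  apply le_trans (natDegree_add_le _ _)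
  apply max_le
  · exact le_trans (natDegree_C_mul_le _ _) (by simp)
  · simp

lemma Apoly_natDegree_le : (Apoly p δ h0 h τ).natDegree ≤ d + 1 := by
  apply le_trans (natDegree_sub_le _ _)
  apply max_le
  · apply le_trans (natDegree_mul_le)
    have h1 := lin_natDegree_le h0 h τ
    rw [Vpoly_natDegree]
    omega
  · exact le_trans (sum_residue_natDegree_le p δ) (by omega)

lemma Apoly_natDegree_le' (hh0 : h0 = 0) : (Apoly p δ h0 h τ).natDegree ≤ d := by
  apply le_trans (natDegree_sub_le _ _)
  apply max_le
  · apply le_trans (natDegree_mul_le)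
    have h1 : (C h0 * X + C (h - τ)).natDegree = (C (h-τ) : Polynomial ℝ).natDegree := by
      rw [hh0]; simp
    rw [Vpoly_natDegree, h1, natDegree_C]
    omega
  · exact sum_residue_natDegree_le p δ

lemma sum_residue_coeff_zero {m : ℕ} (hm : d ≤ m) :
    (∑ k, C (δ k) * VpolyE p k).coeff m = 0 := by
  rw [finset_sum_coeff]
  apply Finset.sum_eq_zero
  intro k _
  apply coeff_eq_zero_of_natDegree_lt
  have hd := k.isLt
  calc (C (δ k) * VpolyE p k).natDegree ≤ (VpolyE p k).natDegree := natDegree_C_mul_le _ _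
  _ = d - 1 := VpolyE_natDegree p k
  _ < m := by omega

lemma Apoly_coeff_succ : (Apoly p δ h0 h τ).coeff (d + 1) = h0 := by
  rw [Apoly, coeff_sub, sum_residue_coeff_zero p δ (by omega), sub_zero, add_mul, coeff_add]
  have e1 : (C h0 * X * Vpoly p).coeff (d + 1) = h0 := by
    rw [mul_assoc, coeff_C_mul, coeff_X_mul, Vpoly_coeff_top]
    ring
  have e2 : (C (h - τ) * Vpoly p).coeff (d + 1) = 0 := by
    rw [coeff_C_mul]
    rw [coeff_eq_zero_of_natDegree_lt (by rw [Vpoly_natDegree]; omega)]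
    ring
  rw [e1, e2, add_zero]

lemma Apoly_coeff_d (hh0 : h0 = 0) : (Apoly p δ h0 h τ).coeff d = h - τ := by
  rw [Apoly, coeff_sub, sum_residue_coeff_zero p δ (le_refl d), sub_zero, hh0]
  have e1 : ((C (0:ℝ)) * X * Vpoly p) = 0 := by simp
  rw [add_mul, coeff_add, e1]
  simp only [coeff_zero, zero_add, coeff_C_mul, Vpoly_coeff_top, mul_one]

section evalLemmas
variable {d : ℕ} (p δ : Fin d → ℝ) (h0 h τ : ℝ)

lemma eval_Apoly (x : ℝ) (hx : ∀ k, x ≠ p k) :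
    (Apoly p δ h0 h τ).eval x
      = ((h0 * x + h + ∑ k, δ k / (p k - x)) - τ) * (Vpoly p).eval x := by
  have key : ∀ k : Fin d,
      (δ k / (p k - x)) * (Vpoly p).eval x = -(δ k * (VpolyE p k).eval x) := by
    intro k
    have hVk : (Vpoly p).eval x = (x - p k) * (VpolyE p k).eval x := by
      rw [Vpoly_eq_VpolyE p k]; simp
    rw [hVk]
    have hne : p k - x ≠ 0 := sub_ne_zero.mpr (Ne.symm (hx k))
    field_simp
    ring
  have expand : ((h0 * x + h + ∑ k, δ k / (p k - x)) - τ) * (Vpoly p).eval x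
      = (h0 * x + (h - τ)) * (Vpoly p).eval x
        + ∑ k, (δ k / (p k - x)) * (Vpoly p).eval x := by
    rw [← Finset.sum_mul]; ring
  rw [expand, Finset.sum_congr rfl (fun k _ => key k)]
  rw [Apoly, eval_sub, eval_mul, eval_finset_sum]
  simp [eval_mul, eval_add, eval_C, eval_X, sub_eq_add_neg, ← Finset.sum_neg_distrib]

lemma Apoly_eval_pole (k : Fin d) :
    (Apoly p δ h0 h τ).eval (p k)
      = -(δ k * ∏ j ∈ Finset.univ.erase k, (p k - p j)) := by
  rw [Apoly, eval_sub, eval_mul, eval_finset_sum]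
  have hV : (Vpoly p).eval (p k) = 0 := by
    rw [eval_Vpoly]
    exact Finset.prod_eq_zero (Finset.mem_univ k) (by simp)
  rw [hV, mul_zero, zero_sub, neg_inj]
  rw [Finset.sum_eq_single k]
  · simp [eval_VpolyE]
  · intro j _ hj
    have hz : (VpolyE p j).eval (p k) = 0 := by
      rw [eval_VpolyE]
      exact Finset.prod_eq_zero
        (Finset.mem_erase.mpr ⟨Ne.symm hj, Finset.mem_univ k⟩) (by simp)
    simp [hz]
  · simp

end evalLemmas

section signLemmas

lemma eval_Vpoly_sign {d : ℕ} (p : Fin d → ℝ) (x : ℝ) (K : ℕ) (hK : K ≤ d)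
    (hcond : ∀ j : Fin d, ((j : ℕ) < K ↔ p j < x)) (hne : ∀ j, x ≠ p j) :
    0 < (-1 : ℝ) ^ (d - K) * (Vpoly p).eval x := by
  classical
  rw [eval_Vpoly]
  have hfil : (Finset.univ.filter (fun j : Fin d => x - p j < 0))
      = (Finset.univ.filter (fun j : Fin d => ¬ ((j : ℕ) < K))) := by
    apply Finset.filter_congr
    intro j _
    simp only [sub_neg, ← hcond j]
    constructor
    · intro hx hjK
      have := (hcond j).mp hjK
      exact absurd hx (asymm this)
    · intro hjK
      rcases lt_trichotomy x (p j) with h' | h' | h'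
      · exact h'
      · exact absurd h' (hne j)
      · exact absurd ((hcond j).mpr h') hjK
  have := prod_sign_lemma Finset.univ (fun j : Fin d => x - p j)
    (fun j _ => sub_ne_zero.mpr (hne j))
  rw [hfil, card_filter_val_ge d K hK] at this
  exact this

lemma eval_prod_erase_sign {n : ℕ} (z : Fin n → ℝ) (hz : StrictMono z) (k : Fin n) :
    0 < (-1 : ℝ) ^ (n - 1 - (k : ℕ)) * ∏ j ∈ Finset.univ.erase k, (z k - z j) := by
  classical
  have hfil : ((Finset.univ.erase k).filter (fun j : Fin n => z k - z j < 0))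
      = (Finset.univ.filter (fun j : Fin n => ¬ ((j : ℕ) < (k : ℕ) + 1))) := by
    ext j
    simp only [Finset.mem_filter, Finset.mem_erase, Finset.mem_univ, true_and, and_true,
      sub_neg, not_lt]
    rw [hz.lt_iff_lt, Fin.lt_def]
    constructor
    · rintro ⟨hjk, hlt⟩
      omega
    · intro hge
      have hjk : (k : ℕ) < (j : ℕ) := by omega
      refine ⟨?_, hjk⟩
      intro hh
      rw [hh] at hjk
      omega
  have hne : ∀ j ∈ Finset.univ.erase k, z k - z j ≠ 0 := by
    intro j hj
    exact sub_ne_zero.mpr (fun hh => (Finset.mem_erase.mp hj).1 (hz.injective hh.symm))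
  have := prod_sign_lemma (Finset.univ.erase k) (fun j => z k - z j) hne
  rw [hfil, card_filter_val_ge n ((k : ℕ) + 1) (by have := k.isLt; omega)] at this
  have hexp : n - ((k : ℕ) + 1) = n - 1 - (k : ℕ) := by omega
  rwa [hexp] at this

lemma Apoly_pole_sign {d : ℕ} (p δ : Fin d → ℝ) (h0 h τ : ℝ)
    (hp : StrictMono p) (hδ : ∀ k, 0 < δ k) (k : Fin d) :
    0 < (-1 : ℝ) ^ (d - (k : ℕ)) * (Apoly p δ h0 h τ).eval (p k) := by
  rw [Apoly_eval_pole]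
  have h1 := eval_prod_erase_sign p hp k
  have hk := k.isLt
  have hdk : d - (k : ℕ) = (d - 1 - (k : ℕ)) + 1 := by omega
  rw [hdk, pow_succ]
  have h2 := mul_pos h1 (hδ k)
  have h3 : (-1:ℝ) ^ (d - 1 - (k:ℕ)) * -1 * -(δ k * ∏ j ∈ Finset.univ.erase k, (p k - p j))
      = ((-1:ℝ) ^ (d - 1 - (k:ℕ)) * ∏ j ∈ Finset.univ.erase k, (p k - p j)) * δ k := by
    ring
  rw [h3]
  exact h2

end signLemmas

lemma exists_interleaved_roots {d : ℕ} (p : Fin d → ℝ) (hp : StrictMono p) (μ : ℝ)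
    (hμ : ∀ k, μ < p k) (q : Polynomial ℝ) (n : ℕ) (hnd : n = d ∨ n = d + 1)
    (hμq : 0 < (-1 : ℝ) ^ (d + 1) * q.eval μ)
    (hpq : ∀ k : Fin d, 0 < (-1 : ℝ) ^ (d - (k : ℕ)) * q.eval (p k))
    (hM : n = d + 1 → ∃ M, (∀ j, p j < M) ∧ μ < M ∧ 0 < q.eval M) :
    ∃ z : Fin n → ℝ, StrictMono z ∧ (∀ k, q.eval (z k) = 0) ∧ (∀ k, μ < z k) ∧
      (∀ (k : Fin n) (j : Fin d), ((j : ℕ) < (k : ℕ) ↔ p j < z k)) := by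
  have hnle : n ≤ d + 1 := by rcases hnd with h | h <;> omega
  have step : ∀ (A B : ℝ) (m : ℕ), A < B → 0 < (-1 : ℝ) ^ (m + 1) * q.eval A →
      0 < (-1 : ℝ) ^ m * q.eval B → ∃ z ∈ Set.Ioo A B, q.eval z = 0 := by
    intro A B m hAB h1 h2
    apply exists_root_Ioo q hAB
    rw [pow_succ] at h1
    have hsq : (-1 : ℝ) ^ m * (-1 : ℝ) ^ m = 1 := by
      rw [← pow_add]; exact Even.neg_one_pow ⟨m, rfl⟩
    have h3 := mul_pos h1 h2
    have h4 : q.eval A * q.eval B * ((-1 : ℝ) ^ m * (-1 : ℝ) ^ m)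
        = -(((-1 : ℝ) ^ m * -1 * q.eval A) * ((-1 : ℝ) ^ m * q.eval B)) := by ring
    rw [hsq, mul_one] at h4
    linarith
  have key : ∀ k : Fin n, ∃ zk, q.eval zk = 0 ∧ μ < zk ∧
      (∀ j : Fin d, ((j : ℕ) < (k : ℕ) ↔ p j < zk)) ∧
      (∀ j : Fin d, (k : ℕ) ≤ (j : ℕ) → zk < p j) := by
    intro k
    by_cases hk0 : (k : ℕ) = 0
    · by_cases hd0 : 0 < d
      · -- interval (μ, p 0)
        have hs1 : 0 < (-1 : ℝ) ^ ((d - 0) + 1) * q.eval μ := by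
          simpa using hμq
        have hs2 := hpq ⟨0, hd0⟩
        obtain ⟨z, hzI, hz0⟩ := step μ (p ⟨0, hd0⟩) (d - 0) (hμ _) hs1 (by simpa using hs2)
        refine ⟨z, hz0, hzI.1, ?_, ?_⟩
        · intro j
          constructor
          · intro hj; omega
          · intro hj
            have : z < p j := lt_of_lt_of_le hzI.2 (hp.monotone (by rw [Fin.le_def]; simp))
            exact absurd hj (asymm this)
        · intro j _
          exact lt_of_lt_of_le hzI.2 (hp.monotone (by rw [Fin.le_def]; simp))
      · -- d = 0, so n = 1 = d + 1
        have hd : d = 0 := by omega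
        have hn : n = d + 1 := by
          rcases hnd with h | h
          · exfalso; have := k.isLt; omega
          · exact h
        obtain ⟨M, hM1, hM2, hM3⟩ := hM hn
        have hs1 : 0 < (-1 : ℝ) ^ (0 + 1) * q.eval μ := by
          rw [hd] at hμq; simpa using hμq
        obtain ⟨z, hzI, hz0⟩ := step μ M 0 hM2 hs1 (by simpa using hM3)
        exact ⟨z, hz0, hzI.1, fun j => absurd j.isLt (by omega), fun j => absurd j.isLt (by omega)⟩
    · by_cases hkd : (k : ℕ) < d
      · -- interval (p (k-1), p k)
        have hk1 : (k : ℕ) - 1 < d := by omega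
        have hs1 := hpq ⟨(k : ℕ) - 1, hk1⟩
        have hs2 := hpq ⟨(k : ℕ), hkd⟩
        have hexp : d - ((k : ℕ) - 1) = (d - (k : ℕ)) + 1 := by omega
        rw [hexp] at hs1
        have hAB : p ⟨(k : ℕ) - 1, hk1⟩ < p ⟨(k : ℕ), hkd⟩ := by
          apply hp; rw [Fin.lt_def]; simp; omega
        obtain ⟨z, hzI, hz0⟩ := step _ _ (d - (k : ℕ)) hAB hs1 hs2
        refine ⟨z, hz0, lt_trans (hμ _) hzI.1, ?_, ?_⟩
        · intro j
          constructor
          · intro hj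
            exact lt_of_le_of_lt (hp.monotone (by rw [Fin.le_def]; simp; omega)) hzI.1
          · intro hj
            by_contra hcon
            have : z < p j := lt_of_lt_of_le hzI.2 (hp.monotone (by rw [Fin.le_def]; simp; omega))
            exact absurd hj (asymm this)
        · intro j hj
          exact lt_of_lt_of_le hzI.2 (hp.monotone (by rw [Fin.le_def]; simp; omega))
      · -- (k:ℕ) = d, n = d + 1, interval (p (d-1), M)
        have hkd' : (k : ℕ) = d := by have := k.isLt; omega
        have hn : n = d + 1 := by
          rcases hnd with h | h
          · exfalso; have := k.isLt; omega
          · exact h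
        have hd0 : 0 < d := by omega
        obtain ⟨M, hM1, hM2, hM3⟩ := hM hn
        have hk1 : d - 1 < d := by omega
        have hs1 := hpq ⟨d - 1, hk1⟩
        have hexp : d - (d - 1) = 0 + 1 := by omega
        rw [hexp] at hs1
        obtain ⟨z, hzI, hz0⟩ := step _ M 0 (hM1 _) hs1 (by simpa using hM3)
        refine ⟨z, hz0, lt_trans (hμ _) hzI.1, ?_, ?_⟩
        · intro j
          constructor
          · intro hj
            exact lt_of_le_of_lt (hp.monotone (by rw [Fin.le_def]; simp; have := j.isLt; omega)) hzI.1
          · intro hj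
            have := j.isLt; omega
        · intro j hj
          exfalso; have := j.isLt; omega
  choose z hz using key
  refine ⟨z, ?_, fun k => (hz k).1, fun k => (hz k).2.1, fun k j => (hz k).2.2.1 j⟩
  intro k l hkl
  have h1 : (k : ℕ) < (l : ℕ) := hkl
  have hkd : (k : ℕ) < d := by have := l.isLt; omega
  have h2 : z k < p ⟨(k : ℕ), hkd⟩ := (hz k).2.2.2 ⟨(k : ℕ), hkd⟩ (by simp)
  have h3 : p ⟨(k : ℕ), hkd⟩ < z l := ((hz l).2.2.1 ⟨(k : ℕ), hkd⟩).mp (by simpa using h1)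
  linarith

lemma myNatDegree_le_pred {q : Polynomial ℝ} {m : ℕ} (h1 : q.natDegree ≤ m + 1)
    (h2 : q.coeff (m + 1) = 0) : q.natDegree ≤ m := by
  rw [Polynomial.natDegree_le_iff_coeff_eq_zero] at h1 ⊢
  intro N hN
  rcases eq_or_lt_of_le (Nat.succ_le_of_lt hN) with h' | h'
  · rw [← h']; exact h2
  · exact h1 N (by omega)

lemma main_construction (f : RHN) (μ τ : ℝ) (hμ : ∀ k, μ < f.pole k) (hτ : f.eval μ < τ)
    (n : ℕ) (gh0 : ℝ) (LA : ℝ)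
    (hnd : n = f.d ∨ n = f.d + 1)
    (hLA : (Apoly f.pole f.residue f.h0 f.h τ).coeff n = LA)
    (hLAne : LA ≠ 0)
    (hdegA : (Apoly f.pole f.residue f.h0 f.h τ).natDegree ≤ n)
    (htopN : ((C μ - X) * Vpoly f.pole).coeff (n + 1) = gh0 * LA)
    (hsignLA : ∀ k : Fin n,
      0 < (-1 : ℝ) ^ (f.d - (k : ℕ)) * ((-1 : ℝ) ^ (n - 1 - (k : ℕ)) * LA))
    (hM : n = f.d + 1 → ∃ M, (∀ j, f.pole j < M) ∧ μ < M ∧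
      0 < (Apoly f.pole f.residue f.h0 f.h τ).eval M) :
    ∃ (z : Fin n → ℝ) (δ' : Fin n → ℝ) (c : ℝ), StrictMono z ∧ (∀ k, 0 < δ' k) ∧
      ∀ x : ℝ, (∀ k, x ≠ f.pole k) → (∀ k, x ≠ z k) → f.eval x ≠ τ →
        gh0 * x + c + ∑ k, δ' k / (z k - x) = (μ - x) / (f.eval x - τ) := by
  classical
  set d := f.d with hd
  set p := f.pole with hp'
  set A := Apoly f.pole f.residue f.h0 f.h τ with hA
  set V := Vpoly f.pole with hV
  have hpmono : StrictMono p := f.pole_strictMono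
  have hdlpos : ∀ k, 0 < f.residue k := f.residue_pos
  have hAeval : ∀ x : ℝ, (∀ k, x ≠ p k) → A.eval x = (f.eval x - τ) * V.eval x := by
    intro x hx
    rw [hA, eval_Apoly f.pole f.residue f.h0 f.h τ x hx]
    rfl
  have hVμ : 0 < (-1 : ℝ) ^ d * V.eval μ := by
    rw [hV]
    apply eval_Vpoly_sign f.pole μ 0 (by omega)
    · intro j
      constructor
      · omega
      · intro hcon; exact absurd hcon (asymm (hμ j))
    · exact fun j => ne_of_lt (hμ j)
  have hμq : 0 < (-1 : ℝ) ^ (d + 1) * A.eval μ := by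
    rw [hAeval μ (fun k => ne_of_lt (hμ k))]
    have h1 := mul_pos (sub_pos.mpr hτ) hVμ
    have h2 : (-1 : ℝ) ^ (d + 1) * ((f.eval μ - τ) * V.eval μ)
        = (τ - f.eval μ) * ((-1 : ℝ) ^ d * V.eval μ) := by ring
    rw [h2]; exact h1
  obtain ⟨z, hzmono, hzroot, hzμ, hzint⟩ :=
    exists_interleaved_roots p hpmono μ hμ A n hnd hμq
      (fun k => Apoly_pole_sign f.pole f.residue f.h0 f.h τ hpmono hdlpos k) hM
  have hzp : ∀ (k : Fin n) (j : Fin d), z k ≠ p j := by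
    intro k j heq
    have hs := Apoly_pole_sign f.pole f.residue f.h0 f.h τ hpmono hdlpos j
    rw [← hp', ← hA, ← heq, hzroot k] at hs
    simp at hs
  have hkled : ∀ k : Fin n, (k : ℕ) ≤ d := by
    intro k; have := k.isLt; rcases hnd with h | h <;> omega
  have hVz : ∀ k : Fin n, 0 < (-1 : ℝ) ^ (d - (k : ℕ)) * V.eval (z k) := by
    intro k
    rw [hV]
    exact eval_Vpoly_sign f.pole (z k) (k : ℕ) (hkled k) (fun j => hzint k j) (hzp k)
  set δ' : Fin n → ℝ := fun k =>
    (z k - μ) * V.eval (z k) / (LA * ∏ j ∈ Finset.univ.erase k, (z k - z j)) with hδ'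
  have hWz : ∀ k : Fin n, 0 < (-1 : ℝ) ^ (n - 1 - (k : ℕ)) *
      ∏ j ∈ Finset.univ.erase k, (z k - z j) := fun k => eval_prod_erase_sign z hzmono k
  have hdenom : ∀ k : Fin n, 0 < (-1 : ℝ) ^ (d - (k : ℕ)) *
      (LA * ∏ j ∈ Finset.univ.erase k, (z k - z j)) := by
    intro k
    have h1 := mul_pos (hsignLA k) (hWz k)
    have h2 : ((-1 : ℝ) ^ (d - (k : ℕ)) * ((-1 : ℝ) ^ (n - 1 - (k : ℕ)) * LA))
          * ((-1 : ℝ) ^ (n - 1 - (k : ℕ)) * ∏ j ∈ Finset.univ.erase k, (z k - z j))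
        = ((-1 : ℝ) ^ (n - 1 - (k : ℕ)) * (-1 : ℝ) ^ (n - 1 - (k : ℕ)))
          * ((-1 : ℝ) ^ (d - (k : ℕ)) * (LA * ∏ j ∈ Finset.univ.erase k, (z k - z j))) := by
      ring
    have h3 : (-1 : ℝ) ^ (n - 1 - (k : ℕ)) * (-1 : ℝ) ^ (n - 1 - (k : ℕ)) = 1 := by
      rw [← pow_add]; exact Even.neg_one_pow ⟨n - 1 - (k : ℕ), rfl⟩
    rw [h2, h3, one_mul] at h1
    exact h1
  have hδpos : ∀ k, 0 < δ' k := by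
    intro k
    simp only [hδ']
    have hsne : ((-1 : ℝ) ^ (d - (k : ℕ))) ≠ 0 := by
      apply pow_ne_zero; norm_num
    have heq : (z k - μ) * V.eval (z k) / (LA * ∏ j ∈ Finset.univ.erase k, (z k - z j))
        = ((-1 : ℝ) ^ (d - (k : ℕ)) * ((z k - μ) * V.eval (z k)))
          / ((-1 : ℝ) ^ (d - (k : ℕ)) * (LA * ∏ j ∈ Finset.univ.erase k, (z k - z j))) := by
      rw [mul_div_mul_left _ _ hsne]
    rw [heq]
    apply div_pos _ (hdenom k)
    have h1 := mul_pos (sub_pos.mpr (hzμ k)) (hVz k)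
    have h2 : (z k - μ) * ((-1 : ℝ) ^ (d - (k : ℕ)) * V.eval (z k))
        = (-1 : ℝ) ^ (d - (k : ℕ)) * ((z k - μ) * V.eval (z k)) := by ring
    rw [h2] at h1
    exact h1
  have hdenomne : ∀ k : Fin n, LA * (∏ j ∈ Finset.univ.erase k, (z k - z j)) ≠ 0 := by
    intro k hcon
    have := hdenom k
    rw [hcon, mul_zero] at this
    exact lt_irrefl 0 this
  have hfact : A = C LA * Vpoly z := by
    have h0 : A - C LA * Vpoly z = 0 := by
      apply poly_eq_zero hzmono.injective (z := z)
      · apply le_trans (natDegree_sub_le _ _)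
        apply max_le hdegA
        exact le_trans (natDegree_C_mul_le _ _) (le_of_eq (Vpoly_natDegree z))
      · rw [coeff_sub, hLA, coeff_C_mul, Vpoly_coeff_top z, mul_one, sub_self]
      · intro k
        rw [eval_sub, eval_mul, eval_C, hzroot k, eval_Vpoly,
          Finset.prod_eq_zero (Finset.mem_univ k) (by simp)]
        ring
    exact sub_eq_zero.mp h0
  -- the big polynomial identity
  set N0 : Polynomial ℝ := (C μ - X) * V - C gh0 * X * A
      + ∑ k : Fin n, C (δ' k * LA) * VpolyE z k with hN0
  set c : ℝ := N0.coeff n / LA with hc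
  have hdn : d ≤ n := by rcases hnd with h | h <;> omega
  have hN0deg : N0.natDegree ≤ n + 1 := by
    apply le_trans (natDegree_add_le _ _)
    apply max_le
    · apply le_trans (natDegree_sub_le _ _)
      apply max_le
      · apply le_trans natDegree_mul_le
        have h1 : (C μ - X : Polynomial ℝ).natDegree ≤ 1 := by
          apply le_trans (natDegree_sub_le _ _); simp
        rw [hV, Vpoly_natDegree]
        omega
      · apply le_trans natDegree_mul_le
        have h1 : (C gh0 * X : Polynomial ℝ).natDegree ≤ 1 :=
          le_trans (natDegree_C_mul_le _ _) (by simp)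
        omega
    · exact le_trans (sum_residue_natDegree_le z (fun k => δ' k * LA)) (by omega)
  have hN0topcoeff : N0.coeff (n + 1) = 0 := by
    rw [hN0, coeff_add, coeff_sub, sum_residue_coeff_zero z _ (by omega), htopN]
    have e1 : (C gh0 * X * A).coeff (n + 1) = gh0 * LA := by
      rw [mul_assoc, coeff_C_mul, coeff_X_mul, hLA]
    rw [e1]; ring
  set N : Polynomial ℝ := N0 - C c * A with hNdef
  have hNzero : N = 0 := by
    apply poly_eq_zero hzmono.injective (z := z)
    · apply myNatDegree_le_pred
      · apply le_trans (natDegree_sub_le _ _)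
        exact max_le hN0deg (le_trans (natDegree_C_mul_le _ _) (le_trans hdegA (by omega)))
      · rw [coeff_sub, hN0topcoeff, coeff_C_mul,
          coeff_eq_zero_of_natDegree_lt (lt_of_le_of_lt hdegA (by omega))]
        ring
    · rw [coeff_sub, coeff_C_mul, hLA, hc, div_mul_cancel₀ _ hLAne, sub_self]
    · intro k
      have hAz : A.eval (z k) = 0 := hzroot k
      have hsum : (∑ j : Fin n, C (δ' j * LA) * VpolyE z j).eval (z k)
          = δ' k * LA * (VpolyE z k).eval (z k) := by
        rw [eval_finset_sum, Finset.sum_eq_single k]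
        · simp [eval_mul]
        · intro j _ hjk
          have hzero : (VpolyE z j).eval (z k) = 0 := by
            rw [eval_VpolyE]
            exact Finset.prod_eq_zero
              (Finset.mem_erase.mpr ⟨Ne.symm hjk, Finset.mem_univ k⟩) (by simp)
          simp [hzero]
        · simp
      have hδeq : δ' k * LA * (VpolyE z k).eval (z k) = (z k - μ) * V.eval (z k) := by
        rw [eval_VpolyE, hδ']
        have hne := hdenomne k
        have hne2 : (∏ j ∈ Finset.univ.erase k, (z k - z j)) ≠ 0 := right_ne_zero_of_mul hne
        field_simp
      simp only [hNdef, hN0, eval_sub, eval_add, eval_mul, eval_C, eval_X, hsum, hδeq, hAz]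
      ring
  have hN0eq : N0 = C c * A := by
    have := hNzero
    rw [hNdef] at this
    exact sub_eq_zero.mp this
  refine ⟨z, δ', c, hzmono, hδpos, ?_⟩
  intro x hxp hxz hfx
  have hVx : V.eval x ≠ 0 := by
    rw [hV, eval_Vpoly]
    exact Finset.prod_ne_zero_iff.mpr (fun j _ => sub_ne_zero.mpr (hxp j))
  have hAx : A.eval x = (f.eval x - τ) * V.eval x := hAeval x hxp
  have hAxne : A.eval x ≠ 0 := by
    rw [hAx]; exact mul_ne_zero (sub_ne_zero.mpr hfx) hVx
  have hterm : ∀ k : Fin n, δ' k / (z k - x)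
      = -(δ' k * LA * (VpolyE z k).eval x) / A.eval x := by
    intro k
    have hWne : (VpolyE z k).eval x ≠ 0 := by
      rw [eval_VpolyE]
      exact Finset.prod_ne_zero_iff.mpr (fun j _ => sub_ne_zero.mpr (hxz j))
    have hPz : A.eval x = LA * ((x - z k) * (VpolyE z k).eval x) := by
      rw [hfact, eval_mul, eval_C, Vpoly_eq_VpolyE z k, eval_mul, eval_sub, eval_X, eval_C]
    rw [hPz]
    have hzx : z k - x ≠ 0 := sub_ne_zero.mpr (fun hh => (hxz k) hh.symm)
    have hxzk : x - z k ≠ 0 := sub_ne_zero.mpr (hxz k)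
    field_simp
    ring
  have hev : (μ - x) * V.eval x - gh0 * x * A.eval x
      + ∑ k, δ' k * LA * (VpolyE z k).eval x = c * A.eval x := by
    have hcongr := congrArg (Polynomial.eval x) hN0eq
    rw [hN0] at hcongr
    simpa [eval_add, eval_sub, eval_mul, eval_C, eval_X, eval_finset_sum] using hcongr
  have hsum2 : ∑ k, δ' k / (z k - x)
      = (∑ k, -(δ' k * LA * (VpolyE z k).eval x)) / A.eval x := by
    rw [Finset.sum_congr rfl (fun k _ => hterm k), Finset.sum_div]
  rw [hsum2, Finset.sum_neg_distrib]
  have hS : -(∑ k, δ' k * LA * (VpolyE z k).eval x)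
      = (μ - x) * V.eval x - gh0 * x * A.eval x - c * A.eval x := by
    linarith [hev]
  rw [hS]
  have hstep : gh0 * x + c
      + ((μ - x) * V.eval x - gh0 * x * A.eval x - c * A.eval x) / A.eval x
      = (μ - x) * V.eval x / A.eval x := by
    field_simp
    ring
  rw [hstep, hAx]
  rw [mul_comm (f.eval x - τ) (V.eval x), mul_comm (μ - x) (V.eval x), mul_div_mul_left _ _ hVx]


/-- if `μ` is smaller than every pole of `f` and `τ > f(μ)`, then
`f̃(λ) := (μ − λ)/(f(λ) − τ) − τ` is again a rational Herglotz–Nevanlinna function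
with `ind f̃ = ind f + 1`. -/
theorem tilde_transform_is_RHN (f : RHN) (μ τ : ℝ)
    (hμ : ∀ k, μ < f.pole k) (hτ : f.eval μ < τ) :
    ∃ g : RHN, g.ind = f.ind + 1 ∧
      ∀ x : ℝ, (∀ k, x ≠ f.pole k) → (∀ k, x ≠ g.pole k) → f.eval x ≠ τ →
        g.eval x = (μ - x) / (f.eval x - τ) - τ := by
  by_cases hpos : 0 < f.h0
  · -- h0 > 0 : new function has d+1 poles and no linear term
    have hLA : (Apoly f.pole f.residue f.h0 f.h τ).coeff (f.d + 1) = f.h0 :=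
      Apoly_coeff_succ f.pole f.residue f.h0 f.h τ
    have hdegA := Apoly_natDegree_le f.pole f.residue f.h0 f.h τ
    have htopN : ((C μ - X) * Vpoly f.pole).coeff (f.d + 1 + 1) = 0 * f.h0 := by
      rw [zero_mul]
      apply coeff_eq_zero_of_natDegree_lt
      apply lt_of_le_of_lt natDegree_mul_le
      have h1 : (C μ - X : Polynomial ℝ).natDegree ≤ 1 := by
        apply le_trans (natDegree_sub_le _ _); simp
      rw [Vpoly_natDegree]
      omega
    have hsignLA : ∀ k : Fin (f.d + 1),
        0 < (-1 : ℝ) ^ (f.d - (k : ℕ)) * ((-1 : ℝ) ^ (f.d + 1 - 1 - (k : ℕ)) * f.h0) := by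
      intro k
      have hk : (k : ℕ) ≤ f.d := by have := k.isLt; omega
      have he : f.d + 1 - 1 - (k : ℕ) = f.d - (k : ℕ) := by omega
      rw [he]
      have h2 : (-1 : ℝ) ^ (f.d - (k : ℕ)) * ((-1 : ℝ) ^ (f.d - (k : ℕ)) * f.h0)
          = ((-1 : ℝ) ^ (f.d - (k : ℕ)) * (-1 : ℝ) ^ (f.d - (k : ℕ))) * f.h0 := by ring
      have h3 : (-1 : ℝ) ^ (f.d - (k : ℕ)) * (-1 : ℝ) ^ (f.d - (k : ℕ)) = 1 := by
        rw [← pow_add]; exact Even.neg_one_pow ⟨f.d - (k : ℕ), rfl⟩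
      rw [h2, h3, one_mul]
      exact hpos
    have hM : f.d + 1 = f.d + 1 → ∃ M, (∀ j, f.pole j < M) ∧ μ < M ∧
        0 < (Apoly f.pole f.residue f.h0 f.h τ).eval M := by
      intro _
      set A := Apoly f.pole f.residue f.h0 f.h τ with hA
      have h1 : f.d + 1 ≤ A.natDegree :=
        le_natDegree_of_ne_zero (by rw [hLA]; exact ne_of_gt hpos)
      have hdeg : A.natDegree = f.d + 1 := le_antisymm hdegA h1
      have hlead : A.leadingCoeff = f.h0 := by
        rw [Polynomial.leadingCoeff, hdeg, hLA]
      have hdegpos : 0 < A.degree := natDegree_pos_iff_degree_pos.mp (by omega)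
      have htend := Polynomial.tendsto_atTop_of_leadingCoeff_nonneg A hdegpos
        (by rw [hlead]; exact le_of_lt hpos)
      have h2 : ∀ᶠ x : ℝ in Filter.atTop, 0 < A.eval x := htend.eventually_gt_atTop 0
      have h3 : ∀ᶠ x : ℝ in Filter.atTop, ∀ j, f.pole j < x :=
        Filter.eventually_all.mpr (fun j => Filter.eventually_gt_atTop _)
      have h4 : ∀ᶠ x : ℝ in Filter.atTop, μ < x := Filter.eventually_gt_atTop μ
      obtain ⟨M, ⟨hM1, hM2⟩, hM3⟩ := ((h3.and h4).and h2).exists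
      exact ⟨M, hM1, hM2, hM3⟩
    obtain ⟨z, δ', c, hzmono, hδpos, hid⟩ :=
      main_construction f μ τ hμ hτ (f.d + 1) 0 f.h0 (Or.inr rfl) hLA
        (ne_of_gt hpos) hdegA htopN hsignLA hM
    refine ⟨⟨f.d + 1, 0, c - τ, δ', z, le_refl 0, hδpos, hzmono⟩, ?_, ?_⟩
    · have e1 : (RHN.mk (f.d + 1) 0 (c - τ) δ' z (le_refl 0) hδpos hzmono).ind
          = 2 * (f.d + 1 : ℤ) := by
        simp [RHN.ind]
      have e2 : f.ind = 2 * (f.d : ℤ) + 1 := by simp [RHN.ind, hpos]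
      rw [e1, e2]; push_cast; ring
    · intro x hxp hxz hfx
      have hkey := hid x hxp hxz hfx
      show (0 : ℝ) * x + (c - τ) + ∑ k, δ' k / (z k - x) = (μ - x) / (f.eval x - τ) - τ
      linarith [hkey]
  · -- h0 = 0 : new function has d poles and a positive linear term
    have h00 : f.h0 = 0 := le_antisymm (not_lt.1 hpos) f.h0_nonneg
    have hhτ : f.h < τ := by
      have hev := hτ
      rw [RHN.eval, h00] at hev
      have hsum : 0 ≤ ∑ k, f.residue k / (f.pole k - μ) :=
        Finset.sum_nonneg (fun k _ =>
          le_of_lt (div_pos (f.residue_pos k) (sub_pos.mpr (hμ k))))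
      linarith
    have hLAne : f.h - τ ≠ 0 := by linarith
    have hgh0pos : 0 < 1 / (τ - f.h) := by
      apply div_pos one_pos; linarith
    have hLA : (Apoly f.pole f.residue f.h0 f.h τ).coeff f.d = f.h - τ :=
      Apoly_coeff_d f.pole f.residue f.h0 f.h τ h00
    have hdegA := Apoly_natDegree_le' f.pole f.residue f.h0 f.h τ h00
    have htopN : ((C μ - X) * Vpoly f.pole).coeff (f.d + 1)
        = (1 / (τ - f.h)) * (f.h - τ) := by
      have e1 : ((C μ - X) * Vpoly f.pole).coeff (f.d + 1) = -1 := by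
        rw [sub_mul, coeff_sub]
        rw [coeff_C_mul, coeff_eq_zero_of_natDegree_lt (by rw [Vpoly_natDegree]; omega),
          coeff_X_mul, Vpoly_coeff_top]
        ring
      rw [e1]
      rw [eq_comm, div_mul_eq_mul_div, div_eq_iff (by linarith : τ - f.h ≠ 0)]
      ring
    have hsignLA : ∀ k : Fin f.d,
        0 < (-1 : ℝ) ^ (f.d - (k : ℕ)) * ((-1 : ℝ) ^ (f.d - 1 - (k : ℕ)) * (f.h - τ)) := by
      intro k
      have hk := k.isLt
      have he : f.d - (k : ℕ) = (f.d - 1 - (k : ℕ)) + 1 := by omega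
      rw [he, pow_succ]
      have h2 : (-1 : ℝ) ^ (f.d - 1 - (k : ℕ)) * (-1)
            * ((-1 : ℝ) ^ (f.d - 1 - (k : ℕ)) * (f.h - τ))
          = ((-1 : ℝ) ^ (f.d - 1 - (k : ℕ)) * (-1 : ℝ) ^ (f.d - 1 - (k : ℕ))) * (τ - f.h) := by
        ring
      have h3 : (-1 : ℝ) ^ (f.d - 1 - (k : ℕ)) * (-1 : ℝ) ^ (f.d - 1 - (k : ℕ)) = 1 := by
        rw [← pow_add]; exact Even.neg_one_pow ⟨f.d - 1 - (k : ℕ), rfl⟩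
      rw [h2, h3, one_mul]
      linarith
    have hM : f.d = f.d + 1 → ∃ M, (∀ j, f.pole j < M) ∧ μ < M ∧
        0 < (Apoly f.pole f.residue f.h0 f.h τ).eval M :=
      fun hcon => absurd hcon (by omega)
    obtain ⟨z, δ', c, hzmono, hδpos, hid⟩ :=
      main_construction f μ τ hμ hτ f.d (1 / (τ - f.h)) (f.h - τ) (Or.inl rfl) hLA
        hLAne hdegA htopN hsignLA hM
    refine ⟨⟨f.d, 1 / (τ - f.h), c - τ, δ', z, le_of_lt hgh0pos, hδpos, hzmono⟩, ?_, ?_⟩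
    · have e1 : (RHN.mk f.d (1 / (τ - f.h)) (c - τ) δ' z (le_of_lt hgh0pos) hδpos hzmono).ind
          = 2 * (f.d : ℤ) + 1 := by
        simp [RHN.ind, hgh0pos, hhτ]
      have e2 : f.ind = 2 * (f.d : ℤ) := by simp [RHN.ind, hpos]
      rw [e1, e2]
    · intro x hxp hxz hfx
      have hkey := hid x hxp hxz hfx
      show (1 / (τ - f.h)) * x + (c - τ) + ∑ k, δ' k / (z k - x)
          = (μ - x) / (f.eval x - τ) - τ
      linarith [hkey]
end

section
/- Let f be a rational Herglotz–Nevanlinna function with ind f ≥ 3, μ strictly less than the smallest pole of f, and f̂(λ) := (μ − λ)/(f(λ) − f(μ)) − f(μ). Then the finite poles of f and of f̂ interlace, and the smallest pole of f is strictly smaller than the smallest pole of f̂. -/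
open scoped BigOperators

open Polynomial Finset

lemma prod_sign_pos {ι : Type*} (s : Finset ι) (x : ι → ℝ)
    (h : ∀ i ∈ s, x i ≠ 0) :
    0 < (-1 : ℝ) ^ (s.filter (fun i => x i < 0)).card * ∏ i ∈ s, x i := by
  classical
  rw [← Finset.prod_filter_mul_prod_filter_not s (fun i => x i < 0)]
  set t := s.filter (fun i => x i < 0) with ht
  have h1 : ∏ i ∈ t, x i = (-1 : ℝ) ^ t.card * ∏ i ∈ t, (-(x i)) := by
    rw [← Finset.prod_const, ← Finset.prod_mul_distrib]
    exact Finset.prod_congr rfl fun i hi => by ring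
  have h2 : 0 < ∏ i ∈ t, (-(x i)) :=
    Finset.prod_pos fun i hi => by
      have := (Finset.mem_filter.mp hi).2; linarith
  have h3 : 0 < ∏ i ∈ s.filter (fun i => ¬ x i < 0), x i :=
    Finset.prod_pos fun i hi => by
      have h4 := (Finset.mem_filter.mp hi).2
      have h5 := h i (Finset.mem_filter.mp hi).1
      rcases h5.lt_or_gt with hh | hh
      · exact absurd hh h4
      · exact hh
  have h6 : (-1 : ℝ) ^ t.card * (-1 : ℝ) ^ t.card = 1 := by
    rw [← pow_add]; exact Even.neg_one_pow ⟨t.card, rfl⟩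
  have h7 : (-1 : ℝ) ^ t.card * ((∏ i ∈ t, x i) * ∏ i ∈ s.filter (fun i => ¬ x i < 0), x i)
      = (∏ i ∈ t, (-(x i))) * ∏ i ∈ s.filter (fun i => ¬ x i < 0), x i := by
    rw [h1, ← mul_assoc, ← mul_assoc, h6, one_mul]
  rw [h7]
  exact mul_pos h2 h3

lemma sign_mul_neg {a b : ℝ} {m n : ℕ} (ha : 0 < (-1 : ℝ) ^ m * a)
    (hb : 0 < (-1 : ℝ) ^ n * b) (h : Odd (m + n)) : a * b < 0 := by
  have h1 := mul_pos ha hb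
  have h2 : ((-1 : ℝ) ^ m * a) * ((-1 : ℝ) ^ n * b) = (-1 : ℝ) ^ (m + n) * (a * b) := by
    rw [pow_add]; ring
  rw [h2, h.neg_one_pow] at h1; linarith

lemma sign3_pos {a b c : ℝ} {m n p : ℕ} (ha : 0 < (-1 : ℝ) ^ m * a)
    (hb : 0 < (-1 : ℝ) ^ n * b) (hc : 0 < (-1 : ℝ) ^ p * c)
    (h : Even (m + n + p)) : 0 < a * (b * c) := by
  have h1 := mul_pos (mul_pos ha hb) hc
  have h2 : ((-1 : ℝ) ^ m * a) * ((-1 : ℝ) ^ n * b) * ((-1 : ℝ) ^ p * c)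
      = (-1 : ℝ) ^ (m + n + p) * (a * (b * c)) := by
    rw [pow_add, pow_add]; ring
  rw [h2, h.neg_one_pow, one_mul] at h1; exact h1

lemma div_pos_of_mul_pos {a b : ℝ} (h : 0 < a * b) : 0 < a / b := by
  have hb : b ≠ 0 := by rintro rfl; simp at h
  have h2 : a / b = a * b / b ^ 2 := by field_simp
  rw [h2]; positivity

lemma prod_X_sub_C_dvd_of_roots : ∀ {n : ℕ} (p : Polynomial ℝ) (r : Fin n → ℝ),
    Function.Injective r → (∀ i, p.eval (r i) = 0) →
    (∏ i, (X - C (r i))) ∣ p := by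
  intro n
  induction n with
  | zero => intro p r _ _; simpa using one_dvd p
  | succ n ih =>
    intro p r hinj hr
    obtain ⟨q, hq⟩ := (dvd_iff_isRoot.mpr (hr 0) : (X - C (r 0)) ∣ p)
    rw [Fin.prod_univ_succ, hq]
    refine mul_dvd_mul_left _ (ih q (r ∘ Fin.succ) (hinj.comp (Fin.succ_injective n)) ?_)
    intro i
    have h2 := hr i.succ
    rw [hq, eval_mul, eval_sub, eval_X, eval_C] at h2
    have h3 : r i.succ - r 0 ≠ 0 :=
      sub_ne_zero.mpr fun hh => (Fin.succ_ne_zero i) (hinj hh)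
    exact (mul_eq_zero.mp h2).resolve_left h3

lemma card_filter_lt_fin (n k : ℕ) :
    ((Finset.univ : Finset (Fin n)).filter (fun i : Fin n => k < (i : ℕ))).card = n - (k + 1) := by
  rw [← Nat.card_Ico (k + 1) n]
  refine Finset.card_bij' (fun (i : Fin n) (_ : i ∈ (Finset.univ : Finset (Fin n)).filter (fun i : Fin n => k < (i : ℕ))) => (i : ℕ))
    (fun m hm => ⟨m, (Finset.mem_Ico.mp hm).2⟩) ?_ ?_ ?_ ?_ <;>
    intro a ha <;>
    simp only [Finset.mem_filter, Finset.mem_univ, true_and, Finset.mem_Ico] at * <;>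
    first
      | rfl
      | omega
      | exact ⟨(Finset.mem_filter.mp ha).2, a.2⟩
      | exact Finset.mem_filter.mpr ⟨Finset.mem_univ _, by omega⟩
      | exact Nat.lt_of_succ_le (Finset.mem_Ico.mp ha).1

lemma poly_root_Ioo (p : Polynomial ℝ) {a b : ℝ} (hab : a < b)
    (h : p.eval a * p.eval b < 0) : ∃ c, a < c ∧ c < b ∧ p.eval c = 0 := by
  have hc : ContinuousOn (fun x => p.eval x) (Set.Icc a b) :=
    (Polynomial.continuous p).continuousOn
  rcases mul_neg_iff.mp h with ⟨h1, h2⟩ | ⟨h1, h2⟩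
  · obtain ⟨c, hc1, hc2⟩ := intermediate_value_Ioo' (le_of_lt hab) hc ⟨h2, h1⟩
    exact ⟨c, hc1.1, hc1.2, hc2⟩
  · obtain ⟨c, hc1, hc2⟩ := intermediate_value_Ioo (le_of_lt hab) hc ⟨h1, h2⟩
    exact ⟨c, hc1.1, hc1.2, hc2⟩


lemma partial_fractions {e n : ℕ} (hen : e ≤ n) (hn : 0 < n)
    (w : Fin e → ℝ) (hinj : Function.Injective w)
    (P : Polynomial ℝ) (hP : P.Monic) (hPd : P.natDegree = n) :
    ∃ T : Polynomial ℝ, T.natDegree = n - e ∧ T.coeff (n - e) = 1 ∧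
      P = (∏ j, (X - C (w j))) * T +
        ∑ k, C (P.eval (w k) / ∏ j ∈ Finset.univ.erase k, (w k - w j)) *
            ∏ j ∈ Finset.univ.erase k, (X - C (w j)) := by
  classical
  set Q : Polynomial ℝ := ∏ j, (X - C (w j)) with hQ
  set S : Polynomial ℝ := ∑ k, C (P.eval (w k) / ∏ j ∈ Finset.univ.erase k, (w k - w j)) *
      ∏ j ∈ Finset.univ.erase k, (X - C (w j)) with hS
  have hQm : Q.Monic := monic_prod_of_monic _ _ fun i _ => monic_X_sub_C _
  have hQd : Q.natDegree = e := by
    rw [hQ, natDegree_prod_of_monic _ _ fun i _ => monic_X_sub_C _]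
    simp [natDegree_X_sub_C]
  have hSd : S.natDegree ≤ n - 1 := by
    refine natDegree_sum_le_of_forall_le _ _ fun k _ => ?_
    refine le_trans (natDegree_C_mul_le _ _) ?_
    rw [natDegree_prod_of_monic _ _ fun i _ => monic_X_sub_C _]
    simp only [natDegree_X_sub_C, Finset.sum_const, smul_eq_mul, mul_one]
    rw [Finset.card_erase_of_mem (Finset.mem_univ _), Finset.card_univ, Fintype.card_fin]
    omega
  set M : Polynomial ℝ := P - S with hM
  have hMc : M.coeff n = 1 := by
    rw [hM, coeff_sub, ← hPd, hP.coeff_natDegree, hPd,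
      coeff_eq_zero_of_natDegree_lt (by omega : S.natDegree < n), sub_zero]
  have hMroots : ∀ k, M.eval (w k) = 0 := by
    intro k
    have hD : (∏ j ∈ Finset.univ.erase k, (w k - w j)) ≠ 0 := by
      refine Finset.prod_ne_zero_iff.mpr fun j hj => sub_ne_zero.mpr ?_
      exact fun hh => (Finset.mem_erase.mp hj).1 (hinj hh.symm)
    rw [hM, eval_sub, hS, eval_finset_sum]
    rw [Finset.sum_eq_single k]
    · rw [eval_mul, eval_C, eval_prod]
      simp only [eval_sub, eval_X, eval_C]
      rw [div_mul_cancel₀ _ hD, sub_self]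
    · intro l _ hlk
      rw [eval_mul, eval_prod]
      apply mul_eq_zero_of_right
      apply Finset.prod_eq_zero (Finset.mem_erase.mpr ⟨Ne.symm hlk, Finset.mem_univ k⟩)
      simp
    · intro h; exact absurd (Finset.mem_univ k) h
  have hMne : M ≠ 0 := fun h => by simp [h] at hMc
  obtain ⟨T, hT⟩ := prod_X_sub_C_dvd_of_roots M w hinj hMroots
  have hTne : T ≠ 0 := fun h => hMne (by rw [hT, h, mul_zero])
  have hMd : M.natDegree = n := by
    have h1 : M.natDegree ≤ n := by
      refine le_trans (natDegree_sub_le _ _) ?_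
      simp only [max_le_iff]
      exact ⟨le_of_eq hPd, by omega⟩
    have h2 : n ≤ M.natDegree := le_natDegree_of_ne_zero (by rw [hMc]; exact one_ne_zero)
    omega
  have hTd : T.natDegree = n - e := by
    have h1 : M.natDegree = Q.natDegree + T.natDegree := by
      rw [hT, natDegree_mul (hQm.ne_zero) hTne]
    rw [hMd, hQd] at h1
    omega
  refine ⟨T, hTd, ?_, ?_⟩
  · have h1 : M.coeff n = Q.leadingCoeff * T.leadingCoeff := by
      have h2 : n = Q.natDegree + T.natDegree := by rw [hQd, hTd]; omega
      rw [h2, hT, coeff_mul_degree_add_degree]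
    rw [hMc, hQm.leadingCoeff, one_mul] at h1
    rw [← hTd, ← Polynomial.leadingCoeff, ← h1]
  · have := hT
    rw [hM, sub_eq_iff_eq_add] at this
    rw [this]

lemma core (f : RHN) (μ : ℝ) (hμ : ∀ k, μ < f.pole k)
    (e : ℕ) (he1 : 1 ≤ e) (hed : e ≤ f.d) (hde : f.d ≤ e + 1)
    (L : ℝ) (hL : L ≠ 0) (hLsign : 0 < (-1 : ℝ) ^ (f.d - e) * L)
    (w : Fin e → ℝ)
    (hlow : ∀ k : Fin e, f.pole ⟨(k : ℕ), lt_of_lt_of_le k.2 hed⟩ < w k)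
    (hupp : ∀ (k : Fin e) (j : Fin f.d), (k : ℕ) < (j : ℕ) → w k < f.pole j)
    (hN : ∀ x : ℝ, (∀ k, x ≠ f.pole k) →
      (f.eval x - f.eval μ) * ∏ i, (x - f.pole i) = L * (x - μ) * ∏ j, (x - w j)) :
    ∃ g : RHN, (e = f.d → g.h0 = 0) ∧ (e ≠ f.d → 0 < g.h0) ∧ g.d = e ∧
      (∀ x : ℝ, x ≠ μ → (∀ k, x ≠ f.pole k) → (∀ k, x ≠ g.pole k) →
        g.eval x = (μ - x) / (f.eval x - f.eval μ) - f.eval μ) ∧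
      (∀ (i : Fin f.d) (j : Fin g.d),
        ((i : ℕ) ≤ (j : ℕ) → f.pole i < g.pole j) ∧
        ((j : ℕ) < (i : ℕ) → g.pole j < f.pole i)) := by
  classical
  have hwmono : StrictMono w := fun a b hab =>
    lt_trans (hupp a ⟨(b : ℕ), lt_of_lt_of_le b.2 hed⟩ hab) (hlow b)
  have hwinj := hwmono.injective
  set P : Polynomial ℝ := ∏ i, (X - C (f.pole i)) with hPdef
  have hPm : P.Monic := monic_prod_of_monic _ _ fun i _ => monic_X_sub_C _
  have hPd : P.natDegree = f.d := by
    rw [hPdef, natDegree_prod_of_monic _ _ fun i _ => monic_X_sub_C _]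
    simp [natDegree_X_sub_C]
  obtain ⟨T, hTd, hTc, hPF⟩ :=
    partial_fractions hed (lt_of_lt_of_le he1 hed) w hwinj P hPm hPd
  have hPFx : ∀ x : ℝ, P.eval x = (∏ j, (x - w j)) * T.eval x +
      ∑ k, (P.eval (w k) / ∏ j ∈ Finset.univ.erase k, (w k - w j)) *
          ∏ j ∈ Finset.univ.erase k, (x - w j) := by
    intro x
    conv_lhs => rw [hPF]
    simp [eval_prod, eval_finset_sum]
  set δ : Fin e → ℝ := fun k =>
    P.eval (w k) / ((∏ j ∈ Finset.univ.erase k, (w k - w j)) * L) with hδ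
  have hδpos : ∀ k, 0 < δ k := by
    intro k
    have hkd : (k : ℕ) < f.d := lt_of_lt_of_le k.2 hed
    have hA : P.eval (w k) = ∏ i, (w k - f.pole i) := by
      simp [hPdef, eval_prod]
    have hwk : ∀ i : Fin f.d, w k - f.pole i < 0 ↔ (k : ℕ) < (i : ℕ) := by
      intro i
      rw [sub_neg]
      constructor
      · intro h
        by_contra hcon
        push_neg at hcon
        have h2 : f.pole i ≤ f.pole ⟨(k : ℕ), hkd⟩ :=
          f.pole_strictMono.monotone (by rw [Fin.le_def]; exact hcon)
        exact absurd h (not_lt.mpr (le_trans h2 (le_of_lt (hlow k))))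
      · exact hupp k i
    have hAne : ∀ i ∈ Finset.univ, (w k - f.pole i) ≠ 0 := by
      intro i _
      rcases lt_or_ge (k : ℕ) (i : ℕ) with h | h
      · exact sub_ne_zero.mpr (ne_of_lt (hupp k i h))
      · refine sub_ne_zero.mpr (ne_of_gt ?_)
        calc f.pole i ≤ f.pole ⟨(k : ℕ), hkd⟩ :=
              f.pole_strictMono.monotone (by rw [Fin.le_def]; exact h)
          _ < w k := hlow k
    have hsignA := prod_sign_pos Finset.univ (fun i => w k - f.pole i) hAne
    have hfA : (Finset.univ.filter (fun i : Fin f.d => w k - f.pole i < 0))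
        = Finset.univ.filter (fun i : Fin f.d => (k : ℕ) < (i : ℕ)) := by
      ext i
      simp only [Finset.mem_filter, Finset.mem_univ, true_and]
      exact hwk i
    rw [hfA, card_filter_lt_fin] at hsignA
    have hBne : ∀ j ∈ Finset.univ.erase k, (w k - w j) ≠ 0 := fun j hj =>
      sub_ne_zero.mpr fun hh => (Finset.mem_erase.mp hj).1 (hwinj hh.symm)
    have hsignB := prod_sign_pos (Finset.univ.erase k) (fun j => w k - w j) hBne
    have hfB : ((Finset.univ.erase k).filter (fun j : Fin e => w k - w j < 0))
        = Finset.univ.filter (fun j : Fin e => (k : ℕ) < (j : ℕ)) := by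
      ext j
      simp only [Finset.mem_filter, Finset.mem_erase, Finset.mem_univ, true_and, and_true,
        sub_neg]
      constructor
      · rintro ⟨hjk, h⟩
        exact hwmono.lt_iff_lt.mp h
      · intro h
        refine ⟨fun hh => ?_, hwmono (show k < j from h)⟩
        · rw [hh] at h; omega
    rw [hfB, card_filter_lt_fin] at hsignB
    have hEven : Even ((f.d - ((k : ℕ) + 1)) + (e - ((k : ℕ) + 1)) + (f.d - e)) := by
      rw [Nat.even_iff]
      have := k.2
      omega
    have h3 := sign3_pos hsignA hsignB hLsign hEven
    rw [hδ]
    simp only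
    rw [hA]
    exact div_pos_of_mul_pos h3
  obtain ⟨g0, gh, hg00, hg0pos, hg0nonneg, hlin⟩ :
      ∃ g0 gh : ℝ, (e = f.d → g0 = 0) ∧ (e ≠ f.d → 0 < g0) ∧ 0 ≤ g0 ∧
        ∀ x : ℝ, g0 * x + gh = -(T.eval x) / L - f.eval μ := by
    by_cases hc : e = f.d
    · refine ⟨0, -1 / L - f.eval μ, fun _ => rfl, fun h => absurd hc h, le_refl _, ?_⟩
      have hT0 : T.natDegree = 0 := by omega
      have hT1 : T = Polynomial.C 1 := by
        rw [eq_C_of_natDegree_eq_zero hT0]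
        congr 1
        have : f.d - e = 0 := by omega
        rw [this] at hTc
        exact hTc
      intro x
      rw [hT1]
      norm_num
    · have h1 : f.d - e = 1 := by omega
      have hLneg : L < 0 := by
        rw [h1, pow_one] at hLsign
        linarith
      have hTdeg : T.natDegree ≤ 1 := by omega
      rw [h1] at hTc
      have hTeq : T = C (T.coeff 1) * X + C (T.coeff 0) :=
        eq_X_add_C_of_natDegree_le_one hTdeg
      refine ⟨-1 / L, -(T.coeff 0) / L - f.eval μ, fun h => absurd h hc,
        fun _ => div_pos_of_neg_of_neg (by norm_num) hLneg, ?_, ?_⟩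
      · exact le_of_lt (div_pos_of_neg_of_neg (by norm_num) hLneg)
      · intro x
        rw [hTeq]
        simp only [eval_add, eval_mul, eval_C, eval_X, hTc, coeff_add, coeff_C_mul, coeff_X_zero,
          coeff_C_zero, mul_zero, zero_add]
        field_simp
        ring
  refine ⟨⟨e, g0, gh, δ, w, hg0nonneg, hδpos, hwmono⟩, hg00, hg0pos, rfl, ?_, ?_⟩
  · -- the eval identity
    intro x hxμ hxf hxg
    have hPxne : (∏ i, (x - f.pole i)) ≠ 0 :=
      Finset.prod_ne_zero_iff.mpr fun i _ => sub_ne_zero.mpr (hxf i)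
    have hQxne : (∏ j, (x - w j)) ≠ 0 :=
      Finset.prod_ne_zero_iff.mpr fun j _ => sub_ne_zero.mpr (hxg j)
    have hxμ' : x - μ ≠ 0 := sub_ne_zero.mpr hxμ
    have hFx : f.eval x - f.eval μ = L * (x - μ) * (∏ j, (x - w j)) / (∏ i, (x - f.pole i)) :=
      (eq_div_of_mul_eq hPxne (hN x hxf)).symm ▸ rfl
    have hFne : f.eval x - f.eval μ ≠ 0 := by
      rw [hFx]
      exact div_ne_zero (mul_ne_zero (mul_ne_zero hL hxμ') hQxne) hPxne
    have hsum : (∑ k, δ k / (w k - x)) * (L * ∏ j, (x - w j)) =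
        -∑ k, (P.eval (w k) / ∏ j ∈ Finset.univ.erase k, (w k - w j)) *
            ∏ j ∈ Finset.univ.erase k, (x - w j) := by
      rw [Finset.sum_mul, ← Finset.sum_neg_distrib]
      refine Finset.sum_congr rfl fun k _ => ?_
      have hQsplit : (∏ j, (x - w j)) = (x - w k) * ∏ j ∈ Finset.univ.erase k, (x - w j) :=
        (Finset.mul_prod_erase _ _ (Finset.mem_univ k)).symm
      have hDk : (∏ j ∈ Finset.univ.erase k, (w k - w j)) ≠ 0 :=
        Finset.prod_ne_zero_iff.mpr fun j hj =>
          sub_ne_zero.mpr fun hh => (Finset.mem_erase.mp hj).1 (hwinj hh.symm)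
      have hwkx : w k - x ≠ 0 := sub_ne_zero.mpr (Ne.symm (hxg k))
      have hEk : (∏ j ∈ Finset.univ.erase k, (x - w j)) ≠ 0 :=
        Finset.prod_ne_zero_iff.mpr fun j hj => sub_ne_zero.mpr (hxg j)
      rw [hQsplit, hδ]
      simp only
      field_simp
      ring
    have hsum' : (∑ k, δ k / (w k - x)) =
        (-∑ k, (P.eval (w k) / ∏ j ∈ Finset.univ.erase k, (w k - w j)) *
            ∏ j ∈ Finset.univ.erase k, (x - w j)) / (L * ∏ j, (x - w j)) :=
      eq_div_of_mul_eq (mul_ne_zero hL hQxne) hsum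
    show g0 * x + gh + ∑ k, δ k / (w k - x) = (μ - x) / (f.eval x - f.eval μ) - f.eval μ
    rw [hsum', hlin x, hFx, div_div_eq_mul_div]
    have hPe : eval x P = ∏ i, (x - f.pole i) := by simp [hPdef, eval_prod]
    rw [← hPe, hPFx x]
    field_simp
    ring
  · intro i j
    constructor
    · intro hij
      refine lt_of_le_of_lt ?_ (hlow j)
      exact f.pole_strictMono.monotone (by rw [Fin.le_def]; exact hij)
    · intro hji
      exact hupp j i hji


/-- if `ind f ≥ 3` and `μ` is smaller than the smallest pole of `f`, then the
finite poles of `f` and of `f̂(λ) = (μ − λ)/(f(λ) − f(μ)) − f(μ)` interlace each other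
(in the merged order `h₁ < ĥ₁ < h₂ < ĥ₂ < …`), and the smallest pole of `f` is strictly
smaller than the smallest pole of `f̂`. -/
theorem hat_transform_poles_interlace (f : RHN) (μ : ℝ)
    (hμ : ∀ k, μ < f.pole k) (hind : 3 ≤ f.ind) :
    ∃ g : RHN, g.ind = f.ind - 1 ∧
      (∀ x : ℝ, x ≠ μ → (∀ k, x ≠ f.pole k) → (∀ k, x ≠ g.pole k) →
        g.eval x = (μ - x) / (f.eval x - f.eval μ) - f.eval μ) ∧
      1 ≤ f.d ∧ 1 ≤ g.d ∧
      (∀ (i : Fin f.d) (j : Fin g.d),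
        ((i : ℕ) ≤ (j : ℕ) → f.pole i < g.pole j) ∧
        ((j : ℕ) < (i : ℕ) → g.pole j < f.pole i)) := by
  classical
  have hd1 : 1 ≤ f.d := by
    by_contra hcon
    have hd0 : f.d = 0 := by omega
    unfold RHN.ind at hind
    rw [hd0] at hind
    split_ifs at hind <;> omega
  set μf := f.eval μ with hμfdef
  set P : Polynomial ℝ := ∏ i, (X - C (f.pole i)) with hPdef
  have hPm : P.Monic := monic_prod_of_monic _ _ fun i _ => monic_X_sub_C _
  have hPd : P.natDegree = f.d := by
    rw [hPdef, natDegree_prod_of_monic _ _ fun i _ => monic_X_sub_C _]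
    simp [natDegree_X_sub_C]
  set S : Polynomial ℝ := ∑ k, C (f.residue k) * ∏ j ∈ Finset.univ.erase k,
      (X - C (f.pole j)) with hSdef
  have hSd : S.natDegree ≤ f.d - 1 := by
    refine natDegree_sum_le_of_forall_le _ _ fun k _ => ?_
    refine le_trans (natDegree_C_mul_le _ _) ?_
    rw [natDegree_prod_of_monic _ _ fun i _ => monic_X_sub_C _]
    simp only [natDegree_X_sub_C, Finset.sum_const, smul_eq_mul, mul_one]
    rw [Finset.card_erase_of_mem (Finset.mem_univ _), Finset.card_univ, Fintype.card_fin]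
  set N : Polynomial ℝ := (C f.h0 * X + C (f.h - μf)) * P - S with hNdef
  have hNeval : ∀ x : ℝ, (∀ k, x ≠ f.pole k) →
      N.eval x = (f.eval x - μf) * ∏ i, (x - f.pole i) := by
    intro x hx
    have hkey : ∀ k ∈ (Finset.univ : Finset (Fin f.d)),
        f.residue k / (f.pole k - x) * ∏ i, (x - f.pole i)
        = -(f.residue k * ∏ j ∈ Finset.univ.erase k, (x - f.pole j)) := by
      intro k _
      rw [← Finset.mul_prod_erase Finset.univ (fun i => x - f.pole i) (Finset.mem_univ k)]
      have h1 : f.pole k - x ≠ 0 := sub_ne_zero.mpr (Ne.symm (hx k))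
      field_simp
      ring
    have hsum : (∑ k, f.residue k / (f.pole k - x)) * ∏ i, (x - f.pole i)
        = -∑ k, f.residue k * ∏ j ∈ Finset.univ.erase k, (x - f.pole j) := by
      rw [Finset.sum_mul, ← Finset.sum_neg_distrib]
      exact Finset.sum_congr rfl hkey
    have hPev : P.eval x = ∏ i, (x - f.pole i) := by simp [hPdef, eval_prod]
    have hSev : S.eval x = ∑ k, f.residue k * ∏ j ∈ Finset.univ.erase k, (x - f.pole j) := by
      simp [hSdef, eval_finset_sum, eval_prod]
    rw [hNdef, eval_sub, eval_mul, eval_add, eval_mul, eval_C, eval_X, eval_C, hPev, hSev]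
    rw [RHN.eval]
    linear_combination -hsum
  have hNpole : ∀ k : Fin f.d, N.eval (f.pole k)
      = -(f.residue k * ∏ j ∈ Finset.univ.erase k, (f.pole k - f.pole j)) := by
    intro k
    have hPev : P.eval (f.pole k) = 0 := by
      rw [hPdef, eval_prod]
      exact Finset.prod_eq_zero (Finset.mem_univ k) (by simp)
    have hSev : S.eval (f.pole k)
        = f.residue k * ∏ j ∈ Finset.univ.erase k, (f.pole k - f.pole j) := by
      rw [hSdef, eval_finset_sum]
      rw [Finset.sum_eq_single k]
      · rw [eval_mul, eval_C, eval_prod]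
        simp only [eval_sub, eval_X, eval_C]
      · intro l _ hlk
        rw [eval_mul, eval_prod]
        apply mul_eq_zero_of_right
        apply Finset.prod_eq_zero (Finset.mem_erase.mpr ⟨Ne.symm hlk, Finset.mem_univ k⟩)
        simp
      · intro hcon; exact absurd (Finset.mem_univ k) hcon
    rw [hNdef, eval_sub, eval_mul, hPev, mul_zero, zero_sub, hSev]
  have hNμ : N.eval μ = 0 := by
    rw [hNeval μ (fun k => (hμ k).ne)]
    simp [hμfdef]
  have hsgn : ∀ m : Fin f.d,
      0 < (-1 : ℝ) ^ (f.d - ((m : ℕ) + 1)) * (-(N.eval (f.pole m))) := by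
    intro m
    have hne : ∀ j ∈ Finset.univ.erase m, (f.pole m - f.pole j) ≠ 0 := fun j hj =>
      sub_ne_zero.mpr fun hh => (Finset.mem_erase.mp hj).1 (f.pole_strictMono.injective hh.symm)
    have hfilter : ((Finset.univ.erase m).filter (fun j : Fin f.d => f.pole m - f.pole j < 0))
        = Finset.univ.filter (fun j : Fin f.d => (m : ℕ) < (j : ℕ)) := by
      ext j
      simp only [Finset.mem_filter, Finset.mem_erase, Finset.mem_univ, true_and, and_true,
        sub_neg]
      constructor
      · rintro ⟨hjm, hlt⟩
        exact f.pole_strictMono.lt_iff_lt.mp hlt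
      · intro hlt
        refine ⟨fun hh => ?_, f.pole_strictMono (show m < j from hlt)⟩
        rw [hh] at hlt; omega
    have hps := prod_sign_pos (Finset.univ.erase m) (fun j => f.pole m - f.pole j) hne
    rw [hfilter, card_filter_lt_fin] at hps
    rw [hNpole m, neg_neg]
    calc (0:ℝ) < f.residue m * ((-1 : ℝ) ^ (f.d - ((m : ℕ) + 1)) *
          ∏ j ∈ Finset.univ.erase m, (f.pole m - f.pole j)) :=
        mul_pos (f.residue_pos m) hps
      _ = (-1 : ℝ) ^ (f.d - ((m : ℕ) + 1)) *
          (f.residue m * ∏ j ∈ Finset.univ.erase m, (f.pole m - f.pole j)) := by ring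
  have hgap : ∀ k : Fin f.d, (k : ℕ) + 1 < f.d →
      ∃ y, f.pole k < y ∧ (∀ j : Fin f.d, (k : ℕ) < (j : ℕ) → y < f.pole j) ∧ N.eval y = 0 := by
    intro k hk1
    set k' : Fin f.d := ⟨(k : ℕ) + 1, hk1⟩ with hk'def
    have hodd : Odd ((f.d - ((k : ℕ) + 1)) + (f.d - (((k' : ℕ)) + 1))) := by
      have hkv : (k' : ℕ) = (k : ℕ) + 1 := rfl
      rw [Nat.odd_iff]
      omega
    have hprod := sign_mul_neg (hsgn k) (hsgn k') hodd
    rw [neg_mul_neg] at hprod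
    obtain ⟨y, hy1, hy2, hy3⟩ := poly_root_Ioo N
      (f.pole_strictMono (show k < k' from by rw [Fin.lt_def]; simp [hk'def])) hprod
    refine ⟨y, hy1, ?_, hy3⟩
    intro j hj
    refine lt_of_lt_of_le hy2 (f.pole_strictMono.monotone ?_)
    rw [Fin.le_def]
    simp [hk'def]
    omega
  by_cases hh0 : 0 < f.h0
  · -- case h0 > 0 : e = f.d
    have hlinne : (C f.h0 * X + C (f.h - μf)) ≠ 0 := fun hcon => by
      have h1 := natDegree_linear (b := f.h - μf) (ne_of_gt hh0)
      rw [hcon] at h1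
      simp at h1
    have hprodd : ((C f.h0 * X + C (f.h - μf)) * P).natDegree = f.d + 1 := by
      rw [natDegree_mul hlinne hPm.ne_zero, natDegree_linear (ne_of_gt hh0), hPd]
      omega
    have hNc : N.coeff (f.d + 1) = f.h0 := by
      rw [hNdef, coeff_sub,
        coeff_eq_zero_of_natDegree_lt (lt_of_le_of_lt hSd (by omega)), sub_zero]
      have h1 : ((C f.h0 * X + C (f.h - μf)) * P).coeff (f.d + 1)
          = ((C f.h0 * X + C (f.h - μf)) * P).leadingCoeff := by
        rw [Polynomial.leadingCoeff, hprodd]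
      rw [h1, leadingCoeff_mul, leadingCoeff_linear (ne_of_gt hh0), hPm.leadingCoeff, mul_one]
    have hNd : N.natDegree = f.d + 1 := by
      have h1 : N.natDegree ≤ f.d + 1 := by
        rw [hNdef]
        refine le_trans (natDegree_sub_le _ _) ?_
        simp only [max_le_iff]
        exact ⟨le_of_eq hprodd, by omega⟩
      have h2 : f.d + 1 ≤ N.natDegree :=
        le_natDegree_of_ne_zero (by rw [hNc]; exact ne_of_gt hh0)
      omega
    have hNne : N ≠ 0 := fun hcon => by
      rw [hcon, coeff_zero] at hNc
      exact (ne_of_gt hh0) hNc.symm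
    have htopidx : f.d - 1 < f.d := by omega
    have htop : ∃ y, f.pole ⟨f.d - 1, htopidx⟩ < y ∧ N.eval y = 0 := by
      have hlc : N.leadingCoeff = f.h0 := by rw [Polynomial.leadingCoeff, hNd, hNc]
      have hdegpos : 0 < N.degree := natDegree_pos_iff_degree_pos.mp (by omega)
      have ht := N.tendsto_atTop_of_leadingCoeff_nonneg hdegpos (hlc ▸ le_of_lt hh0)
      obtain ⟨x₀, hx1, hx2⟩ := ((ht.eventually_ge_atTop 1).and
        (Filter.eventually_gt_atTop (f.pole ⟨f.d - 1, htopidx⟩))).exists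
      have hsgn' := hsgn ⟨f.d - 1, htopidx⟩
      have hz : f.d - ((f.d - 1 : ℕ) + 1) = 0 := by omega
      rw [hz, pow_zero, one_mul] at hsgn'
      have hneg : N.eval (f.pole ⟨f.d - 1, htopidx⟩) < 0 := by linarith
      obtain ⟨y, hy1, _, hy3⟩ := poly_root_Ioo N hx2
        (mul_neg_of_neg_of_pos hneg (by linarith))
      exact ⟨y, hy1, hy3⟩
    have hroots : ∀ k : Fin f.d, ∃ y, f.pole k < y ∧
        (∀ j : Fin f.d, (k : ℕ) < (j : ℕ) → y < f.pole j) ∧ N.eval y = 0 := by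
      intro k
      rcases lt_or_ge ((k : ℕ) + 1) f.d with hlt | hge
      · exact hgap k hlt
      · obtain ⟨y, hy1, hy2⟩ := htop
        have hkk : k = ⟨f.d - 1, htopidx⟩ := Fin.ext (show (k : ℕ) = f.d - 1 by have := k.2; omega)
        refine ⟨y, by rw [hkk]; exact hy1, ?_, hy2⟩
        intro j hj
        exact absurd hj (by have := j.2; omega)
    choose w hw1 hw2 hw3 using hroots
    have hwmono : StrictMono w := fun a b hab =>
      lt_trans (hw2 a b hab) (hw1 b)
    set r : Fin (f.d + 1) → ℝ := Fin.cons μ w with hrdef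
    have hrinj : Function.Injective r := by
      rw [hrdef, Fin.cons_injective_iff]
      constructor
      · rintro ⟨j, hj⟩
        have := lt_trans (hμ j) (hw1 j)
        rw [hj] at this
        exact lt_irrefl μ this
      · exact hwmono.injective
    have hreval : ∀ i, N.eval (r i) = 0 := by
      intro i
      refine Fin.cases ?_ ?_ i
      · simp only [hrdef, Fin.cons_zero]
        exact hNμ
      · intro i'
        simp only [hrdef, Fin.cons_succ]
        exact hw3 i'
    obtain ⟨T₀, hT₀⟩ := prod_X_sub_C_dvd_of_roots N r hrinj hreval
    set R : Polynomial ℝ := ∏ i, (X - C (r i)) with hRdef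
    have hRm : R.Monic := monic_prod_of_monic _ _ fun i _ => monic_X_sub_C _
    have hRd : R.natDegree = f.d + 1 := by
      rw [hRdef, natDegree_prod_of_monic _ _ fun i _ => monic_X_sub_C _]
      simp [natDegree_X_sub_C]
    have hT₀ne : T₀ ≠ 0 := fun hcon => hNne (by rw [hT₀, hcon, mul_zero])
    have hT₀d : T₀.natDegree = 0 := by
      have h1 : N.natDegree = R.natDegree + T₀.natDegree := by
        rw [hT₀, natDegree_mul hRm.ne_zero hT₀ne]
      omega
    have hT₀C : T₀ = C f.h0 := by
      have h1 : T₀ = C (T₀.coeff 0) := eq_C_of_natDegree_eq_zero hT₀d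
      have h2 : N.coeff (f.d + 1) = T₀.coeff 0 := by
        conv_lhs => rw [hT₀, h1]
        rw [coeff_mul_C, ← hRd, hRm.coeff_natDegree, one_mul]
      rw [h1, ← h2, hNc]
    have hfact : N = R * C f.h0 := by rw [hT₀, hT₀C]
    have hNcore : ∀ x : ℝ, (∀ k, x ≠ f.pole k) →
        (f.eval x - μf) * ∏ i, (x - f.pole i) = f.h0 * (x - μ) * ∏ j, (x - w j) := by
      intro x hx
      rw [← hNeval x hx, hfact, eval_mul, eval_C, hRdef, eval_prod]
      simp only [eval_sub, eval_X, eval_C]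
      rw [Fin.prod_univ_succ]
      simp only [hrdef, Fin.cons_zero, Fin.cons_succ]
      ring
    obtain ⟨g, hg1, hg2, hg3, hg4, hg5⟩ := core f μ hμ f.d hd1 le_rfl (by omega)
      f.h0 (ne_of_gt hh0)
      (by rw [Nat.sub_self, pow_zero, one_mul]; exact hh0)
      w (fun k => hw1 k) hw2 hNcore
    refine ⟨g, ?_, hg4, hd1, by omega, hg5⟩
    rw [RHN.ind, RHN.ind, hg1 rfl, hg3, if_pos hh0, if_neg (lt_irrefl 0)]
    push_cast
    ring
  · have h00 : f.h0 = 0 := le_antisymm (not_lt.mp hh0) f.h0_nonneg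
    have hd2 : 2 ≤ f.d := by
      unfold RHN.ind at hind
      rw [if_neg hh0] at hind
      omega
    have hμfh : f.h < μf := by
      have hpos : 0 < ∑ k, f.residue k / (f.pole k - μ) := by
        refine Finset.sum_pos (fun k _ => div_pos (f.residue_pos k) (sub_pos.mpr (hμ k))) ?_
        exact ⟨⟨0, by omega⟩, Finset.mem_univ _⟩
      rw [hμfdef]
      unfold RHN.eval
      rw [h00]
      linarith
    set L := f.h - μf with hLdef
    have hLneg : L < 0 := by rw [hLdef]; linarith
    have hLne : L ≠ 0 := ne_of_lt hLneg
    have hNL : N = C L * P - S := by rw [hNdef, h00]; simp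
    have hNc : N.coeff f.d = L := by
      rw [hNL, coeff_sub,
        coeff_eq_zero_of_natDegree_lt (by omega : S.natDegree < f.d), sub_zero,
        coeff_C_mul, ← hPd, hPm.coeff_natDegree, mul_one]
    have hNd : N.natDegree = f.d := by
      have h1 : N.natDegree ≤ f.d := by
        rw [hNL]
        refine le_trans (natDegree_sub_le _ _) ?_
        simp only [max_le_iff]
        exact ⟨le_trans (natDegree_C_mul_le _ _) (le_of_eq hPd), by omega⟩
      have h2 : f.d ≤ N.natDegree := le_natDegree_of_ne_zero (by rw [hNc]; exact hLne)
      omega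
    have hNne : N ≠ 0 := fun hcon => by
      rw [hcon, coeff_zero] at hNc
      exact hLne hNc.symm
    set e := f.d - 1 with hedef
    have hroots : ∀ k : Fin e, ∃ y,
        f.pole ⟨(k : ℕ), by have := k.2; omega⟩ < y ∧
        (∀ j : Fin f.d, (k : ℕ) < (j : ℕ) → y < f.pole j) ∧ N.eval y = 0 := by
      intro k
      have hk2 := k.2
      obtain ⟨y, hy1, hy2, hy3⟩ := hgap ⟨(k : ℕ), by omega⟩
        (show (k : ℕ) + 1 < f.d by simp only [hedef] at hk2; omega)
      exact ⟨y, hy1, hy2, hy3⟩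
    choose w hw1 hw2 hw3 using hroots
    have hwmono : StrictMono w := fun a b hab =>
      lt_trans (hw2 a ⟨(b : ℕ), by have := b.2; omega⟩ hab) (hw1 b)
    set r : Fin (e + 1) → ℝ := Fin.cons μ w with hrdef
    have hrinj : Function.Injective r := by
      rw [hrdef, Fin.cons_injective_iff]
      constructor
      · rintro ⟨j, hj⟩
        have := lt_trans (hμ _) (hw1 j)
        rw [hj] at this
        exact lt_irrefl μ this
      · exact hwmono.injective
    have hreval : ∀ i, N.eval (r i) = 0 := by
      intro i
      refine Fin.cases ?_ ?_ i
      · simp only [hrdef, Fin.cons_zero]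
        exact hNμ
      · intro i'
        simp only [hrdef, Fin.cons_succ]
        exact hw3 i'
    obtain ⟨T₀, hT₀⟩ := prod_X_sub_C_dvd_of_roots N r hrinj hreval
    set R : Polynomial ℝ := ∏ i, (X - C (r i)) with hRdef
    have hRm : R.Monic := monic_prod_of_monic _ _ fun i _ => monic_X_sub_C _
    have hRd : R.natDegree = e + 1 := by
      rw [hRdef, natDegree_prod_of_monic _ _ fun i _ => monic_X_sub_C _]
      simp [natDegree_X_sub_C]
    have he1d : e + 1 = f.d := by omega
    have hT₀ne : T₀ ≠ 0 := fun hcon => hNne (by rw [hT₀, hcon, mul_zero])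
    have hT₀d : T₀.natDegree = 0 := by
      have h1 : N.natDegree = R.natDegree + T₀.natDegree := by
        rw [hT₀, natDegree_mul hRm.ne_zero hT₀ne]
      omega
    have hT₀C : T₀ = C L := by
      have h1 : T₀ = C (T₀.coeff 0) := eq_C_of_natDegree_eq_zero hT₀d
      have hRc : R.coeff f.d = 1 := by
        have h3 : R.natDegree = f.d := by omega
        rw [← h3, hRm.coeff_natDegree]
      have h2 : N.coeff f.d = T₀.coeff 0 := by
        conv_lhs => rw [hT₀, h1]
        rw [coeff_mul_C, hRc, one_mul]
      rw [h1, ← h2, hNc]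
    have hfact : N = R * C L := by rw [hT₀, hT₀C]
    have hNcore : ∀ x : ℝ, (∀ k, x ≠ f.pole k) →
        (f.eval x - μf) * ∏ i, (x - f.pole i) = L * (x - μ) * ∏ j, (x - w j) := by
      intro x hx
      rw [← hNeval x hx, hfact, eval_mul, eval_C, hRdef, eval_prod]
      simp only [eval_sub, eval_X, eval_C]
      rw [Fin.prod_univ_succ]
      simp only [hrdef, Fin.cons_zero, Fin.cons_succ]
      ring
    obtain ⟨g, hg1, hg2, hg3, hg4, hg5⟩ := core f μ hμ e (by omega) (by omega) (by omega)
      L hLne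
      (by rw [(by omega : f.d - e = 1), pow_one]; linarith)
      w (fun k => hw1 k) hw2 hNcore
    refine ⟨g, ?_, hg4, hd1, by omega, hg5⟩
    rw [RHN.ind, RHN.ind, if_pos (hg2 (by omega)), if_neg hh0, hg3]
    omega
end

section
/- Let f be a rational Herglotz–Nevanlinna function written as f = f↑/f↓ where f↓(λ) := h₀′ Π_{k=1}^d (h_k − λ) with h₀′ = 1/h₀ if h₀ > 0 and h₀′ = 1 otherwise. Let μ be less than the smallest pole of f, and let f̂ := λ ↦ (μ − λ)/(f(λ) − f(μ)) − f(μ). Then f̂↑(λ) = [ −f(μ) f↑(λ) − (λ − μ − f(μ)²) f↓(λ) ] / (λ − μ) and f̂↓(λ) = [ f↑(λ) − f(μ) f↓(λ) ] / (λ − μ), and in particular both right-hand sides are polynomials in λ. -/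
open scoped BigOperators

namespace RHN

open Polynomial

/-- `h₀′ := 1/h₀` if `h₀ > 0`, and `1` otherwise. -/
noncomputable def h0' (f : RHN) : ℝ := if 0 < f.h0 then 1 / f.h0 else 1

/-- The denominator polynomial `f↓(λ) := h₀′ ∏_{k=1}^d (h_k − λ)`. -/
noncomputable def pdown (f : RHN) : Polynomial ℝ :=
  C f.h0' * ∏ k, (C (f.pole k) - X)

/-- The numerator polynomial `f↑ := f · f↓`, written out explicitly. -/
noncomputable def pup (f : RHN) : Polynomial ℝ :=
  C f.h0' * ((C f.h0 * X + C f.h) * ∏ k, (C (f.pole k) - X)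
    + ∑ k, C (f.residue k) * ∏ j ∈ Finset.univ.erase k, (C (f.pole j) - X))

end RHN

namespace RHN

open Polynomial

variable (f : RHN)

lemma h0'_pos : 0 < f.h0' := by
  unfold h0'
  split
  · exact div_pos one_pos ‹_›
  · exact one_pos

lemma h0'_ne : f.h0' ≠ 0 := (f.h0'_pos).ne'

lemma pdown_eval (x : ℝ) : f.pdown.eval x = f.h0' * ∏ k, (f.pole k - x) := by
  simp [pdown, eval_prod]

lemma pdown_eval_ne {x : ℝ} (hx : ∀ k, x ≠ f.pole k) : f.pdown.eval x ≠ 0 := by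
  rw [pdown_eval]
  refine mul_ne_zero f.h0'_ne (Finset.prod_ne_zero_iff.2 fun k _ => ?_)
  exact sub_ne_zero.2 fun h => hx k h.symm

lemma pup_eval {x : ℝ} (hx : ∀ k, x ≠ f.pole k) :
    f.pup.eval x = f.pdown.eval x * f.eval x := by
  have key : ∀ k : Fin f.d, (∏ j, (f.pole j - x)) * (f.residue k / (f.pole k - x))
      = f.residue k * ∏ j ∈ Finset.univ.erase k, (f.pole j - x) := by
    intro k
    rw [← Finset.mul_prod_erase Finset.univ (fun j => f.pole j - x) (Finset.mem_univ k)]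
    have hk : f.pole k - x ≠ 0 := sub_ne_zero.2 fun h => hx k h.symm
    field_simp
  simp only [pup, pdown, RHN.eval, eval_mul, eval_add, eval_sub, eval_C, eval_X, eval_prod,
    eval_finset_sum]
  rw [mul_add, Finset.mul_sum]
  conv_rhs => rw [mul_add, Finset.mul_sum]
  simp only [mul_assoc, key]
  ring

lemma pup_eval_pole (k : Fin f.d) :
    f.pup.eval (f.pole k)
      = f.h0' * (f.residue k * ∏ j ∈ Finset.univ.erase k, (f.pole j - f.pole k)) := by
  simp only [pup, eval_mul, eval_add, eval_sub, eval_C, eval_X, eval_prod, eval_finset_sum]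
  have h1 : (∏ j, (f.pole j - f.pole k)) = 0 :=
    Finset.prod_eq_zero (Finset.mem_univ k) (by simp)
  rw [h1, mul_zero, zero_add]
  congr 1
  rw [Finset.sum_eq_single k]
  · intro i _ hik
    have : (∏ j ∈ Finset.univ.erase i, (f.pole j - f.pole k)) = 0 :=
      Finset.prod_eq_zero (Finset.mem_erase.2 ⟨(Ne.symm hik), Finset.mem_univ k⟩) (by simp)
    simp [this]
  · simp

lemma pup_eval_pole_ne (k : Fin f.d) : f.pup.eval (f.pole k) ≠ 0 := by
  rw [pup_eval_pole]
  refine mul_ne_zero f.h0'_ne (mul_ne_zero (f.residue_pos k).ne' ?_)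
  refine Finset.prod_ne_zero_iff.2 fun j hj => ?_
  have : j ≠ k := (Finset.mem_erase.1 hj).1
  exact sub_ne_zero.2 fun h => this (f.pole_strictMono.injective h)

lemma pdown_ne_zero : f.pdown ≠ 0 := by
  unfold pdown
  refine mul_ne_zero (by simpa using f.h0'_ne) (Finset.prod_ne_zero_iff.2 fun k _ => ?_)
  intro h
  have := congrArg (Polynomial.eval (f.pole k + 1)) h
  simp at this

end RHN

namespace RHN

open Polynomial

variable (f : RHN)

/-- sign `(-1)^d`. -/
noncomputable def sgn : ℝ := (-1) ^ f.d

/-- monic product `∏ (X - C h_k)`. -/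
noncomputable def Wp : Polynomial ℝ := ∏ k, (X - C (f.pole k))

/-- the sum part of `pup`. -/
noncomputable def sumPart : Polynomial ℝ :=
  ∑ k, C (f.residue k) * ∏ j ∈ Finset.univ.erase k, (C (f.pole j) - X)

lemma sgn_ne : f.sgn ≠ 0 := by
  unfold sgn; positivity

lemma Wp_monic : (f.Wp).Monic :=
  monic_prod_of_monic _ _ fun k _ => monic_X_sub_C _

lemma Wp_natDegree : (f.Wp).natDegree = f.d := by
  unfold Wp
  rw [natDegree_prod _ _ fun k _ => X_sub_C_ne_zero _]
  simp

lemma prod_eq : (∏ k, (C (f.pole k) - X) : Polynomial ℝ) = C f.sgn * f.Wp := by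
  unfold Wp sgn
  have h1 : ∀ k : Fin f.d, (C (f.pole k) - X : Polynomial ℝ) = -1 * (X - C (f.pole k)) := by
    intro k; ring
  calc (∏ k, (C (f.pole k) - X) : Polynomial ℝ)
      = ∏ k, (-1 * (X - C (f.pole k))) := by simp_rw [h1]
    _ = (∏ _k : Fin f.d, (-1 : Polynomial ℝ)) * ∏ k, (X - C (f.pole k)) :=
        Finset.prod_mul_distrib
    _ = C ((-1 : ℝ) ^ f.d) * ∏ k, (X - C (f.pole k)) := by
        simp [Finset.prod_const]
  
lemma pdown_eq : f.pdown = C (f.h0' * f.sgn) * f.Wp := by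
  rw [pdown, prod_eq, C_mul, mul_assoc]

lemma pup_eq : f.pup = C (f.h0' * f.h0 * f.sgn) * (X * f.Wp)
    + C (f.h0' * f.h * f.sgn) * f.Wp + C f.h0' * f.sumPart := by
  rw [pup, sumPart, prod_eq]
  simp only [C_mul]
  ring

lemma sumPart_natDegree_le : f.sumPart.natDegree ≤ f.d - 1 := by
  refine natDegree_sum_le_of_forall_le _ _ fun k _ => ?_
  refine le_trans (natDegree_mul_le) ?_
  rw [natDegree_C, zero_add]
  refine le_trans (natDegree_prod_le _ _) ?_
  have : ∀ j : Fin f.d, ((C (f.pole j) - X : Polynomial ℝ)).natDegree = 1 := by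
    intro j
    rw [show (C (f.pole j) - X : Polynomial ℝ) = -(X - C (f.pole j)) by ring,
      natDegree_neg, natDegree_X_sub_C]
  calc ∑ j ∈ Finset.univ.erase k, ((C (f.pole j) - X : Polynomial ℝ)).natDegree
      = ∑ _j ∈ Finset.univ.erase k, 1 := by
        exact Finset.sum_congr rfl fun j _ => this j
    _ = (Finset.univ.erase k).card := by simp
    _ ≤ f.d - 1 := by
        rw [Finset.card_erase_of_mem (Finset.mem_univ k)]
        simp

lemma sumPart_coeff {j : ℕ} (hj : f.d ≤ j) : f.sumPart.coeff j = 0 := by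
  rcases Nat.eq_zero_or_pos f.d with hd | hd
  · have hz : f.sumPart = 0 := by
      rw [sumPart]
      exact Finset.sum_eq_zero fun k _ => absurd k.isLt (by omega)
    simp [hz]
  · refine coeff_eq_zero_of_natDegree_lt (lt_of_le_of_lt f.sumPart_natDegree_le ?_)
    omega

end RHN

namespace RHN

open Polynomial

variable (f : RHN)

lemma Wp_coeff_d : f.Wp.coeff f.d = 1 := by
  have := f.Wp_monic.coeff_natDegree
  rwa [Wp_natDegree] at this

lemma Wp_coeff_gt {j : ℕ} (hj : f.d < j) : f.Wp.coeff j = 0 :=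
  coeff_eq_zero_of_natDegree_lt (by rw [Wp_natDegree]; exact hj)

lemma pdown_coeff_d : f.pdown.coeff f.d = f.h0' * f.sgn := by
  rw [pdown_eq, coeff_C_mul, Wp_coeff_d, mul_one]

lemma pdown_coeff_gt {j : ℕ} (hj : f.d < j) : f.pdown.coeff j = 0 := by
  rw [pdown_eq, coeff_C_mul, Wp_coeff_gt f hj, mul_zero]

lemma pdown_natDegree : f.pdown.natDegree = f.d := by
  refine le_antisymm ?_ (le_natDegree_of_ne_zero ?_)
  · by_contra hlt
    push_neg at hlt
    have := f.pdown_coeff_gt hlt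
    rw [← leadingCoeff] at this
    exact f.pdown_ne_zero (leadingCoeff_eq_zero.1 this)
  · rw [pdown_coeff_d]
    exact mul_ne_zero f.h0'_ne f.sgn_ne

lemma pdown_leadingCoeff : f.pdown.leadingCoeff = f.h0' * f.sgn := by
  rw [leadingCoeff, pdown_natDegree, pdown_coeff_d]

lemma pup_coeff_top : f.pup.coeff (f.d + 1) = f.h0' * f.h0 * f.sgn := by
  rw [pup_eq]
  simp only [coeff_add, coeff_C_mul, coeff_X_mul]
  rw [Wp_coeff_d, Wp_coeff_gt f (by omega), f.sumPart_coeff (by omega)]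
  ring

lemma pup_coeff_gt {j : ℕ} (hj : f.d + 1 < j) : f.pup.coeff j = 0 := by
  obtain ⟨m, rfl⟩ : ∃ m, j = m + 1 := ⟨j - 1, by omega⟩
  rw [pup_eq]
  simp only [coeff_add, coeff_C_mul, coeff_X_mul]
  rw [Wp_coeff_gt f (by omega), Wp_coeff_gt f (by omega), f.sumPart_coeff (by omega)]
  ring

lemma pup_coeff_d (h : f.h0 = 0) : f.pup.coeff f.d = f.h0' * f.h * f.sgn := by
  rw [pup_eq]
  simp only [coeff_add, coeff_C_mul]
  rw [Wp_coeff_d, f.sumPart_coeff (le_refl _), h]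
  ring

lemma pup_natDegree_le : f.pup.natDegree ≤ f.d + 1 :=
  natDegree_le_iff_coeff_eq_zero.2 fun _ hN => f.pup_coeff_gt hN

lemma struct : f.pup = (C f.h0 * X + C f.h) * f.pdown + C f.h0' * f.sumPart := by
  rw [pup_eq, pdown_eq]
  simp only [C_mul]
  ring

lemma coprime : IsCoprime f.pdown f.pup := by
  rw [pdown_eq]
  refine IsCoprime.mul_left ?_ ?_
  · have hunit : IsUnit (C (f.h0' * f.sgn) : Polynomial ℝ) :=
      isUnit_C.2 (isUnit_iff_ne_zero.2 (mul_ne_zero f.h0'_ne f.sgn_ne))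
    exact (isCoprime_one_left).of_isCoprime_of_dvd_left hunit.dvd
  · refine IsCoprime.prod_left fun k _ => ?_
    rw [(irreducible_X_sub_C (f.pole k)).coprime_iff_not_dvd, dvd_iff_isRoot]
    exact f.pup_eval_pole_ne k

end RHN

namespace RHN

open Polynomial

variable (f : RHN)

lemma eval_hasDerivAt {μ : ℝ} (hμ : ∀ k, μ < f.pole k) :
    HasDerivAt (fun x => f.eval x)
      (f.h0 + ∑ k, f.residue k / (f.pole k - μ) ^ 2) μ := by
  have h1 : HasDerivAt (fun x : ℝ => f.h0 * x + f.h) f.h0 μ := by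
    simpa using ((hasDerivAt_id μ).const_mul f.h0).add_const f.h
  have h2 : ∀ k : Fin f.d, HasDerivAt (fun x => f.residue k / (f.pole k - x))
      (f.residue k / (f.pole k - μ) ^ 2) μ := by
    intro k
    have hu : HasDerivAt (fun x : ℝ => f.pole k - x) (-1) μ := by
      simpa using (hasDerivAt_id μ).const_sub (f.pole k)
    have hinv := hu.inv (sub_ne_zero.2 (hμ k).ne')
    have := hinv.const_mul (f.residue k)
    simpa [div_eq_mul_inv] using this
  have hsum := HasDerivAt.fun_sum (fun k (_ : k ∈ Finset.univ) => h2 k)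
  have := h1.fun_add hsum
  simpa [RHN.eval] using this

lemma deriv_pos {μ : ℝ} (hμ : ∀ k, μ < f.pole k) (hind : 1 ≤ f.ind) :
    0 < f.h0 + ∑ k, f.residue k / (f.pole k - μ) ^ 2 := by
  have hnn : ∀ k : Fin f.d, 0 ≤ f.residue k / (f.pole k - μ) ^ 2 := fun k =>
    le_of_lt (div_pos (f.residue_pos k) (pow_pos (sub_pos.2 (hμ k)) 2))
  rcases lt_or_ge 0 f.h0 with h | h
  · exact add_pos_of_pos_of_nonneg h (Finset.sum_nonneg fun k _ => hnn k)
  · have h0z : f.h0 = 0 := le_antisymm h f.h0_nonneg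
    have hd : 1 ≤ f.d := by
      unfold ind at hind
      rw [if_neg (by rw [h0z]; exact lt_irrefl 0)] at hind
      omega
    have : (0:ℝ) < ∑ k, f.residue k / (f.pole k - μ) ^ 2 := by
      refine Finset.sum_pos (fun k _ => div_pos (f.residue_pos k) (pow_pos (sub_pos.2 (hμ k)) 2)) ?_
      exact ⟨⟨0, hd⟩, Finset.mem_univ _⟩
    rw [h0z, zero_add]
    exact this

lemma eval_mu_gt_h {μ : ℝ} (hμ : ∀ k, μ < f.pole k) (h0z : f.h0 = 0) (hd : 1 ≤ f.d) :
    f.h < f.eval μ := by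
  rw [RHN.eval, h0z, zero_mul, zero_add]
  have : (0:ℝ) < ∑ k, f.residue k / (f.pole k - μ) := by
    refine Finset.sum_pos (fun k _ => div_pos (f.residue_pos k) (sub_pos.2 (hμ k))) ?_
    exact ⟨⟨0, hd⟩, Finset.mem_univ _⟩
  linarith

lemma deriv_ne {μ : ℝ} (hμ : ∀ k, μ < f.pole k) (hind : 1 ≤ f.ind) :
    (f.pup - C (f.eval μ) * f.pdown).derivative.eval μ ≠ 0 := by
  set N := f.pup - C (f.eval μ) * f.pdown with hN
  set D := f.h0 + ∑ k, f.residue k / (f.pole k - μ) ^ 2 with hD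
  have hGd : HasDerivAt (fun x => f.pdown.eval x * (f.eval x - f.eval μ))
      (f.pdown.derivative.eval μ * (f.eval μ - f.eval μ) + f.pdown.eval μ * D) μ :=
    (Polynomial.hasDerivAt _ μ).mul ((f.eval_hasDerivAt hμ).sub_const _)
  have hopen : IsOpen (⋂ k, {f.pole k}ᶜ : Set ℝ) :=
    isOpen_iInter_of_finite fun k => isOpen_compl_singleton
  have hmem : μ ∈ (⋂ k, {f.pole k}ᶜ : Set ℝ) :=
    Set.mem_iInter.2 fun k => (hμ k).ne
  have hEq : (fun x => N.eval x) =ᶠ[nhds μ]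
      (fun x => f.pdown.eval x * (f.eval x - f.eval μ)) := by
    refine Filter.eventually_of_mem (hopen.mem_nhds hmem) fun x hx => ?_
    have hx' : ∀ k, x ≠ f.pole k := fun k => Set.mem_iInter.1 hx k
    show (f.pup - C (f.eval μ) * f.pdown).eval x = f.pdown.eval x * (f.eval x - f.eval μ)
    rw [eval_sub, eval_mul, eval_C, f.pup_eval hx']
    ring
  have hNd : HasDerivAt (fun x => N.eval x)
      (f.pdown.derivative.eval μ * (f.eval μ - f.eval μ) + f.pdown.eval μ * D) μ :=
    hGd.congr_of_eventuallyEq hEq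
  have huniq := (Polynomial.hasDerivAt N μ).unique hNd
  rw [sub_self, mul_zero, zero_add] at huniq
  rw [huniq]
  exact mul_ne_zero (f.pdown_eval_ne fun k => (hμ k).ne) (f.deriv_pos hμ hind).ne'

end RHN

namespace RHN

open Polynomial

lemma sumPart_eq_zero (f : RHN) (hd : f.d = 0) : f.sumPart = 0 := by
  rw [sumPart]
  exact Finset.sum_eq_zero fun k _ => absurd k.isLt (by omega)

lemma main_aux (f g : RHN) (μ : ℝ)
    (hμ : ∀ k, μ < f.pole k) (hind : 1 ≤ f.ind)
    (hg : ∀ x : ℝ, x ≠ μ → (∀ k, x ≠ f.pole k) → (∀ k, x ≠ g.pole k) →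
      g.eval x = (μ - x) / (f.eval x - f.eval μ) - f.eval μ) :
    ∃ c : ℝ, c ≠ 0 ∧
      f.pup - C (f.eval μ) * f.pdown = C c * ((X - C μ) * g.pdown) ∧
      (C μ - X) * f.pdown - C (f.eval μ) * (f.pup - C (f.eval μ) * f.pdown)
        = C c * ((X - C μ) * g.pup) := by
  classical
  set fμ := f.eval μ with hfμ
  set N : Polynomial ℝ := f.pup - C fμ * f.pdown with hNdef
  set M : Polynomial ℝ := (C μ - X) * f.pdown - C fμ * N with hMdef
  have hμ' : ∀ k, μ ≠ f.pole k := fun k => (hμ k).ne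
  have hNx : ∀ x : ℝ, (∀ k, x ≠ f.pole k) →
      N.eval x = f.pdown.eval x * (f.eval x - fμ) := by
    intro x hx
    rw [hNdef, eval_sub, eval_mul, eval_C, f.pup_eval hx]
    ring
  have hNμ : N.eval μ = 0 := by rw [hNx μ hμ']; simp [hfμ]
  have hMμ : M.eval μ = 0 := by
    rw [hMdef, eval_sub, eval_mul, eval_mul, eval_sub, eval_C, eval_C, eval_X, hNμ]
    ring
  have hNder : N.derivative.eval μ ≠ 0 := f.deriv_ne hμ hind
  have hN0 : N ≠ 0 := by
    intro h
    rw [h] at hNder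
    simp at hNder
  -- the key rational identity
  have hA : g.pup * N = M * g.pdown := by
    apply Polynomial.eq_of_infinite_eval_eq
    have hBfin : (({μ} : Set ℝ) ∪ (⋃ k, {f.pole k}) ∪ (⋃ k, {g.pole k})
        ∪ {x | N.IsRoot x}).Finite := by
      refine Set.Finite.union (Set.Finite.union (Set.Finite.union ?_ ?_) ?_) ?_
      · exact Set.finite_singleton μ
      · exact Set.finite_iUnion fun k => Set.finite_singleton _
      · exact Set.finite_iUnion fun k => Set.finite_singleton _
      · exact Polynomial.finite_setOf_isRoot hN0
    refine Set.Infinite.mono ?_ hBfin.infinite_compl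
    intro x hx
    simp only [Set.mem_compl_iff, Set.mem_union, Set.mem_singleton_iff, Set.mem_iUnion,
      Set.mem_setOf_eq, not_or, not_exists] at hx
    obtain ⟨⟨⟨hxμ, hxf⟩, hxg⟩, hxN⟩ := hx
    have hxf' : ∀ k, x ≠ f.pole k := fun k => hxf k
    have hxg' : ∀ k, x ≠ g.pole k := fun k => hxg k
    have hDx : f.pdown.eval x ≠ 0 := f.pdown_eval_ne hxf'
    have hGx : g.pdown.eval x ≠ 0 := g.pdown_eval_ne hxg'
    have hNev : N.eval x = f.pdown.eval x * (f.eval x - fμ) := hNx x hxf'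
    have hNne : N.eval x ≠ 0 := fun h => hxN h
    have hfx : f.eval x - fμ ≠ 0 := by
      intro h
      rw [hNev, h, mul_zero] at hNne
      exact hNne rfl
    have hgev := hg x hxμ hxf' hxg'
    show (g.pup * N).eval x = (M * g.pdown).eval x
    simp only [hNdef, hMdef, eval_mul, eval_sub, eval_C, eval_X, f.pup_eval hxf',
      g.pup_eval hxg', hgev]
    field_simp
  have hdvd : g.pdown ∣ N :=
    (g.coprime).dvd_of_dvd_mul_left ⟨M, by rw [hA]; ring⟩
  obtain ⟨q, hq⟩ := hdvd
  have hq0 : q ≠ 0 := by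
    intro h
    rw [h, mul_zero] at hq
    exact hN0 hq
  have hMq : g.pup * q = M := by
    have h1 : g.pdown * (g.pup * q) = g.pdown * M := by
      rw [show g.pdown * (g.pup * q) = g.pup * (g.pdown * q) by ring, ← hq, hA]
      ring
    exact mul_left_cancel₀ g.pdown_ne_zero h1
  -- complex roots of q are all μ
  set φ : ℝ →+* ℂ := algebraMap ℝ ℂ with hφ
  have hφinj : Function.Injective φ := φ.injective
  have hroot : ∀ z : ℂ, (q.map φ).IsRoot z → z = (μ : ℂ) := by
    intro z hz
    have hNz : (N.map φ).eval z = 0 := by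
      rw [hq, Polynomial.map_mul, eval_mul, hz.eq_zero, mul_zero]
    have hMz : (M.map φ).eval z = 0 := by
      rw [← hMq, Polynomial.map_mul, eval_mul, hz.eq_zero, mul_zero]
    have hMform : (M.map φ).eval z
        = ((μ : ℂ) - z) * (f.pdown.map φ).eval z - (fμ : ℂ) * (N.map φ).eval z := by
      rw [hMdef]
      simp [Polynomial.map_sub, Polynomial.map_mul, hφ, Complex.coe_algebraMap]
    rw [hMform, hNz, mul_zero, sub_zero] at hMz
    rcases mul_eq_zero.1 hMz with h | h
    · have : (μ : ℂ) = z := by linear_combination h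
      exact this.symm
    · exfalso
      have hpd : (f.pdown.map φ).eval z = (φ f.h0') * ∏ k, ((f.pole k : ℂ) - z) := by
        rw [pdown, Polynomial.map_mul, Polynomial.map_prod]
        simp [eval_prod, hφ, Complex.coe_algebraMap]
      rw [hpd] at h
      rcases mul_eq_zero.1 h with h' | h'
      · exact (hφinj.ne_iff' (map_zero φ)).2 f.h0'_ne h'
      · obtain ⟨k, _, hk⟩ := Finset.prod_eq_zero_iff.1 h'
        have hzk : z = (f.pole k : ℂ) := by linear_combination -hk
        rw [hzk] at hNz
        have : (N.map φ).eval ((f.pole k : ℂ)) = φ (N.eval (f.pole k)) := by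
          rw [show ((f.pole k : ℂ)) = φ (f.pole k) from rfl,
            Polynomial.eval_map, Polynomial.eval₂_at_apply]
        rw [this] at hNz
        have hNk : N.eval (f.pole k) ≠ 0 := by
          rw [hNdef, eval_sub, eval_mul, eval_C, f.pdown_eval]
          have : (∏ j, (f.pole j - f.pole k)) = 0 :=
            Finset.prod_eq_zero (Finset.mem_univ k) (by simp)
          rw [this, mul_zero, mul_zero, sub_zero]
          exact f.pup_eval_pole_ne k
        exact hNk (hφinj (by simpa using hNz))
  -- factor q over ℂ and pull back
  have hqC0 : q.map φ ≠ 0 := fun h => hq0 (Polynomial.map_injective φ hφinj (by simpa using h))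
  have hsplit : Splits (q.map φ) := IsAlgClosed.splits _
  have hfact := hsplit.eq_prod_roots
  set e := Multiset.card (q.map φ).roots with he
  have hrootsrep : (q.map φ).roots = Multiset.replicate e (μ : ℂ) :=
    Multiset.eq_replicate.2 ⟨rfl, fun b hb => hroot b ((Polynomial.mem_roots hqC0).1 hb)⟩
  rw [hrootsrep, Multiset.map_replicate, Multiset.prod_replicate] at hfact
  set c := q.leadingCoeff with hc
  have hc0 : c ≠ 0 := leadingCoeff_ne_zero.2 hq0
  have hqe : q = C c * (X - C μ) ^ e := by
    apply Polynomial.map_injective φ hφinj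
    rw [hfact, Polynomial.map_mul, Polynomial.map_pow, Polynomial.map_sub, map_C, map_C,
      map_X, Polynomial.leadingCoeff_map_of_injective hφinj]
    simp [hc, hφ, Complex.coe_algebraMap]
  -- e = 0 is impossible
  have he0 : e ≠ 0 := by
    intro h0
    rw [h0, pow_zero, mul_one] at hqe
    have hpdμ : g.pdown.eval μ = 0 := by
      have := congrArg (Polynomial.eval μ) hq
      rw [hNμ, hqe, eval_mul, eval_C] at this
      rcases mul_eq_zero.1 this.symm with h | h
      · exact h
      · exact absurd h hc0
    obtain ⟨k, _, hk⟩ : ∃ k ∈ Finset.univ, g.pole k - μ = 0 := by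
      rw [g.pdown_eval] at hpdμ
      rcases mul_eq_zero.1 hpdμ with h | h
      · exact absurd h g.h0'_ne
      · exact Finset.prod_eq_zero_iff.1 h
    have hμk : μ = g.pole k := by linarith [sub_eq_zero.1 hk]
    have hpupμ : g.pup.eval μ = 0 := by
      have := congrArg (Polynomial.eval μ) hMq
      rw [hMμ, hqe, eval_mul, eval_C] at this
      rcases mul_eq_zero.1 this with h | h
      · exact h
      · exact absurd h hc0
    rw [hμk] at hpupμ
    exact g.pup_eval_pole_ne k hpupμ
  -- e ≥ 2 is impossible
  have he2 : e < 2 := by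
    by_contra h2
    push_neg at h2
    have hdvd2 : (X - C μ) ^ 2 ∣ N := by
      rw [hq, hqe]
      exact Dvd.dvd.mul_left (Dvd.dvd.mul_left (pow_dvd_pow _ h2) _) _
    obtain ⟨w, hw⟩ := hdvd2
    have : N.derivative.eval μ = 0 := by
      rw [hw, derivative_mul, eval_add, eval_mul, eval_mul, derivative_pow]
      simp
    exact hNder this
  have he1 : e = 1 := by omega
  rw [he1, pow_one] at hqe
  refine ⟨c, hc0, ?_, ?_⟩
  · rw [hq, hqe]
    ring
  · rw [← hMq, hqe]
    ring

end RHN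
open Polynomial in
/-- if `g` represents `f̂(λ) = (μ − λ)/(f(λ) − f(μ)) − f(μ)`, then
`(λ − μ)·f̂↑(λ) = −f(μ) f↑(λ) − (λ − μ − f(μ)²) f↓(λ)` and
`(λ − μ)·f̂↓(λ) = f↑(λ) − f(μ) f↓(λ)`; in particular the right-hand sides are
divisible by `λ − μ` in `ℝ[λ]`. -/
theorem hat_transform_up_down (f g : RHN) (μ : ℝ)
    (hμ : ∀ k, μ < f.pole k) (hind : 1 ≤ f.ind)
    (hg : ∀ x : ℝ, x ≠ μ → (∀ k, x ≠ f.pole k) → (∀ k, x ≠ g.pole k) →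
      g.eval x = (μ - x) / (f.eval x - f.eval μ) - f.eval μ) :
    (X - C μ) * g.pup =
      -(C (f.eval μ)) * f.pup - (X - C μ - C ((f.eval μ) ^ 2)) * f.pdown ∧
    (X - C μ) * g.pdown = f.pup - C (f.eval μ) * f.pdown ∧
    (X - C μ) ∣ (-(C (f.eval μ)) * f.pup - (X - C μ - C ((f.eval μ) ^ 2)) * f.pdown) ∧
    (X - C μ) ∣ (f.pup - C (f.eval μ) * f.pdown) := by
  classical
  obtain ⟨c, hc0, hNc, hMc⟩ := RHN.main_aux f g μ hμ hind hg
  set fμ := f.eval μ with hfμ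
  set N : Polynomial ℝ := f.pup - C fμ * f.pdown with hNdef
  -- basic degree facts about the factorization
  have hNdeg : N.natDegree = 1 + g.d := by
    rw [hNc, natDegree_C_mul hc0, natDegree_mul (X_sub_C_ne_zero μ) g.pdown_ne_zero,
      natDegree_X_sub_C, g.pdown_natDegree]
  have hNlc : N.leadingCoeff = c * (g.h0' * g.sgn) := by
    rw [hNc, leadingCoeff_mul, leadingCoeff_mul, leadingCoeff_C,
      (monic_X_sub_C μ).leadingCoeff, g.pdown_leadingCoeff, one_mul]
  have hE : (C μ - X) * f.pdown - C fμ * N - (C g.h0 * X + C g.h) * N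
      = C c * ((X - C μ) * (C g.h0' * g.sumPart)) := by
    rw [hMc, hNc, g.struct]
    ring
  have hEdeg : (C c * ((X - C μ) * (C g.h0' * g.sumPart))).natDegree ≤ g.d := by
    rcases Nat.eq_zero_or_pos g.d with hgd | hgd
    · rw [g.sumPart_eq_zero hgd]
      simp
    · have h1 : (C g.h0' * g.sumPart).natDegree ≤ g.d - 1 :=
        le_trans natDegree_mul_le (by rw [natDegree_C, zero_add]; exact g.sumPart_natDegree_le)
      have h2 : ((X - C μ) * (C g.h0' * g.sumPart)).natDegree ≤ 1 + (g.d - 1) :=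
        le_trans natDegree_mul_le (by rw [natDegree_X_sub_C]; exact add_le_add_right h1 1)
      refine le_trans natDegree_mul_le ?_
      rw [natDegree_C, zero_add]
      exact le_trans h2 (by omega)
  have hEcoeff : ∀ j, g.d < j →
      ((C μ - X) * f.pdown - C fμ * N - (C g.h0 * X + C g.h) * N).coeff j = 0 := by
    intro j hj
    rw [hE]
    exact coeff_eq_zero_of_natDegree_lt (lt_of_le_of_lt hEdeg hj)
  have hMdeg : ((C μ - X) * f.pdown).natDegree ≤ f.d + 1 := by
    refine le_trans natDegree_mul_le ?_
    have h1 : (C μ - X : Polynomial ℝ).natDegree = 1 := by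
      rw [show (C μ - X : Polynomial ℝ) = -(X - C μ) by ring, natDegree_neg, natDegree_X_sub_C]
    rw [h1, f.pdown_natDegree]
    omega
  -- show c = 1 by case analysis on f.h0
  have hc1 : c = 1 := by
    rcases lt_or_ge 0 f.h0 with hpos | hle
    · -- case h0 > 0
      have hh0' : f.h0' * f.h0 = 1 := by
        rw [RHN.h0', if_pos hpos]
        field_simp
      have hNtop : N.coeff (f.d + 1) = f.sgn := by
        rw [hNdef, coeff_sub, coeff_C_mul, f.pup_coeff_top, f.pdown_coeff_gt (by omega),
          mul_zero, sub_zero, hh0', one_mul]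
      have hNle : N.natDegree ≤ f.d + 1 := by
        refine natDegree_le_iff_coeff_eq_zero.2 fun j hj => ?_
        rw [hNdef, coeff_sub, coeff_C_mul, f.pup_coeff_gt hj, f.pdown_coeff_gt (by omega),
          mul_zero, sub_zero]
      have hNdeg' : N.natDegree = f.d + 1 :=
        le_antisymm hNle (le_natDegree_of_ne_zero (by rw [hNtop]; exact f.sgn_ne))
      have hgd : g.d = f.d := by omega
      have h1 := hEcoeff (f.d + 2) (by omega)
      have c1 : ((C μ - X) * f.pdown).coeff (f.d + 2) = 0 :=
        coeff_eq_zero_of_natDegree_lt (lt_of_le_of_lt hMdeg (by omega))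
      have c2 : N.coeff (f.d + 2) = 0 := coeff_eq_zero_of_natDegree_lt (by omega)
      rw [coeff_sub, coeff_sub, coeff_C_mul, c1, c2, add_mul, coeff_add, mul_assoc,
        coeff_C_mul, coeff_C_mul, coeff_X_mul, hNtop, c2] at h1
      have hg0 : g.h0 = 0 := by
        have h2 : g.h0 * f.sgn = 0 := by linarith
        rcases mul_eq_zero.1 h2 with h | h
        · exact h
        · exact absurd h f.sgn_ne
      have hgh0' : g.h0' = 1 := by
        rw [RHN.h0', if_neg (by rw [hg0]; exact lt_irrefl 0)]
      have hlcN : N.leadingCoeff = f.sgn := by rw [leadingCoeff, hNdeg', hNtop]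
      rw [hNlc, hgh0', one_mul] at hlcN
      have hsgn : g.sgn = f.sgn := by rw [RHN.sgn, RHN.sgn, hgd]
      rw [hsgn] at hlcN
      have := mul_right_cancel₀ f.sgn_ne (hlcN.trans (one_mul f.sgn).symm)
      exact this
    · -- case h0 = 0
      have h0z : f.h0 = 0 := le_antisymm hle f.h0_nonneg
      have hd1 : 1 ≤ f.d := by
        rw [RHN.ind, if_neg (by rw [h0z]; exact lt_irrefl 0)] at hind
        omega
      have hh0' : f.h0' = 1 := by
        rw [RHN.h0', if_neg (by rw [h0z]; exact lt_irrefl 0)]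
      have hfh : f.h < fμ := f.eval_mu_gt_h hμ h0z hd1
      have hNd : N.coeff f.d = (f.h - fμ) * f.sgn := by
        rw [hNdef, coeff_sub, coeff_C_mul, f.pup_coeff_d h0z, f.pdown_coeff_d, hh0', one_mul,
          one_mul]
        ring
      have hNdne : N.coeff f.d ≠ 0 := by
        rw [hNd]
        exact mul_ne_zero (sub_ne_zero.2 hfh.ne) f.sgn_ne
      have hNle : N.natDegree ≤ f.d := by
        refine natDegree_le_iff_coeff_eq_zero.2 fun j hj => ?_
        by_cases hj1 : j = f.d + 1
        · rw [hNdef, hj1, coeff_sub, coeff_C_mul, f.pup_coeff_top,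
            f.pdown_coeff_gt (by omega), h0z]
          ring
        · rw [hNdef, coeff_sub, coeff_C_mul, f.pup_coeff_gt (by omega),
            f.pdown_coeff_gt (by omega)]
          ring
      have hNdeg' : N.natDegree = f.d := le_antisymm hNle (le_natDegree_of_ne_zero hNdne)
      have h1 := hEcoeff (f.d + 1) (by omega)
      have c1 : ((C μ - X) * f.pdown).coeff (f.d + 1) = -f.sgn := by
        rw [sub_mul, coeff_sub, coeff_C_mul, f.pdown_coeff_gt (by omega), coeff_X_mul,
          f.pdown_coeff_d, hh0', one_mul, mul_zero, zero_sub]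
      have c2 : N.coeff (f.d + 1) = 0 := coeff_eq_zero_of_natDegree_lt (by omega)
      rw [coeff_sub, coeff_sub, coeff_C_mul, c1, c2, add_mul, coeff_add, mul_assoc,
        coeff_C_mul, coeff_C_mul, coeff_X_mul, hNd, c2] at h1
      have key : g.h0 * (fμ - f.h) = 1 := by
        have h2 : (g.h0 * (fμ - f.h) - 1) * f.sgn = 0 := by linear_combination h1
        rcases mul_eq_zero.1 h2 with h | h
        · linarith
        · exact absurd h f.sgn_ne
      have hgh0pos : 0 < g.h0 := by
        rcases lt_or_eq_of_le g.h0_nonneg with h | h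
        · exact h
        · rw [← h] at key
          simp at key
      have hgh0' : g.h0' = fμ - f.h := by
        rw [RHN.h0', if_pos hgh0pos]
        rw [div_eq_iff hgh0pos.ne']
        linarith [key]
      have hsgn : f.sgn = -g.sgn := by
        rw [RHN.sgn, RHN.sgn, show f.d = g.d + 1 by omega, pow_succ]
        ring
      have hlcN : N.leadingCoeff = (f.h - fμ) * f.sgn := by rw [leadingCoeff, hNdeg', hNd]
      rw [hNlc, hgh0'] at hlcN
      have hne : (fμ - f.h) * g.sgn ≠ 0 :=
        mul_ne_zero (by linarith : fμ - f.h ≠ 0) g.sgn_ne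
      refine mul_right_cancel₀ hne ?_
      rw [one_mul, hlcN, hsgn]
      ring
  -- conclude
  rw [hc1, map_one, one_mul] at hNc hMc
  have goal2 : (X - C μ) * g.pdown = f.pup - C fμ * f.pdown := hNc.symm
  have goal1 : (X - C μ) * g.pup =
      -(C fμ) * f.pup - (X - C μ - C (fμ ^ 2)) * f.pdown := by
    rw [← hMc, hNdef, show (C (fμ ^ 2) : Polynomial ℝ) = C fμ * C fμ by rw [← C_mul, sq]]
    ring
  exact ⟨goal1, goal2, ⟨g.pup, goal1.symm⟩, ⟨g.pdown, goal2.symm⟩⟩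
end

section
/- Define ω₁(f) := 1/h₀ if ind f is odd and nonnegative, ω₁(f) := −h if ind f is even and nonnegative, and ω₁(∞_n) := −n(n+1)/(2π) for the singularity symbol ∞_n of index −n−1. Let f be a rational Herglotz–Nevanlinna function with ind f ≥ 1, μ less than the smallest pole of f, and f̂ := Θ̂(μ, f). Then ω₁(f̂) − ω₁(f) = f(μ). -/
open scoped BigOperators
namespace RHN

/-- `ω₁ := 1/h₀` if `ind f` is odd, `ω₁ := −h` if `ind f` is even. -/
noncomputable def omega1 (f : RHN) : ℝ := if Odd f.ind then 1 / f.h0 else -f.h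

/-- `ω₂ := h/h₀ − ∑ h_k` if `ind f` is odd, `ω₂ := −∑ h_k` if `ind f` is even. -/
noncomputable def omega2 (f : RHN) : ℝ :=
  if Odd f.ind then f.h / f.h0 - ∑ k, f.pole k else -∑ k, f.pole k

end RHN

open Filter Topology

lemma RHN.tendsto_sum (f : RHN) :
    Tendsto (fun x => ∑ k, f.residue k / (f.pole k - x)) atTop (𝓝 0) := by
  have h0 : (0 : ℝ) = ∑ _k : Fin f.d, (0 : ℝ) := by simp
  rw [h0]
  refine tendsto_finset_sum _ fun k _ => ?_
  have h1 : Tendsto (fun x : ℝ => x - f.pole k) atTop atTop :=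
    tendsto_atTop_add_const_right atTop _ tendsto_id
  have h2 := h1.inv_tendsto_atTop.const_mul (f.residue k)
  have h3 : (fun x : ℝ => f.residue k / (f.pole k - x)) =
      fun x => -(f.residue k * ((fun x : ℝ => x - f.pole k) x)⁻¹) := by
    funext x
    rw [div_eq_mul_inv, show f.pole k - x = -(x - f.pole k) from (neg_sub _ _).symm,
      inv_neg, mul_neg]
  rw [h3]
  simpa using h2.neg

lemma aux_const_div (c : ℝ) : Tendsto (fun x : ℝ => c / x) atTop (𝓝 0) := by
  simpa [div_eq_mul_inv] using tendsto_inv_atTop_zero.const_mul c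

lemma aux_num (μ : ℝ) : Tendsto (fun x : ℝ => μ / x - 1) atTop (𝓝 (-1)) := by
  simpa using (aux_const_div μ).sub_const 1



/-- if `g = Θ̂(μ, f)` (so `ind g = ind f − 1`), then `ω₁(f̂) − ω₁(f) = f(μ)`. -/
theorem omega1_hat_transform (f g : RHN) (μ : ℝ)
    (hind : 1 ≤ f.ind) (hμ : ∀ k, μ < f.pole k)
    (hgind : g.ind = f.ind - 1)
    (hg : ∀ x : ℝ, x ≠ μ → (∀ k, x ≠ f.pole k) → (∀ k, x ≠ g.pole k) →
      g.eval x = (μ - x) / (f.eval x - f.eval μ) - f.eval μ) :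
    g.omega1 - f.omega1 = f.eval μ := by

  classical
  have hEq : ∀ᶠ x in atTop,
      g.eval x = (μ - x) / (f.eval x - f.eval μ) - f.eval μ := by
    have h1 : ∀ᶠ x : ℝ in atTop, μ < x := eventually_gt_atTop μ
    have h2 : ∀ᶠ x : ℝ in atTop, ∀ k, f.pole k < x :=
      eventually_all.2 fun k => eventually_gt_atTop _
    have h3 : ∀ᶠ x : ℝ in atTop, ∀ k, g.pole k < x :=
      eventually_all.2 fun k => eventually_gt_atTop _
    filter_upwards [h1, h2, h3] with x hx1 hx2 hx3
    exact hg x hx1.ne' (fun k => (hx2 k).ne') (fun k => (hx3 k).ne')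
  have hSf := f.tendsto_sum
  have hSg := g.tendsto_sum
  by_cases hf0 : 0 < f.h0
  · -- ind f odd
    have hfind : f.ind = 2 * f.d + 1 := by simp [RHN.ind, hf0]
    have hg0 : g.h0 = 0 := by
      by_contra h
      have hg0' : 0 < g.h0 := lt_of_le_of_ne g.h0_nonneg (Ne.symm h)
      have h2 : g.ind = 2 * g.d + 1 := by simp [RHN.ind, hg0']
      rw [hgind, hfind] at h2
      omega
    have hgtend : Tendsto (fun x => g.eval x) atTop (𝓝 g.h) := by
      simp only [RHN.eval, hg0, zero_mul, zero_add]
      simpa using tendsto_const_nhds.add hSg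
    have hden : Tendsto (fun x => (f.eval x - f.eval μ) / x) atTop (𝓝 f.h0) := by
      have heq : ∀ᶠ x : ℝ in atTop, f.h0 + (f.h - f.eval μ) / x +
          (∑ k, f.residue k / (f.pole k - x)) / x = (f.eval x - f.eval μ) / x := by
        filter_upwards [eventually_ne_atTop 0] with x hx
        simp only [RHN.eval]
        field_simp
        try ring
      have t1 := aux_const_div (f.h - f.eval μ)
      have t2 : Tendsto (fun x : ℝ => (∑ k, f.residue k / (f.pole k - x)) / x)
          atTop (𝓝 0) := by
        simpa [div_eq_mul_inv] using hSf.mul tendsto_inv_atTop_zero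
      have t0 : Tendsto (fun x : ℝ => f.h0 + (f.h - f.eval μ) / x +
          (∑ k, f.residue k / (f.pole k - x)) / x) atTop (𝓝 (f.h0 + 0 + 0)) :=
        (tendsto_const_nhds.add t1).add t2
      simpa using t0.congr' heq
    have hratio : Tendsto (fun x => (μ - x) / (f.eval x - f.eval μ)) atTop
        (𝓝 (-1 / f.h0)) := by
      have h1 := (aux_num μ).div hden hf0.ne'
      refine h1.congr' ?_
      filter_upwards [eventually_gt_atTop 0] with x hx
      rcases eq_or_ne (f.eval x - f.eval μ) 0 with h | h
      · simp [h]
      · simp only [Pi.div_apply]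
        have hx' : x ≠ 0 := hx.ne'
        field_simp
        try ring
    have hgh : g.h = -1 / f.h0 - f.eval μ :=
      tendsto_nhds_unique (hgtend.congr' hEq) (hratio.sub_const _)
    have hOf : Odd f.ind := by rw [hfind]; exact ⟨(f.d : ℤ), by ring⟩
    have hOg : ¬Odd g.ind := by
      rw [hgind, hfind]
      rintro ⟨m, hm⟩
      omega
    simp only [RHN.omega1, if_pos hOf, if_neg hOg]
    rw [hgh]
    ring
  · -- ind f even
    have hf0' : f.h0 = 0 := le_antisymm (not_lt.1 hf0) f.h0_nonneg
    have hfind : f.ind = 2 * f.d := by simp [RHN.ind, hf0]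
    have hd : 0 < f.d := by
      rw [hfind] at hind
      omega
    have hg0 : 0 < g.h0 := by
      by_contra h
      have hz : g.h0 = 0 := le_antisymm (not_lt.1 h) g.h0_nonneg
      have h2 : g.ind = 2 * g.d := by simp [RHN.ind, h]
      rw [hgind, hfind] at h2
      omega
    have hfμ : f.h < f.eval μ := by
      have hpos : 0 < ∑ k, f.residue k / (f.pole k - μ) := by
        have : Nonempty (Fin f.d) := Fin.pos_iff_nonempty.1 hd
        exact Finset.sum_pos
          (fun k _ => div_pos (f.residue_pos k) (sub_pos.2 (hμ k)))
          Finset.univ_nonempty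
      simp only [RHN.eval, hf0', zero_mul, zero_add]
      linarith
    have hne : f.h - f.eval μ ≠ 0 := sub_ne_zero.2 hfμ.ne
    have hftend : Tendsto (fun x => f.eval x) atTop (𝓝 f.h) := by
      simp only [RHN.eval, hf0', zero_mul, zero_add]
      simpa using tendsto_const_nhds.add hSf
    have hLHS : Tendsto (fun x => g.eval x / x) atTop (𝓝 g.h0) := by
      have heq : ∀ᶠ x : ℝ in atTop, g.h0 + g.h / x +
          (∑ k, g.residue k / (g.pole k - x)) / x = g.eval x / x := by
        filter_upwards [eventually_ne_atTop 0] with x hx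
        simp only [RHN.eval]
        field_simp
        try ring
      have t1 := aux_const_div g.h
      have t2 : Tendsto (fun x : ℝ => (∑ k, g.residue k / (g.pole k - x)) / x)
          atTop (𝓝 0) := by
        simpa [div_eq_mul_inv] using hSg.mul tendsto_inv_atTop_zero
      have t0 : Tendsto (fun x : ℝ => g.h0 + g.h / x +
          (∑ k, g.residue k / (g.pole k - x)) / x) atTop (𝓝 (g.h0 + 0 + 0)) :=
        (tendsto_const_nhds.add t1).add t2
      simpa using t0.congr' heq
    have hRHS : Tendsto (fun x => ((μ - x) / (f.eval x - f.eval μ) - f.eval μ) / x)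
        atTop (𝓝 (-1 / (f.h - f.eval μ))) := by
      have h1 : Tendsto (fun x => (μ / x - 1) / (f.eval x - f.eval μ)) atTop
          (𝓝 (-1 / (f.h - f.eval μ))) := (aux_num μ).div (hftend.sub_const _) hne
      have h2 := aux_const_div (f.eval μ)
      have h3 := h1.sub h2
      rw [sub_zero] at h3
      refine h3.congr' ?_
      filter_upwards [eventually_ne_atTop 0] with x hx
      rcases eq_or_ne (f.eval x - f.eval μ) 0 with h | h
      · simp [h, neg_div]
      · field_simp
        try ring
    have hgh0 : g.h0 = -1 / (f.h - f.eval μ) := by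
      refine tendsto_nhds_unique (hLHS.congr' ?_) hRHS
      exact hEq.mono fun x hx => by dsimp only; rw [hx]
    have hOf : ¬Odd f.ind := by
      rw [hfind]
      rintro ⟨m, hm⟩
      omega
    have hOg : Odd g.ind := by
      rw [hgind, hfind]
      exact ⟨(f.d : ℤ) - 1, by ring⟩
    have hinv : 1 / g.h0 = f.eval μ - f.h := by
      rw [hgh0, one_div_div]
      ring
    simp only [RHN.omega1, if_pos hOg, if_neg hOf]
    rw [hinv]
    ring
end

section
/- Suppose two sequences satisfy √λ_n = n − (M+N)/2 + σ/(πn) + ℓ₂(1/n) and γ_n = (π/2)(n − (M+N)/2)^{2M}(1 + ℓ₂(1/n)) with λ₀ < λ₁ < …, γ_n > 0, σ ∈ ℝ, M, N ∈ ℤ. Fix K ≥ 1, choose λ_{−K} < … < λ_{−1} < λ₀ and γ_{−K}, …, γ_{−1} > 0, and define λ̃_n := λ_{n−K} and γ̃_n := γ_{n−K} · Π_{m=0}^{min{n,K}−1} (λ_{n−K} − λ_{m−K}) for n ≥ 0. Then the sequences {λ̃_n} and {γ̃_n} are again strictly increasing resp. positive and satisfy the same form of asymptotics with M and N replaced by M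 + K and N + K: √λ̃_n = n − (M+N)/2 − K + σ/(πn) + ℓ₂(1/n) and γ̃_n = (π/2)(n − (M+N)/2 − K)^{2(M+K)}(1 + ℓ₂(1/n)). -/
open scoped BigOperators
open Filter

private lemma sumsq_one_div : Summable (fun n : ℕ => (1/(n:ℝ))^2) := by
  simpa [one_div_pow] using (summable_one_div_nat_pow (p := 2)).2 one_lt_two

private lemma lemA {f g h : ℕ → ℝ} (C D : ℝ)
    (hf : Summable fun n => f n ^ 2) (hg : Summable fun n => g n ^ 2)
    (hb : ∀ᶠ n in atTop, |h n| ≤ C * |f n| + D * |g n|) :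
    Summable fun n => h n ^ 2 := by
  obtain ⟨N, hN⟩ := eventually_atTop.1 hb
  rw [← summable_nat_add_iff N]
  rw [← summable_nat_add_iff N] at hf hg
  have hsum : Summable (fun n => 2*C^2*(f (n+N))^2 + 2*D^2*(g (n+N))^2) :=
    (hf.mul_left _).add (hg.mul_left _)
  have hle : ∀ n : ℕ, (h (n+N))^2 ≤ 2*C^2*(f (n+N))^2 + 2*D^2*(g (n+N))^2 := by
    intro n
    have h1 := hN (n+N) (Nat.le_add_left _ _)
    nlinarith [sq_abs (h (n+N)), sq_abs (f (n+N)), sq_abs (g (n+N)),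
      abs_nonneg (h (n+N)),
      sq_nonneg (C*|f (n+N)| - D*|g (n+N)|), sq_nonneg (C*|f (n+N)| + D*|g (n+N)|)]
  exact Summable.of_nonneg_of_le (fun n => sq_nonneg _) hle hsum

private lemma tendsto_zero_of_E2 {u : ℕ → ℝ} (h : Summable fun n : ℕ => ((n:ℝ) * u n)^2) :
    Tendsto u atTop (nhds 0) := by
  have h2 : Tendsto (fun n : ℕ => ((n:ℝ) * u n)^2) atTop (nhds 0) := h.tendsto_atTop_zero
  have h3 : Tendsto (fun n : ℕ => |(n:ℝ) * u n|) atTop (nhds 0) := by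
    have := (Real.continuous_sqrt.tendsto 0).comp h2
    simpa [Function.comp_def, Real.sqrt_sq_eq_abs] using this
  have hb : ∀ᶠ n in atTop, ‖u n‖ ≤ |(n:ℝ) * u n| := by
    filter_upwards [eventually_ge_atTop 1] with n hn
    have hn1 : (1:ℝ) ≤ (n:ℝ) := by exact_mod_cast hn
    rw [Real.norm_eq_abs, abs_mul, abs_of_nonneg (by linarith : (0:ℝ) ≤ (n:ℝ))]
    nlinarith [abs_nonneg (u n)]
  exact squeeze_zero_norm' hb h3

private lemma E2_mul_one_add {u v : ℕ → ℝ}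
    (hu : Summable fun n : ℕ => ((n:ℝ) * u n)^2)
    (hv : Summable fun n : ℕ => ((n:ℝ) * v n)^2) :
    Summable fun n : ℕ => ((n:ℝ) * ((1 + u n) * (1 + v n) - 1))^2 := by
  apply lemA 2 1 hu hv
  have hv0 := tendsto_zero_of_E2 hv
  have hsmall : ∀ᶠ n in atTop, |v n| ≤ 1 := by
    have := hv0.eventually (eventually_abs_sub_lt 0 one_pos)
    filter_upwards [this] with n hn
    simpa using hn.le
  filter_upwards [hsmall] with n hn
  have he : (n:ℝ) * ((1 + u n) * (1 + v n) - 1) = (n:ℝ)*u n + (n:ℝ)*v n + ((n:ℝ)*u n)*v n := by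
    ring
  rw [he]
  have h1 : |(n:ℝ)*u n + (n:ℝ)*v n + ((n:ℝ)*u n)*v n| ≤
      |(n:ℝ)*u n| + |(n:ℝ)*v n| + |(n:ℝ)*u n| * |v n| := by
    calc _ ≤ |(n:ℝ)*u n + (n:ℝ)*v n| + |((n:ℝ)*u n)*v n| := abs_add_le _ _
    _ ≤ _ := by rw [abs_mul]; exact add_le_add (abs_add_le _ _) le_rfl
  nlinarith [abs_nonneg ((n:ℝ)*u n), abs_nonneg ((n:ℝ)*v n)]

private lemma E2_prod (K : ℕ) (q : ℕ → ℕ → ℝ)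
    (hq : ∀ m, Summable fun n : ℕ => ((n:ℝ) * q m n)^2) :
    Summable fun n : ℕ => ((n:ℝ) * ((∏ m ∈ Finset.range K, (1 + q m n)) - 1))^2 := by
  induction K with
  | zero => simpa using summable_zero
  | succ j ih =>
    have h := E2_mul_one_add ih (hq j)
    apply h.congr
    intro n
    rw [Finset.prod_range_succ]
    ring_nf

set_option maxHeartbeats 1000000 in
private lemma E2_q (Λ : ℤ → ℝ) (s c C : ℝ) (w : ℕ → ℝ)
    (hsq : ∀ n : ℕ, 1 ≤ n → Real.sqrt (Λ (n:ℤ)) = (n:ℝ) - s + c/(n:ℝ) + w n)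
    (hw : Summable fun n : ℕ => ((n:ℝ) * w n)^2) :
    Summable fun n : ℕ => ((n:ℝ) * ((Λ (n:ℤ) - C)/((n:ℝ) - s)^2 - 1))^2 := by
  apply lemA 4 (20*|c| + 4 + 4*|C|) hw sumsq_one_div
  -- the eventual smallness of x n := c/n + w n
  have hw0 : Tendsto w atTop (nhds 0) := tendsto_zero_of_E2 hw
  have hc0 : Tendsto (fun n : ℕ => c/(n:ℝ)) atTop (nhds 0) := by
    simpa using tendsto_const_div_atTop_nhds_zero_nat c
  have hx0 : Tendsto (fun n : ℕ => c/(n:ℝ) + w n) atTop (nhds 0) := by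
    simpa using hc0.add hw0
  have hxsmall : ∀ᶠ n : ℕ in atTop, |c/(n:ℝ) + w n| ≤ 1 := by
    have := hx0.eventually (eventually_abs_sub_lt 0 one_pos)
    filter_upwards [this] with n hn; simpa using hn.le
  have hbig : ∀ᶠ n : ℕ in atTop, 2*|s| + 2 ≤ (n:ℝ) :=
    tendsto_natCast_atTop_atTop.eventually_ge_atTop _
  filter_upwards [hxsmall, hbig, eventually_ge_atTop 1] with n hx hb hn1
  set x := c/(n:ℝ) + w n with hxdef
  set t := (n:ℝ) - s with htdef
  have hnR : (1:ℝ) ≤ (n:ℝ) := by exact_mod_cast hn1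
  have hn0 : (0:ℝ) < (n:ℝ) := by linarith
  have ht2 : (2:ℝ) ≤ t := by
    have h1 := abs_nonneg s
    have h2 := le_abs_self s
    simp only [htdef]; linarith
  have ht1 : (1:ℝ) ≤ t := by linarith
  have htn : (n:ℝ) ≤ 2*t := by
    have h1 := le_abs_self s
    simp only [htdef]; linarith
  have hnt : t ≤ 2*(n:ℝ) := by
    have h1 := neg_abs_le s; have h2 := abs_nonneg s
    simp only [htdef]; linarith
  have ht0 : (0:ℝ) < t := by linarith
  -- positivity of Λ n and the square identity
  have hsqrt : Real.sqrt (Λ (n:ℤ)) = t + x := by rw [hsq n hn1]; ring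
  have hsqrtpos : 0 < Real.sqrt (Λ (n:ℤ)) := by
    rw [hsqrt]
    have h1 := (abs_le.1 hx).1
    linarith
  have hΛpos : 0 < Λ (n:ℤ) := Real.sqrt_pos.1 hsqrtpos
  have hΛ : Λ (n:ℤ) = (t + x)^2 := by
    rw [← hsqrt, Real.sq_sqrt hΛpos.le]
  have ht2ne : t^2 ≠ 0 := by positivity
  -- main computation
  have hqe : (n:ℝ) * ((Λ (n:ℤ) - C)/t^2 - 1) = ((n:ℝ) * (2*t*x + x^2 - C))/t^2 := by
    rw [hΛ, div_sub_one ht2ne, ← mul_div_assoc]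
    congr 2
    ring
  rw [hqe, abs_div, abs_of_pos (by positivity : (0:ℝ) < t^2), abs_mul,
    abs_of_pos hn0, abs_of_nonneg (by positivity : (0:ℝ) ≤ 1/(n:ℝ))]
  set X := |x| with hX
  set W := |w n| with hWdef
  have hX0 : (0:ℝ) ≤ X := hX ▸ abs_nonneg x
  have hW0 : (0:ℝ) ≤ W := hWdef ▸ abs_nonneg (w n)
  have habsmul : |(n:ℝ) * w n| = (n:ℝ) * W := by
    rw [hWdef, abs_mul, abs_of_pos hn0]
  rw [habsmul, div_le_iff₀ (by positivity : (0:ℝ) < t^2)]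
  have htri : |2*t*x + x^2 - C| ≤ 2*t*X + X + |C| := by
    have h1 : |2*t*x + x^2 - C| ≤ |2*t*x| + |x^2| + |C| := by
      calc |2*t*x + x^2 - C| ≤ |2*t*x + x^2| + |C| := abs_sub _ _
        _ ≤ |2*t*x| + |x^2| + |C| := by linarith [abs_add_le (2*t*x) (x^2)]
    have h2 : |2*t*x| = 2*t*X := by
      rw [hX, abs_mul, abs_of_nonneg (by linarith : (0:ℝ) ≤ 2*t)]
    have h3 : |x^2| ≤ X := by
      have e : |x^2| = X*X := by rw [sq, abs_mul, ← hX]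
      rw [e]; nlinarith
    linarith
  -- relate X to W and 1/n
  have hXW : (n:ℝ) * X ≤ |c| + (n:ℝ) * W := by
    have h1 : X ≤ |c|/(n:ℝ) + W := by
      rw [hX, hWdef, hxdef]
      refine (abs_add_le _ _).trans ?_
      rw [abs_div, abs_of_pos hn0]
    have h2 : (n:ℝ) * X ≤ (n:ℝ) * (|c|/(n:ℝ) + W) :=
      mul_le_mul_of_nonneg_left h1 hn0.le
    have h3 : (n:ℝ) * (|c|/(n:ℝ) + W) = |c| + (n:ℝ)*W := by
      field_simp
    linarith
  set D : ℝ := 20*|c| + 4 + 4*|C| with hD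
  have hD0 : (0:ℝ) ≤ D := by rw [hD]; positivity
  have hDq : D * ((n:ℝ)/4) ≤ D * (1/(n:ℝ)) * t^2 := by
    have hq1 : (n:ℝ)/4 ≤ (1/(n:ℝ))*t^2 := by
      rw [one_div, inv_mul_eq_div, div_le_div_iff₀ (by norm_num : (0:ℝ) < 4) hn0]
      nlinarith
    calc D * ((n:ℝ)/4) ≤ D * ((1/(n:ℝ))*t^2) := mul_le_mul_of_nonneg_left hq1 hD0
      _ = D * (1/(n:ℝ)) * t^2 := by ring
  have hmain : (n:ℝ) * (2*t*X + X + |C|) ≤ 4*((n:ℝ)*W)*t^2 + D*((n:ℝ)/4) := by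
    have h5 : 2*t*((n:ℝ)*X) ≤ 2*t*(|c| + (n:ℝ)*W) :=
      mul_le_mul_of_nonneg_left hXW (by linarith)
    have h6 : 2*t*|c| ≤ 4*(n:ℝ)*|c| := by nlinarith [abs_nonneg c]
    have h7 : 2*t*((n:ℝ)*W) ≤ 4*t^2*((n:ℝ)*W) := by
      nlinarith [mul_nonneg (show (0:ℝ) ≤ 4*t^2 - 2*t by nlinarith) (mul_nonneg hn0.le hW0)]
    have h8 : (n:ℝ)*X ≤ (n:ℝ)*1 := by
      have hx1 : X ≤ 1 := hX ▸ hx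
      exact mul_le_mul_of_nonneg_left hx1 hn0.le
    rw [hD]
    clear_value X W x t D
    nlinarith [h5, h6, h7, h8, mul_nonneg hn0.le (abs_nonneg c)]
  have htri2 : (n:ℝ) * |2*t*x + x^2 - C| ≤ (n:ℝ) * (2*t*X + X + |C|) :=
    mul_le_mul_of_nonneg_left htri hn0.le
  have hexp : (4*((n:ℝ)*W) + D*(1/(n:ℝ)))*t^2 = 4*((n:ℝ)*W)*t^2 + D*(1/(n:ℝ))*t^2 := by
    ring
  calc (n:ℝ) * |2*t*x + x^2 - C| ≤ (n:ℝ) * (2*t*X + X + |C|) := htri2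
    _ ≤ 4*((n:ℝ)*W)*t^2 + D*((n:ℝ)/4) := hmain
    _ ≤ 4*((n:ℝ)*W)*t^2 + D*(1/(n:ℝ))*t^2 := by linarith [hDq]
    _ = (4*((n:ℝ)*W) + D*(1/(n:ℝ)))*t^2 := by ring


set_option maxHeartbeats 2000000 in
/-- if `{λ_n}_{n≥0}`, `{γ_n}_{n≥0}` satisfy
`√λ_n = n − (M+N)/2 + σ/(πn) + ℓ₂(1/n)` and
`γ_n = (π/2)(n − (M+N)/2)^{2M}(1 + ℓ₂(1/n))`, and one prepends arbitrary
`λ_{−K} < … < λ_{−1} < λ₀` and `γ_{−K}, …, γ_{−1} > 0`, then the shifted sequences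
`λ̃_n := λ_{n−K}` and `γ̃_n := γ_{n−K} ∏_{m=0}^{min{n,K}−1} (λ_{n−K} − λ_{m−K})`
are strictly increasing resp. positive and satisfy the same form of asymptotics with
`M`, `N` replaced by `M + K`, `N + K`. -/
theorem shifted_spectral_data_asymptotics
    (M N : ℤ) (σ : ℝ) (K : ℕ) (hK : 1 ≤ K)
    (Λ Γ : ℤ → ℝ)
    (hmono : ∀ m n : ℤ, -(K : ℤ) ≤ m → m < n → Λ m < Λ n)
    (hpos : ∀ n : ℤ, -(K : ℤ) ≤ n → 0 < Γ n)
    (hlam : Summable fun n : ℕ =>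
      ((n : ℝ) * (Real.sqrt (Λ (n : ℤ)) -
        ((n : ℝ) - ((M : ℝ) + (N : ℝ)) / 2 + σ / (Real.pi * (n : ℝ))))) ^ 2)
    (hgam : Summable fun n : ℕ =>
      ((n : ℝ) * (Γ (n : ℤ) /
        (Real.pi / 2 * ((n : ℝ) - ((M : ℝ) + (N : ℝ)) / 2) ^ (2 * M)) - 1)) ^ 2) :
    (StrictMono fun n : ℕ => Λ ((n : ℤ) - (K : ℤ))) ∧
    (∀ n : ℕ, 0 < Γ ((n : ℤ) - (K : ℤ)) *
      ∏ m ∈ Finset.range (min n K), (Λ ((n : ℤ) - (K : ℤ)) - Λ ((m : ℤ) - (K : ℤ)))) ∧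
    (Summable fun n : ℕ =>
      ((n : ℝ) * (Real.sqrt (Λ ((n : ℤ) - (K : ℤ))) -
        ((n : ℝ) - ((M : ℝ) + (N : ℝ)) / 2 - (K : ℝ) + σ / (Real.pi * (n : ℝ))))) ^ 2) ∧
    (Summable fun n : ℕ =>
      ((n : ℝ) * ((Γ ((n : ℤ) - (K : ℤ)) *
          ∏ m ∈ Finset.range (min n K), (Λ ((n : ℤ) - (K : ℤ)) - Λ ((m : ℤ) - (K : ℤ)))) /
        (Real.pi / 2 *
          ((n : ℝ) - ((M : ℝ) + (N : ℝ)) / 2 - (K : ℝ)) ^ (2 * (M + (K : ℤ)))) - 1)) ^ 2) := by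
  refine ⟨?_, ?_, ?_, ?_⟩
  · intro a b hab
    exact hmono _ _ (by omega) (by omega)
  · intro n
    apply mul_pos (hpos _ (by simp))
    apply Finset.prod_pos
    intro m hm
    rw [Finset.mem_range, lt_min_iff] at hm
    have : Λ ((m:ℤ) - K) < Λ ((n:ℤ) - K) := by
      apply hmono _ _ (by simp)
      have : (m:ℤ) < (n:ℤ) := by exact_mod_cast hm.1
      omega
    linarith
  · rw [← summable_nat_add_iff K]
    apply lemA (1 + (K:ℝ)) (|σ/Real.pi| * K) hlam sumsq_one_div
    filter_upwards [eventually_ge_atTop 1] with n hn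
    have hn1 : (1:ℝ) ≤ (n:ℝ) := by exact_mod_cast hn
    have hn0 : (n:ℝ) ≠ 0 := by linarith
    have hnK : ((n:ℝ) + K) ≠ 0 := by positivity
    have hpi : Real.pi ≠ 0 := Real.pi_ne_zero
    have hcast : ((n + K : ℕ) : ℤ) - (K:ℤ) = (n : ℤ) := by push_cast; ring
    have hcastR : ((n + K : ℕ) : ℝ) = (n:ℝ) + K := by push_cast; ring
    set w : ℕ → ℝ := fun n => Real.sqrt (Λ (n : ℤ)) -
        ((n : ℝ) - ((M : ℝ) + (N : ℝ)) / 2 + σ / (Real.pi * (n : ℝ))) with hw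
    have he : ((n + K : ℕ) : ℝ) * (Real.sqrt (Λ ((((n+K:ℕ)) : ℤ) - (K:ℤ))) -
        (((n+K:ℕ) : ℝ) - ((M : ℝ) + (N : ℝ)) / 2 - (K : ℝ) + σ / (Real.pi * ((n+K:ℕ) : ℝ))))
        = ((n:ℝ) + K) * w n + (σ/Real.pi) * (K * (1/(n:ℝ))) := by
      rw [hcast, hcastR, hw]
      field_simp
      ring
    rw [he]
    have e1 : |((n:ℝ)+K)*(w n) + (σ/Real.pi)*((K:ℝ)*(1/n))| ≤
        ((n:ℝ)+K) * |w n| + |σ/Real.pi| * ((K:ℝ)*(1/n)) := by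
      refine (abs_add_le _ _).trans ?_
      rw [abs_mul, abs_mul, abs_of_nonneg (by positivity : (0:ℝ) ≤ (n:ℝ)+K),
        abs_of_nonneg (by positivity : (0:ℝ) ≤ (K:ℝ)*(1/n))]
    have e2 : |(n:ℝ) * (Real.sqrt (Λ (n:ℤ)) -
        ((n:ℝ) - ((M:ℝ)+(N:ℝ))/2 + σ/(Real.pi * (n:ℝ))))| = (n:ℝ) * |w n| := by
      rw [hw, abs_mul, Nat.abs_cast]
    have e3 : |1/(n:ℝ)| = 1/(n:ℝ) := abs_of_nonneg (by positivity)
    rw [e2, e3]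
    refine e1.trans ?_
    nlinarith [mul_nonneg (mul_nonneg (Nat.cast_nonneg K : (0:ℝ) ≤ (K:ℝ)) (sub_nonneg.2 hn1)) (abs_nonneg (w n))]

  rw [← summable_nat_add_iff K]
  -- the per-factor corrections q and their ℓ² property
  have hsq : ∀ n : ℕ, 1 ≤ n → Real.sqrt (Λ (n:ℤ)) =
      (n:ℝ) - ((M:ℝ)+(N:ℝ))/2 + (σ/Real.pi)/(n:ℝ) +
        (Real.sqrt (Λ (n:ℤ)) - ((n:ℝ) - ((M:ℝ)+(N:ℝ))/2 + σ/(Real.pi * (n:ℝ)))) := by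
    intro n _
    rw [div_div]
    ring
  have hq : ∀ m : ℕ, Summable fun n : ℕ =>
      ((n:ℝ) * ((Λ (n:ℤ) - Λ ((m:ℤ) - (K:ℤ)))/((n:ℝ) - ((M:ℝ)+(N:ℝ))/2)^2 - 1))^2 := by
    intro m
    exact E2_q Λ (((M:ℝ)+(N:ℝ))/2) (σ/Real.pi) (Λ ((m:ℤ) - (K:ℤ))) _ hsq hlam
  have hb2 : Summable fun n : ℕ => ((n:ℝ) * ((∏ m ∈ Finset.range K,
      (1 + ((Λ (n:ℤ) - Λ ((m:ℤ) - (K:ℤ)))/((n:ℝ) - ((M:ℝ)+(N:ℝ))/2)^2 - 1))) - 1))^2 :=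
    E2_prod K _ hq
  set b : ℕ → ℝ := fun n => (∏ m ∈ Finset.range K,
      (1 + ((Λ (n:ℤ) - Λ ((m:ℤ) - (K:ℤ)))/((n:ℝ) - ((M:ℝ)+(N:ℝ))/2)^2 - 1))) - 1 with hbdef
  have hbsmall : ∀ᶠ n : ℕ in atTop, |b n| ≤ 1 := by
    have := (tendsto_zero_of_E2 hb2).eventually (eventually_abs_sub_lt 0 one_pos)
    filter_upwards [this] with n hn
    simp only [sub_zero] at hn
    exact hn.le
  apply lemA (2*(1+(K:ℝ))) (1+(K:ℝ)) hgam hb2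
  have hbig : ∀ᶠ n : ℕ in atTop, ((M:ℝ)+(N:ℝ))/2 + 1 ≤ (n:ℝ) :=
    tendsto_natCast_atTop_atTop.eventually_ge_atTop _
  filter_upwards [hbsmall, hbig, eventually_ge_atTop 1] with n hb1 hts hn1
  have hnR : (1:ℝ) ≤ (n:ℝ) := by exact_mod_cast hn1
  have hn0 : (0:ℝ) < (n:ℝ) := by linarith
  set t : ℝ := (n:ℝ) - ((M:ℝ)+(N:ℝ))/2 with htdef
  have ht1 : (1:ℝ) ≤ t := by rw [htdef]; linarith
  have ht0 : t ≠ 0 := by linarith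
  -- rewrite the shifted term
  have hmin : min (n+K) K = K := min_eq_right (Nat.le_add_left K n)
  have hcast : ((n + K : ℕ) : ℤ) - (K:ℤ) = (n : ℤ) := by push_cast; ring
  have hcastR : ((n + K : ℕ) : ℝ) = (n:ℝ) + K := by push_cast; ring
  have hbase : ((n + K : ℕ) : ℝ) - ((M:ℝ)+(N:ℝ))/2 - (K:ℝ) = t := by
    rw [htdef]; push_cast; ring
  -- zpow splitting
  have hzp : t ^ (2*(M+(K:ℤ))) = t ^ (2*M) * (t^2)^K := by
    have h1 : (2*(M+(K:ℤ))) = 2*M + (2*K:ℕ) := by push_cast; ring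
    rw [h1, zpow_add₀ ht0, zpow_natCast, pow_mul]
  -- product identity
  have hprodeq : (1 : ℝ) + b n = (∏ m ∈ Finset.range K,
      (Λ (n:ℤ) - Λ ((m:ℤ) - (K:ℤ)))) / (t^2)^K := by
    rw [hbdef]
    show (1:ℝ) + ((∏ m ∈ Finset.range K,
      (1 + ((Λ (n:ℤ) - Λ ((m:ℤ) - (K:ℤ)))/t^2 - 1))) - 1) = _
    have : ∀ m ∈ Finset.range K,
        (1 + ((Λ (n:ℤ) - Λ ((m:ℤ) - (K:ℤ)))/t^2 - 1))
          = (Λ (n:ℤ) - Λ ((m:ℤ) - (K:ℤ)))/t^2 := by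
      intro m _; ring
    rw [Finset.prod_congr rfl this, Finset.prod_div_distrib, Finset.prod_const, Finset.card_range]
    ring
  set a : ℝ := Γ (n:ℤ) / (Real.pi / 2 * t ^ (2*M)) - 1 with hadef
  have e0 : (1:ℝ) + a = Γ (n:ℤ) / (Real.pi / 2 * t^(2*M)) := by rw [hadef]; ring
  have e1 : Γ (n:ℤ) * (∏ m ∈ Finset.range K, (Λ (n:ℤ) - Λ ((m:ℤ) - (K:ℤ)))) /
      (Real.pi / 2 * t^(2*(M+(K:ℤ)))) = (1+a)*(1+b n) := by
    rw [e0, hprodeq, div_mul_div_comm, hzp]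
    ring
  have key : ((n + K : ℕ) : ℝ) * ((Γ (((n + K : ℕ) : ℤ) - (K : ℤ)) *
          ∏ m ∈ Finset.range (min (n+K) K),
            (Λ (((n + K : ℕ) : ℤ) - (K : ℤ)) - Λ ((m : ℤ) - (K : ℤ)))) /
        (Real.pi / 2 *
          (((n + K : ℕ) : ℝ) - ((M : ℝ) + (N : ℝ)) / 2 - (K : ℝ)) ^ (2 * (M + (K : ℤ)))) - 1)
      = ((n:ℝ) + K) * (a + b n + a * b n) := by
    rw [hmin, hcast, hbase, hcastR, e1]
    ring
  rw [key]
  have hnK0 : (0:ℝ) < (n:ℝ) + K := by positivity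
  have habs1 : |((n:ℝ)+K)*(a + b n + a*b n)| = ((n:ℝ)+K)*|a + b n + a*b n| := by
    rw [abs_mul, abs_of_pos hnK0]
  have htri : |a + b n + a*b n| ≤ 2*|a| + |b n| := by
    have h1 : |a + b n + a*b n| ≤ |a| + |b n| + |a| * |b n| := by
      calc |a + b n + a*b n| ≤ |a + b n| + |a*b n| := abs_add_le _ _
        _ ≤ |a| + |b n| + |a| * |b n| := by
            rw [abs_mul]; exact add_le_add (abs_add_le _ _) le_rfl
    nlinarith [abs_nonneg a, abs_nonneg (b n)]
  have hfab : |(n:ℝ)*a| = (n:ℝ)*|a| := by rw [abs_mul, abs_of_pos hn0]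
  have hgab : |(n:ℝ)*b n| = (n:ℝ)*|b n| := by rw [abs_mul, abs_of_pos hn0]
  rw [habs1, hfab, hgab]
  have hstep : ((n:ℝ)+K)*|a + b n + a*b n| ≤ ((n:ℝ)+K)*(2*|a| + |b n|) :=
    mul_le_mul_of_nonneg_left htri hnK0.le
  have hK0 : (0:ℝ) ≤ (K:ℝ) := Nat.cast_nonneg K
  nlinarith [hstep, mul_nonneg (mul_nonneg hK0 (by linarith : (0:ℝ) ≤ (n:ℝ) - 1))
    (by positivity : (0:ℝ) ≤ 2*|a| + |b n|)]
end

section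
/- Let ℓ ≥ 0 be an integer and let φ be a solution of −φ″ + (ℓ(ℓ+1)/x² + Q(x))φ = 0 on (0, π) with Q continuous near 0 that satisfies φ(x) ∼ x^{ℓ+1}/(2ℓ+1)!! as x → 0⁺, where Q is continuously differentiable at 0 with value Q(0). Then the logarithmic derivative satisfies the refined asymptotics φ′(x)/φ(x) = (ℓ+1)/x + x·Q(0)/(2ℓ+3) + o(x) as x → 0⁺. -/
open scoped BigOperators
open Filter Asymptotics
open MeasureTheory Set intervalIntegral


lemma W_hasDerivAt (ℓ : ℕ) (Q φ : ℝ → ℝ) {x : ℝ} (hx : x ∈ Set.Ioo 0 Real.pi)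
    (hφ1 : ∀ x ∈ Set.Ioo 0 Real.pi, DifferentiableAt ℝ φ x)
    (hφ2 : ∀ x ∈ Set.Ioo 0 Real.pi, HasDerivAt (deriv φ)
      (((ℓ : ℝ) * ((ℓ : ℝ) + 1) / x ^ 2 + Q x) * φ x) x) :
    HasDerivAt (fun t => t ^ (ℓ + 1) * deriv φ t - ((ℓ : ℝ) + 1) * (t ^ ℓ * φ t))
      (x ^ (ℓ + 1) * Q x * φ x) x := by
  have h1 : HasDerivAt φ (deriv φ x) x := (hφ1 x hx).hasDerivAt
  have h2 := hφ2 x hx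
  have hp1 := (hasDerivAt_pow (ℓ + 1) x).mul h2
  have hp2 := ((hasDerivAt_pow ℓ x).mul h1).const_mul ((ℓ : ℝ) + 1)
  have := hp1.sub hp2
  refine this.congr_deriv ?_
  have hx0 : x ≠ 0 := ne_of_gt hx.1
  rcases Nat.eq_zero_or_pos ℓ with h | h
  · subst h; field_simp; ring
  · obtain ⟨m, rfl⟩ : ∃ m, ℓ = m + 1 := ⟨ℓ - 1, (Nat.succ_pred_eq_of_pos h).symm⟩
    simp only [Nat.add_sub_cancel]
    push_cast
    field_simp
    ring

lemma v_hasDerivAt (ℓ : ℕ) (φ : ℝ → ℝ) {x : ℝ} (hx0 : 0 < x)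
    (h1 : DifferentiableAt ℝ φ x) :
    HasDerivAt (fun t => φ t / t ^ (ℓ + 1))
      ((x ^ (ℓ + 1) * deriv φ x - ((ℓ : ℝ) + 1) * (x ^ ℓ * φ x)) / x ^ (2 * ℓ + 2)) x := by
  have hx : x ≠ 0 := ne_of_gt hx0
  have hpow : x ^ (ℓ + 1) ≠ 0 := pow_ne_zero _ hx
  have := h1.hasDerivAt.div (hasDerivAt_pow (ℓ + 1) x) hpow
  refine this.congr_deriv ?_
  simp only [Nat.add_sub_cancel]
  push_cast
  rw [div_eq_div_iff (by positivity) (by positivity)]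
  ring


set_option maxHeartbeats 2000000 in
/-- if `φ` solves `−φ″ + (ℓ(ℓ+1)/x² + Q(x))φ = 0` on `(0,π)` with `Q`
continuously differentiable near `0`, and `φ(x) ∼ x^{ℓ+1}/(2ℓ+1)!!` as `x → 0⁺`, then
`φ′(x)/φ(x) = (ℓ+1)/x + x·Q(0)/(2ℓ+3) + o(x)` as `x → 0⁺`. -/
theorem refined_log_derivative_asymptotics
    (ℓ : ℕ) (Q φ : ℝ → ℝ)
    (hQ : ContDiffOn ℝ 1 Q (Set.Icc 0 Real.pi))
    (hφ1 : ∀ x ∈ Set.Ioo 0 Real.pi, DifferentiableAt ℝ φ x)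
    (hφ2 : ∀ x ∈ Set.Ioo 0 Real.pi, HasDerivAt (deriv φ)
      (((ℓ : ℝ) * ((ℓ : ℝ) + 1) / x ^ 2 + Q x) * φ x) x)
    (hasymp : Tendsto
      (fun x : ℝ => φ x / (x ^ (ℓ + 1) / ∏ k ∈ Finset.range (ℓ + 1), (2 * (k : ℝ) + 1)))
      (nhdsWithin 0 (Set.Ioi 0)) (nhds 1)) :
    (fun x : ℝ => deriv φ x / φ x - ((ℓ : ℝ) + 1) / x - x * Q 0 / (2 * (ℓ : ℝ) + 3))
      =o[nhdsWithin 0 (Set.Ioi 0)] (fun x : ℝ => x) := by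
  have hπ := Real.pi_pos
  set c : ℝ := ∏ k ∈ Finset.range (ℓ + 1), (2 * (k : ℝ) + 1) with hc_def
  have hc : 0 < c := Finset.prod_pos fun k _ => by positivity
  set r : ℝ → ℝ := fun x => φ x / (x ^ (ℓ + 1) / c) with hr_def
  have hr1 : Tendsto r (nhdsWithin 0 (Set.Ioi 0)) (nhds 1) := hasymp
  set W : ℝ → ℝ := fun t => t ^ (ℓ + 1) * deriv φ t - ((ℓ : ℝ) + 1) * (t ^ ℓ * φ t) with hW_def
  set f : ℝ → ℝ := fun t => t ^ (ℓ + 1) * Q t * φ t with hf_def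
  have hIooIcc : Set.Ioo (0:ℝ) Real.pi ⊆ Set.Icc 0 Real.pi := Set.Ioo_subset_Icc_self
  have hφcont : ContinuousOn φ (Set.Ioo 0 Real.pi) := fun x hx =>
    ((hφ1 x hx).continuousAt).continuousWithinAt
  have hQcont : ContinuousOn Q (Set.Icc 0 Real.pi) := hQ.continuousOn
  have hfcont : ContinuousOn f (Set.Ioo 0 Real.pi) :=
    (((continuous_pow _).continuousOn).mul (hQcont.mono hIooIcc)).mul hφcont
  have hWd : ∀ x ∈ Set.Ioo 0 Real.pi, HasDerivAt W (f x) x := fun x hx =>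
    W_hasDerivAt ℓ Q φ hx hφ1 hφ2
  have hWcont : ContinuousOn W (Set.Ioo 0 Real.pi) := fun x hx =>
    ((hWd x hx).continuousAt).continuousWithinAt
  -- FTC for W
  have hFTC : ∀ x b : ℝ, 0 < x → x ≤ b → b < Real.pi →
      W b - W x = ∫ t in x..b, f t := by
    intro x b hx hxb hb
    have hsub : Set.uIcc x b ⊆ Set.Ioo 0 Real.pi := by
      rw [Set.uIcc_of_le hxb]
      exact fun t ht => ⟨lt_of_lt_of_le hx ht.1, lt_of_le_of_lt ht.2 hb⟩
    exact (intervalIntegral.integral_eq_sub_of_hasDerivAt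
      (fun t ht => hWd t (hsub ht)) ((hfcont.mono hsub).intervalIntegrable)).symm
  -- choose b0
  have hev : ∀ᶠ t in nhdsWithin 0 (Set.Ioi 0), 1/2 < r t ∧ r t < 2 :=
    (hr1.eventually (eventually_gt_nhds (by norm_num : (1:ℝ)/2 < 1))).and
      (hr1.eventually (eventually_lt_nhds (by norm_num : (1:ℝ) < 2)))
  obtain ⟨b1, hb1, hb1sub⟩ := mem_nhdsGT_iff_exists_Ioc_subset.mp hev
  set b0 : ℝ := min b1 (Real.pi/2) with hb0_def
  have hb0pos : 0 < b0 := lt_min hb1 (by linarith)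
  have hb0π : b0 < Real.pi := lt_of_le_of_lt (min_le_right _ _) (by linarith)
  have hb0r : ∀ t ∈ Set.Ioc 0 b0, 1/2 < r t ∧ r t < 2 := fun t ht =>
    hb1sub ⟨ht.1, le_trans ht.2 (min_le_left _ _)⟩
  have hIocIoo : ∀ {b : ℝ}, b ≤ b0 → Set.Ioc 0 b ⊆ Set.Ioo 0 Real.pi := by
    intro b hb t ht
    exact ⟨ht.1, lt_of_le_of_lt (ht.2.trans hb) hb0π⟩
  -- φ positivity and bound on Ioc 0 b0
  have hφeq : ∀ t : ℝ, 0 < t → φ t = r t * (t ^ (ℓ + 1) / c) := by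
    intro t ht
    have h0 : t ^ (ℓ + 1) / c ≠ 0 := ne_of_gt (div_pos (pow_pos ht _) hc)
    field_simp [hr_def]
    simp only [hr_def]
    field_simp
  have hφpos : ∀ t ∈ Set.Ioc 0 b0, 0 < φ t := by
    intro t ht
    rw [hφeq t ht.1]
    have h1 := (hb0r t ht).1
    have h2 : 0 < t ^ (ℓ + 1) / c := div_pos (pow_pos ht.1 _) hc
    nlinarith
  have hφub : ∀ t ∈ Set.Ioc 0 b0, |φ t| ≤ 2 * (t ^ (ℓ + 1) / c) := by
    intro t ht
    rw [abs_of_pos (hφpos t ht), hφeq t ht.1]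
    have h2 : 0 < t ^ (ℓ + 1) / c := div_pos (pow_pos ht.1 _) hc
    nlinarith [(hb0r t ht).2]
  -- Q bound
  obtain ⟨M, hM⟩ := isCompact_Icc.exists_bound_of_continuousOn hQcont
  -- f bound on Ioc 0 b0
  have hfb : ∀ t ∈ Set.Ioc 0 b0, ‖f t‖ ≤ b0 ^ (ℓ + 1) * M * (2 * (b0 ^ (ℓ + 1) / c)) := by
    intro t ht
    have ht1 : 0 < t := ht.1
    have htb : t ≤ b0 := ht.2
    have hQt : |Q t| ≤ M := hM t (hIooIcc (hIocIoo le_rfl ht))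
    have hM0 : 0 ≤ M := le_trans (abs_nonneg _) hQt
    have hpow : t ^ (ℓ + 1) ≤ b0 ^ (ℓ + 1) := pow_le_pow_left₀ ht1.le htb _
    have hφt : |φ t| ≤ 2 * (b0 ^ (ℓ + 1) / c) := by
      refine le_trans (hφub t ht) ?_
      have : t ^ (ℓ + 1) / c ≤ b0 ^ (ℓ + 1) / c := by gcongr
      linarith
    calc ‖f t‖ = t ^ (ℓ + 1) * |Q t| * |φ t| := by
          rw [hf_def, Real.norm_eq_abs, abs_mul, abs_mul, abs_pow, abs_of_pos ht1]
      _ ≤ b0 ^ (ℓ + 1) * M * (2 * (b0 ^ (ℓ + 1) / c)) := by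
          apply mul_le_mul (mul_le_mul hpow hQt (abs_nonneg _) (by positivity))
            hφt (abs_nonneg _) (by positivity)
  -- integrability of f near 0
  have hfint : IntegrableOn f (Set.Ioc 0 b0) := by
    constructor
    · exact ((hfcont.mono (hIocIoo le_rfl)).aestronglyMeasurable measurableSet_Ioc)
    · apply HasFiniteIntegral.restrict_of_bounded (C := b0 ^ (ℓ + 1) * M * (2 * (b0 ^ (ℓ + 1) / c)))
        measure_Ioc_lt_top
      filter_upwards [ae_restrict_mem measurableSet_Ioc] with t ht using hfb t ht
  have hfint01 : ∀ {x : ℝ}, 0 < x → x ≤ b0 → IntervalIntegrable f volume 0 x := by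
    intro x hx hxb
    rw [intervalIntegrable_iff_integrableOn_Ioc_of_le hx.le]
    exact hfint.mono_set (Set.Ioc_subset_Ioc_right hxb)
  -- W has a limit W0 at 0+
  have hPrim : Tendsto (fun x => ∫ t in x..b0, f t) (nhdsWithin 0 (Set.Ioi 0))
      (nhds (∫ t in (0:ℝ)..b0, f t)) := by
    have hint' : IntegrableOn f (Set.uIcc 0 b0) := by
      rw [Set.uIcc_of_le hb0pos.le, integrableOn_Icc_iff_integrableOn_Ioc]
      exact hfint
    have hcontP := intervalIntegral.continuousOn_primitive_interval_left hint'
    have h0mem : (0:ℝ) ∈ Set.uIcc 0 b0 := Set.left_mem_uIcc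
    have := (hcontP 0 h0mem).tendsto
    refine this.mono_left ?_
    rw [← nhdsWithin_Ioc_eq_nhdsGT hb0pos]
    exact nhdsWithin_mono _ (by rw [Set.uIcc_of_le hb0pos.le]; exact Set.Ioc_subset_Icc_self)
  set W0 : ℝ := W b0 - ∫ t in (0:ℝ)..b0, f t with hW0_def
  have hWlim : Tendsto W (nhdsWithin 0 (Set.Ioi 0)) (nhds W0) := by
    have hevW : ∀ᶠ x in nhdsWithin 0 (Set.Ioi 0), W x = W b0 - ∫ t in x..b0, f t := by
      filter_upwards [Ioc_mem_nhdsGT hb0pos] with x hx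
      have := hFTC x b0 hx.1 hx.2 hb0π
      linarith
    rw [tendsto_congr' hevW]
    exact tendsto_const_nhds.sub hPrim
  -- v and its limit
  set v : ℝ → ℝ := fun t => φ t / t ^ (ℓ + 1) with hv_def
  have hvlim : Tendsto v (nhdsWithin 0 (Set.Ioi 0)) (nhds (1/c)) := by
    have hev' : ∀ᶠ t in nhdsWithin 0 (Set.Ioi 0), r t / c = v t := by
      filter_upwards [self_mem_nhdsWithin] with t ht
      have ht : (0:ℝ) < t := ht
      have hp : t ^ (ℓ + 1) ≠ 0 := ne_of_gt (pow_pos ht _)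
      rw [hv_def]
      simp only [hr_def]
      field_simp
    exact Tendsto.congr' hev' (hr1.div_const c)
  have hvd : ∀ x ∈ Set.Ioo 0 Real.pi, HasDerivAt v (W x / x ^ (2 * ℓ + 2)) x := by
    intro x hx
    exact v_hasDerivAt ℓ φ hx.1 (hφ1 x hx)
  have hvFTC : ∀ x b : ℝ, 0 < x → x ≤ b → b < Real.pi →
      v b - v x = ∫ t in x..b, W t / t ^ (2 * ℓ + 2) := by
    intro x b hx hxb hb
    have hsub : Set.uIcc x b ⊆ Set.Ioo 0 Real.pi := by
      rw [Set.uIcc_of_le hxb]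
      exact fun t ht => ⟨lt_of_lt_of_le hx ht.1, lt_of_le_of_lt ht.2 hb⟩
    have hcont : ContinuousOn (fun t => W t / t ^ (2 * ℓ + 2)) (Set.uIcc x b) := by
      apply (hWcont.mono hsub).div ((continuous_pow _).continuousOn)
      intro t ht
      exact ne_of_gt (pow_pos (hsub ht).1 _)
    exact (intervalIntegral.integral_eq_sub_of_hasDerivAt
      (fun t ht => hvd t (hsub ht)) (hcont.intervalIntegrable)).symm
  -- W0 = 0
  have hW00 : W0 = 0 := by
    by_contra hne
    have habs : 0 < |W0| := abs_pos.mpr hne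
    have hevW2 : ∀ᶠ t in nhdsWithin 0 (Set.Ioi 0), |W t - W0| ≤ |W0| / 2 := by
      have := hWlim.eventually (Metric.closedBall_mem_nhds (ε := |W0| / 2) W0 (by positivity))
      filter_upwards [this] with t ht
      simpa [Metric.mem_closedBall, Real.dist_eq] using ht
    obtain ⟨b2', hb2', hsub2⟩ := mem_nhdsGT_iff_exists_Ioc_subset.mp hevW2
    set b2 : ℝ := min b2' b0 with hb2_def
    have hb2pos : 0 < b2 := lt_min hb2' hb0pos
    have hb2b0 : b2 ≤ b0 := min_le_right _ _
    have hb2π : b2 < Real.pi := lt_of_le_of_lt hb2b0 hb0π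
    have hb2W : ∀ t ∈ Set.Ioc 0 b2, |W t - W0| ≤ |W0| / 2 := fun t ht =>
      hsub2 ⟨ht.1, le_trans ht.2 (min_le_left _ _)⟩
    -- the divergent comparison integral
    set I : ℝ → ℝ := fun x => ∫ t in x..b2, 1 / t ^ (2 * ℓ + 2) with hI_def
    have hzpow : (fun t : ℝ => 1 / t ^ (2 * ℓ + 2)) = fun t : ℝ => t ^ (-(2 * ℓ + 2 : ℕ) : ℤ) := by
      funext t
      rw [zpow_neg, zpow_natCast, one_div]
    have hIval : ∀ x : ℝ, 0 < x → x ≤ b2 →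
        I x = ((x ^ (2 * ℓ + 1))⁻¹ - (b2 ^ (2 * ℓ + 1))⁻¹) / (2 * ℓ + 1) := by
      intro x hx hxb
      have h0 : (0:ℝ) ∉ Set.uIcc x b2 := by
        rw [Set.uIcc_of_le hxb]
        intro h
        exact absurd h.1 (not_le.mpr hx)
      have hn : (-(2 * ℓ + 2 : ℕ) : ℤ) ≠ -1 := by omega
      rw [hI_def]
      simp only [hzpow]
      rw [integral_zpow (Or.inr ⟨hn, h0⟩)]
      have he : (-(2 * ℓ + 2 : ℕ) : ℤ) + 1 = -(2 * ℓ + 1 : ℕ) := by push_cast; ring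
      rw [he, zpow_neg, zpow_neg, zpow_natCast, zpow_natCast]
      have h1 : (0:ℝ) < 2 * (ℓ:ℝ) + 1 := by positivity
      rw [div_eq_div_iff (by push_cast; intro h; linarith) (by linarith)]
      push_cast
      ring
    have hInn : ∀ x : ℝ, 0 < x → x ≤ b2 → 0 ≤ I x := by
      intro x hx hxb
      rw [hIval x hx hxb]
      have h1 : (b2 ^ (2 * ℓ + 1))⁻¹ ≤ (x ^ (2 * ℓ + 1))⁻¹ := by
        apply inv_anti₀ (pow_pos hx _) (pow_le_pow_left₀ hx.le hxb _)
      have : (0:ℝ) < 2 * ℓ + 1 := by positivity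
      apply div_nonneg (by linarith) (by linarith)
    -- main lower bound
    have hkey : ∀ x ∈ Set.Ioc 0 b2, |W0| / 2 * I x ≤ |v b2 - v x| := by
      intro x hx
      have hsub : Set.uIcc x b2 ⊆ Set.Ioo 0 Real.pi := by
        rw [Set.uIcc_of_le hx.2]
        exact fun t ht => ⟨lt_of_lt_of_le hx.1 ht.1, lt_of_le_of_lt ht.2 hb2π⟩
      have hpowcont : ContinuousOn (fun t : ℝ => 1 / t ^ (2 * ℓ + 2)) (Set.uIcc x b2) := by
        apply continuousOn_const.div ((continuous_pow _).continuousOn)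
        intro t ht
        exact ne_of_gt (pow_pos (hsub ht).1 _)
      have hIint : IntervalIntegrable (fun t : ℝ => 1 / t ^ (2 * ℓ + 2)) volume x b2 :=
        hpowcont.intervalIntegrable
      have hWtcont : ContinuousOn (fun t => W t / t ^ (2 * ℓ + 2)) (Set.uIcc x b2) := by
        apply (hWcont.mono hsub).div ((continuous_pow _).continuousOn)
        intro t ht
        exact ne_of_gt (pow_pos (hsub ht).1 _)
      have hAint : IntervalIntegrable (fun t => W t / t ^ (2 * ℓ + 2)) volume x b2 :=
        hWtcont.intervalIntegrable
      have hBint : IntervalIntegrable (fun t : ℝ => W0 * (1 / t ^ (2 * ℓ + 2))) volume x b2 :=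
        hIint.const_mul W0
      have hB : (∫ t in x..b2, W0 * (1 / t ^ (2 * ℓ + 2))) = W0 * I x :=
        intervalIntegral.integral_const_mul _ _
      have hdiff : ‖(∫ t in x..b2, W t / t ^ (2 * ℓ + 2)) - W0 * I x‖ ≤ |W0| / 2 * I x := by
        rw [← hB, ← intervalIntegral.integral_sub hAint hBint]
        have hbd : IntervalIntegrable (fun t : ℝ => |W0| / 2 * (1 / t ^ (2 * ℓ + 2))) volume x b2 :=
          hIint.const_mul _
        have := intervalIntegral.norm_integral_le_of_norm_le (a := x) (b := b2)
          (μ := volume) (f := fun t => W t / t ^ (2 * ℓ + 2) - W0 * (1 / t ^ (2 * ℓ + 2)))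
          (g := fun t : ℝ => |W0| / 2 * (1 / t ^ (2 * ℓ + 2))) hx.2 ?_ hbd
        · refine le_trans this ?_
          rw [intervalIntegral.integral_const_mul]
        · filter_upwards with t ht
          have ht0 : 0 < t := lt_trans hx.1 ht.1
          have htb2 : t ≤ b2 := ht.2
          have hp : (0:ℝ) < t ^ (2 * ℓ + 2) := pow_pos ht0 _
          have : W t / t ^ (2 * ℓ + 2) - W0 * (1 / t ^ (2 * ℓ + 2))
              = (W t - W0) * (1 / t ^ (2 * ℓ + 2)) := by field_simp
          rw [this, Real.norm_eq_abs, abs_mul, abs_of_pos (by positivity : (0:ℝ) < 1 / t ^ (2 * ℓ + 2))]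
          have := hb2W t ⟨ht0, htb2⟩
          have h1 : 0 < 1 / t ^ (2 * ℓ + 2) := by positivity
          nlinarith
      have hAeq : v b2 - v x = ∫ t in x..b2, W t / t ^ (2 * ℓ + 2) :=
        hvFTC x b2 hx.1 hx.2 hb2π
      rw [hAeq]
      have h1 : |W0 * I x| - ‖(∫ t in x..b2, W t / t ^ (2 * ℓ + 2)) - W0 * I x‖
          ≤ |∫ t in x..b2, W t / t ^ (2 * ℓ + 2)| := by
        have := abs_sub_abs_le_abs_sub (W0 * I x) (W0 * I x - ∫ t in x..b2, W t / t ^ (2 * ℓ + 2))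
        simp only [sub_sub_cancel] at this
        rw [Real.norm_eq_abs, abs_sub_comm]
        linarith
      rw [abs_mul] at h1
      have hInn' := hInn x hx.1 hx.2
      rw [abs_of_nonneg hInn'] at h1
      nlinarith [hdiff]
    -- contradiction: LHS tends to atTop, RHS tends to a finite limit
    have hItop : Tendsto (fun x => |W0| / 2 * I x) (nhdsWithin 0 (Set.Ioi 0)) atTop := by
      have hp : Tendsto (fun x : ℝ => x ^ (2 * ℓ + 1)) (nhdsWithin 0 (Set.Ioi 0))
          (nhdsWithin 0 (Set.Ioi 0)) := by
        apply tendsto_nhdsWithin_of_tendsto_nhds_of_eventually_within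
        · exact (((continuous_pow (2 * ℓ + 1)).tendsto' 0 0 (by simp)).mono_left nhdsWithin_le_nhds)
        · filter_upwards [self_mem_nhdsWithin] with x hx
          exact pow_pos (Set.mem_Ioi.mp hx) _
      have hinv : Tendsto (fun x : ℝ => (x ^ (2 * ℓ + 1))⁻¹) (nhdsWithin 0 (Set.Ioi 0)) atTop :=
        tendsto_inv_nhdsGT_zero.comp hp
      have h2 : Tendsto (fun x : ℝ => |W0| / 2 * (((x ^ (2 * ℓ + 1))⁻¹ - (b2 ^ (2 * ℓ + 1))⁻¹) / (2 * ℓ + 1)))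
          (nhdsWithin 0 (Set.Ioi 0)) atTop := by
        apply Tendsto.const_mul_atTop (by positivity : (0:ℝ) < |W0| / 2)
        apply Tendsto.atTop_div_const (by positivity : (0:ℝ) < 2 * (ℓ:ℝ) + 1)
        exact tendsto_atTop_add_const_right _ _ hinv
      refine h2.congr' ?_
      filter_upwards [Ioc_mem_nhdsGT hb2pos] with x hx
      rw [hIval x hx.1 hx.2]
    have hfin : Tendsto (fun x => |v b2 - v x|) (nhdsWithin 0 (Set.Ioi 0)) (nhds |v b2 - 1/c|) :=
      ((tendsto_const_nhds.sub hvlim).abs)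
    have : Tendsto (fun x => |v b2 - v x|) (nhdsWithin 0 (Set.Ioi 0)) atTop := by
      apply tendsto_atTop_mono' _ _ hItop
      filter_upwards [Ioc_mem_nhdsGT hb2pos] with x hx
      exact hkey x hx
    exact not_tendsto_atTop_of_tendsto_nhds hfin this
  -- W as integral from 0
  have hWint : ∀ x ∈ Set.Ioc 0 b0, W x = ∫ t in (0:ℝ)..x, f t := by
    intro x hx
    have h1 := hFTC x b0 hx.1 hx.2 hb0π
    have hsub : Set.uIcc x b0 ⊆ Set.Ioo 0 Real.pi := by
      rw [Set.uIcc_of_le hx.2]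
      exact fun t ht => ⟨lt_of_lt_of_le hx.1 ht.1, lt_of_le_of_lt ht.2 hb0π⟩
    have h2 : (∫ t in (0:ℝ)..x, f t) + ∫ t in x..b0, f t = ∫ t in (0:ℝ)..b0, f t :=
      intervalIntegral.integral_add_adjacent_intervals (hfint01 hx.1 hx.2)
        ((hfcont.mono hsub).intervalIntegrable)
    have h3 : W0 = 0 := hW00
    rw [hW0_def] at h3
    linarith
  -- limit of Q t * r t
  have hQlim : Tendsto Q (nhdsWithin 0 (Set.Ioi 0)) (nhds (Q 0)) := by
    have h0 : (0:ℝ) ∈ Set.Icc 0 Real.pi := ⟨le_refl _, hπ.le⟩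
    refine ((hQcont 0 h0).tendsto).mono_left ?_
    rw [← nhdsWithin_Ioc_eq_nhdsGT hπ]
    exact nhdsWithin_mono _ Set.Ioc_subset_Icc_self
  have hQr : Tendsto (fun t => Q t * r t) (nhdsWithin 0 (Set.Ioi 0)) (nhds (Q 0)) := by
    have := hQlim.mul hr1
    simpa using this
  -- error function and its estimate
  set E : ℝ → ℝ := fun x => W x - Q 0 / c * (x ^ (2 * ℓ + 3) / (2 * ℓ + 3)) with hE_def
  have hEbound : ∀ ε : ℝ, 0 < ε → ∀ᶠ x in nhdsWithin 0 (Set.Ioi 0),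
      |E x| ≤ ε / c * (x ^ (2 * ℓ + 3) / (2 * ℓ + 3)) := by
    intro ε hε
    have hev2 : ∀ᶠ t in nhdsWithin 0 (Set.Ioi 0), |Q t * r t - Q 0| ≤ ε := by
      have := hQr.eventually (Metric.closedBall_mem_nhds (ε := ε) (Q 0) hε)
      filter_upwards [this] with t ht
      simpa [Metric.mem_closedBall, Real.dist_eq] using ht
    obtain ⟨δ', hδ', hδsub⟩ := mem_nhdsGT_iff_exists_Ioc_subset.mp hev2
    set δ : ℝ := min δ' b0 with hδ_def
    have hδpos : 0 < δ := lt_min hδ' hb0pos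
    have hδb0 : δ ≤ b0 := min_le_right _ _
    filter_upwards [Ioc_mem_nhdsGT hδpos] with x hx
    have hxb0 : x ∈ Set.Ioc 0 b0 := ⟨hx.1, le_trans hx.2 hδb0⟩
    have hgbound : ∀ t ∈ Set.Ioc 0 x, |f t - Q 0 / c * t ^ (2 * ℓ + 2)| ≤ ε / c * t ^ (2 * ℓ + 2) := by
      intro t ht
      have ht0 : 0 < t := ht.1
      have htδ : t ≤ δ := le_trans ht.2 hx.2
      have hQrt : |Q t * r t - Q 0| ≤ ε := hδsub ⟨ht0, le_trans htδ (min_le_left _ _)⟩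
      have hft : f t = t ^ (2 * ℓ + 2) * (Q t * r t) / c := by
        rw [hf_def]
        simp only
        rw [hφeq t ht0]
        field_simp
        ring
      rw [hft]
      have hp : (0:ℝ) < t ^ (2 * ℓ + 2) := pow_pos ht0 _
      have heq : t ^ (2 * ℓ + 2) * (Q t * r t) / c - Q 0 / c * t ^ (2 * ℓ + 2)
          = t ^ (2 * ℓ + 2) / c * (Q t * r t - Q 0) := by field_simp
      rw [heq, abs_mul, abs_of_pos (by positivity : (0:ℝ) < t ^ (2 * ℓ + 2) / c)]
      have h3 : t ^ (2 * ℓ + 2) / c * ε = ε / c * t ^ (2 * ℓ + 2) := by ring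
      have h4 := mul_le_mul_of_nonneg_left hQrt (le_of_lt (div_pos hp hc))
      linarith
    have hWx := hWint x hxb0
    have hpint : IntervalIntegrable (fun t : ℝ => Q 0 / c * t ^ (2 * ℓ + 2)) volume 0 x :=
      (intervalIntegral.intervalIntegrable_pow _).const_mul _
    have hfix := hfint01 hx.1 (le_trans hx.2 hδb0)
    have hdint : (∫ t in (0:ℝ)..x, (f t - Q 0 / c * t ^ (2 * ℓ + 2)))
        = W x - Q 0 / c * (x ^ (2 * ℓ + 3) / (2 * ℓ + 3)) := by
      rw [intervalIntegral.integral_sub hfix hpint, ← hWx,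
        intervalIntegral.integral_const_mul, integral_pow]
      have hex : 2 * ℓ + 2 + 1 = 2 * ℓ + 3 := by ring
      rw [hex]
      push_cast
      ring
    have hbint : IntervalIntegrable (fun t : ℝ => ε / c * t ^ (2 * ℓ + 2)) volume 0 x :=
      (intervalIntegral.intervalIntegrable_pow _).const_mul _
    have hnorm := intervalIntegral.norm_integral_le_of_norm_le (μ := volume) (a := 0) (b := x)
      (f := fun t => f t - Q 0 / c * t ^ (2 * ℓ + 2)) (g := fun t => ε / c * t ^ (2 * ℓ + 2)) hx.1.le ?_ hbint
    · rw [hdint] at hnorm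
      rw [hE_def]
      simp only
      refine le_trans hnorm ?_
      rw [intervalIntegral.integral_const_mul, integral_pow]
      have hex : 2 * ℓ + 2 + 1 = 2 * ℓ + 3 := by ring
      rw [hex]
      have hx0 : (0:ℝ) < x := hx.1
      have h0p : (0:ℝ) ^ (2 * ℓ + 3) = 0 := by
        exact zero_pow (by omega)
      rw [h0p, sub_zero]
      push_cast
      exact le_of_eq (by ring)
    · filter_upwards with t ht
      simpa [Real.norm_eq_abs] using hgbound t ht
  -- E x / x^(2ℓ+3) → 0
  have hEl : Tendsto (fun x => E x / x ^ (2 * ℓ + 3)) (nhdsWithin 0 (Set.Ioi 0)) (nhds 0) := by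
    rw [Metric.tendsto_nhds]
    intro ε hε
    have hε2 : (0:ℝ) < ε * c * (2 * ℓ + 3) / 2 := by positivity
    filter_upwards [hEbound _ hε2, self_mem_nhdsWithin] with x hx hx0
    have hx0 : (0:ℝ) < x := hx0
    rw [Real.dist_eq, sub_zero, abs_div, abs_of_pos (pow_pos hx0 _), div_lt_iff₀ (pow_pos hx0 _)]
    have hpp : (0:ℝ) < x ^ (2 * ℓ + 3) := pow_pos hx0 _
    have h5 : ε * c * (2 * (ℓ:ℝ) + 3) / 2 / c * (x ^ (2 * ℓ + 3) / (2 * (ℓ:ℝ) + 3))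
        = ε / 2 * x ^ (2 * ℓ + 3) := by
      have hcne : c ≠ 0 := ne_of_gt hc
      have h3 : (2 * (ℓ:ℝ) + 3) ≠ 0 := by positivity
      field_simp
    calc |E x| ≤ ε * c * (2 * (ℓ:ℝ) + 3) / 2 / c * (x ^ (2 * ℓ + 3) / (2 * (ℓ:ℝ) + 3)) := hx
      _ = ε / 2 * x ^ (2 * ℓ + 3) := h5
      _ < ε * x ^ (2 * ℓ + 3) := by nlinarith
  -- final assembly
  rw [Asymptotics.isLittleO_iff_tendsto']
  swap
  · filter_upwards [self_mem_nhdsWithin] with x hx h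
    exact absurd h (ne_of_gt hx)
  have heq : (fun x : ℝ => c * (E x / x ^ (2 * ℓ + 3)) / r x
        + Q 0 / (2 * (ℓ:ℝ) + 3) * (1 / r x - 1))
      =ᶠ[nhdsWithin 0 (Set.Ioi 0)]
      (fun x : ℝ => (deriv φ x / φ x - ((ℓ:ℝ) + 1) / x - x * Q 0 / (2 * (ℓ:ℝ) + 3)) / x) := by
    filter_upwards [Ioc_mem_nhdsGT hb0pos] with x hx
    have hx0 : (0:ℝ) < x := hx.1
    have hrx : 1/2 < r x := (hb0r x hx).1
    have hrne : r x ≠ 0 := by linarith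
    have hφx : φ x = r x * (x ^ (ℓ + 1) / c) := hφeq x hx0
    have hφne : φ x ≠ 0 := ne_of_gt (hφpos x hx)
    have hxne : x ≠ 0 := ne_of_gt hx0
    have hcne : c ≠ 0 := ne_of_gt hc
    have h3 : (2 * (ℓ:ℝ) + 3) ≠ 0 := by positivity
    have hd : deriv φ x = (W x + ((ℓ:ℝ) + 1) * (x ^ ℓ * φ x)) / x ^ (ℓ + 1) := by
      rw [hW_def]
      field_simp
      ring
    have hWx : W x = E x + Q 0 / c * (x ^ (2 * ℓ + 3) / (2 * (ℓ:ℝ) + 3)) := by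
      rw [hE_def]; ring
    rw [hd, hWx]
    rw [hφx]
    field_simp
    ring
  have h1 : Tendsto (fun x : ℝ => c * (E x / x ^ (2 * ℓ + 3)) / r x)
      (nhdsWithin 0 (Set.Ioi 0)) (nhds (c * 0 / 1)) :=
    (tendsto_const_nhds.mul hEl).div hr1 one_ne_zero
  have h2 : Tendsto (fun x : ℝ => Q 0 / (2 * (ℓ:ℝ) + 3) * (1 / r x - 1))
      (nhdsWithin 0 (Set.Ioi 0)) (nhds (Q 0 / (2 * (ℓ:ℝ) + 3) * (1 / 1 - 1))) :=
    tendsto_const_nhds.mul ((tendsto_const_nhds.div hr1 one_ne_zero).sub tendsto_const_nhds)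
  have hfin := (h1.add h2).congr' heq
  simpa using hfin
end
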